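/- arXiv:1805.02886 — 7 statements merged into one kernel-verified Lean document; each statement's English description precedes it below -/
import Mathlib

section
/- For all integers m ≥ 2 and t ≥ 1, the coconut tree CT(m,t) satisfies χ_la(CT(m,t)) = t + 2. -/
open scoped BigOperators

/-- The induced vertex sum: sum of labels of edges incident to `v`. -/
noncomputable def vertexSum {V : Type*} (G : SimpleGraph V) (f : Sym2 V → ℕ) (v : V) : ℕ :=
  ∑ᶠ e ∈ G.incidenceSet v, f e

/-- `f` is a local antimagic labeling of `G`: a bijection from the edge set onto
`{1, …, |E(G)|}` such that adjacent vertices get distinct induced sums. -/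
def IsLocalAntimagic {V : Type*} (G : SimpleGraph V) (f : Sym2 V → ℕ) : Prop :=
  Set.BijOn f G.edgeSet (Set.Icc 1 G.edgeSet.ncard) ∧
  ∀ u v, G.Adj u v → vertexSum G f u ≠ vertexSum G f v

/-- Number of distinct induced vertex labels of the labeling `f`. -/
noncomputable def colorCount {V : Type*} (G : SimpleGraph V) (f : Sym2 V → ℕ) : ℕ :=
  (Set.range (vertexSum G f)).ncard

/-- The local antimagic chromatic number. -/
noncomputable def chiLA {V : Type*} (G : SimpleGraph V) : ℕ :=
  sInf { n | ∃ f, IsLocalAntimagic G f ∧ colorCount G f = n }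

/-- The join `G ∨ Oₙ` of `G` with the empty graph on `n` vertices. -/
def joinEmpty {V : Type*} (G : SimpleGraph V) (n : ℕ) : SimpleGraph (V ⊕ Fin n) :=
  SimpleGraph.fromRel (fun x y =>
    (∃ a b, x = Sum.inl a ∧ y = Sum.inl b ∧ G.Adj a b) ∨ (x.isLeft ∧ y.isRight))

/-- The coconut tree `CT(m,t)`: a path `v₀ … v_{m-1}` with `t` extra leaves attached
to the end-vertex `v_{m-1}`. -/
def coconutTree (m t : ℕ) : SimpleGraph (Fin m ⊕ Fin t) :=
  SimpleGraph.fromRel (fun x y =>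
    (∃ a b : Fin m, x = Sum.inl a ∧ y = Sum.inl b ∧ (b : ℕ) = (a : ℕ) + 1) ∨
    (∃ (a : Fin m) (j : Fin t), x = Sum.inl a ∧ y = Sum.inr j ∧ (a : ℕ) = m - 1))

section CoconutTreeAux

open Finset Sum

abbrev CV (M T : ℕ) := Fin (M+2) ⊕ Fin (T+1)

variable {M T : ℕ}

def pedge (M T : ℕ) (i : Fin (M+1)) : Sym2 (CV M T) := s(inl i.castSucc, inl i.succ)
def ledge (M T : ℕ) (j : Fin (T+1)) : Sym2 (CV M T) := s(inl (Fin.last (M+1)), inr j)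

lemma adj_iff (x y : CV M T) :
    (coconutTree (M+2) (T+1)).Adj x y ↔
    (∃ i : Fin (M+1), (x = inl i.castSucc ∧ y = inl i.succ) ∨ (x = inl i.succ ∧ y = inl i.castSucc)) ∨
    (∃ j : Fin (T+1), (x = inl (Fin.last (M+1)) ∧ y = inr j) ∨ (x = inr j ∧ y = inl (Fin.last (M+1)))) := by
  simp only [coconutTree, SimpleGraph.fromRel_adj]
  constructor
  · rintro ⟨hne, h | h⟩
    · rcases h with ⟨a, b, rfl, rfl, hab⟩ | ⟨a, j, rfl, rfl, ha⟩
      · left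
        have hb : (b:ℕ) < M+2 := b.isLt
        refine ⟨⟨a, by omega⟩, Or.inl ⟨?_, ?_⟩⟩ <;> simp [Fin.ext_iff, hab]
      · right
        exact ⟨j, Or.inl ⟨by simp [Fin.ext_iff]; omega, rfl⟩⟩
    · rcases h with ⟨a, b, rfl, rfl, hab⟩ | ⟨a, j, rfl, rfl, ha⟩
      · left
        refine ⟨⟨a, by omega⟩, Or.inr ⟨?_, ?_⟩⟩ <;> simp [Fin.ext_iff, hab]
      · right
        exact ⟨j, Or.inr ⟨rfl, by simp [Fin.ext_iff]; omega⟩⟩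
  · rintro (⟨i, ⟨rfl, rfl⟩ | ⟨rfl, rfl⟩⟩ | ⟨j, ⟨rfl, rfl⟩ | ⟨rfl, rfl⟩⟩)
    · exact ⟨by simp [Fin.ext_iff], Or.inl (Or.inl ⟨_, _, rfl, rfl, by simp⟩)⟩
    · exact ⟨by simp [Fin.ext_iff], Or.inr (Or.inl ⟨_, _, rfl, rfl, by simp⟩)⟩
    · exact ⟨by simp, Or.inl (Or.inr ⟨_, _, rfl, rfl, by simp⟩)⟩
    · exact ⟨by simp, Or.inr (Or.inr ⟨_, _, rfl, rfl, by simp⟩)⟩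

def CE (M T : ℕ) : Finset (Sym2 (CV M T)) :=
  (univ.image (pedge M T)) ∪ (univ.image (ledge M T))

lemma pedge_inj : Function.Injective (pedge M T) := by
  intro a b h
  simp only [pedge, Sym2.eq_iff, inl.injEq] at h
  rcases h with ⟨h1, _⟩ | ⟨h1, h2⟩
  · exact Fin.castSucc_injective _ h1
  · have := congrArg Fin.val h1; have := congrArg Fin.val h2
    simp [Fin.ext_iff] at *; omega

lemma ledge_inj : Function.Injective (ledge M T) := by
  intro a b h
  simp only [ledge, Sym2.eq_iff, inl.injEq] at h
  rcases h with ⟨_, h2⟩ | ⟨h1, _⟩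
  · exact inr_injective h2
  · exact absurd h1 (by simp)

lemma pedge_ne_ledge (i : Fin (M+1)) (j : Fin (T+1)) : pedge M T i ≠ ledge M T j := by
  intro h
  rw [pedge, ledge, Sym2.eq_iff] at h
  rcases h with ⟨-, h⟩ | ⟨h, -⟩ <;> exact absurd h (by simp)

lemma edgeSet_eq : (coconutTree (M+2) (T+1)).edgeSet = ↑(CE M T) := by
  ext e
  induction e using Sym2.inductionOn with
  | hf x y =>
    rw [SimpleGraph.mem_edgeSet, adj_iff]
    simp only [CE, coe_union, Set.mem_union, coe_image, Set.mem_image, mem_coe, mem_univ,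
      Set.mem_setOf_eq, coe_univ, Set.image_univ, Set.mem_range]
    constructor
    · rintro (⟨i, ⟨rfl, rfl⟩ | ⟨rfl, rfl⟩⟩ | ⟨j, ⟨rfl, rfl⟩ | ⟨rfl, rfl⟩⟩)
      · exact Or.inl ⟨i, rfl⟩
      · exact Or.inl ⟨i, Sym2.eq_swap⟩
      · exact Or.inr ⟨j, rfl⟩
      · exact Or.inr ⟨j, Sym2.eq_swap⟩
    · rintro (⟨i, hi⟩ | ⟨j, hj⟩)
      · rw [pedge, Sym2.eq_iff] at hi
        rcases hi with ⟨rfl, rfl⟩ | ⟨rfl, rfl⟩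
        · exact Or.inl ⟨i, Or.inl ⟨rfl, rfl⟩⟩
        · exact Or.inl ⟨i, Or.inr ⟨rfl, rfl⟩⟩
      · rw [ledge, Sym2.eq_iff] at hj
        rcases hj with ⟨rfl, rfl⟩ | ⟨rfl, rfl⟩
        · exact Or.inr ⟨j, Or.inl ⟨rfl, rfl⟩⟩
        · exact Or.inr ⟨j, Or.inr ⟨rfl, rfl⟩⟩

lemma CE_card : (CE M T).card = M + T + 2 := by
  have hd : Disjoint (univ.image (pedge M T)) (univ.image (ledge M T)) := by
    simp only [disjoint_left, mem_image, mem_univ, true_and]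
    rintro e ⟨i, rfl⟩ ⟨j, hj⟩
    exact pedge_ne_ledge i j hj.symm
  rw [CE, card_union_of_disjoint hd, card_image_of_injective _ pedge_inj,
    card_image_of_injective _ ledge_inj, card_univ, card_univ, Fintype.card_fin,
    Fintype.card_fin]
  omega

lemma ncard_edgeSet : (coconutTree (M+2) (T+1)).edgeSet.ncard = M + T + 2 := by
  rw [edgeSet_eq, Set.ncard_coe_finset, CE_card]

-- incidence sets
lemma incidence_eq (v : CV M T) :
    (coconutTree (M+2) (T+1)).incidenceSet v = ↑((CE M T).filter (fun e => v ∈ e)) := by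
  ext e
  simp only [SimpleGraph.incidenceSet, Set.mem_sep_iff, coe_filter, Set.mem_setOf_eq, mem_coe]
  rw [edgeSet_eq]
  simp

lemma vertexSum_eq (f : Sym2 (CV M T) → ℕ) (v : CV M T) :
    vertexSum (coconutTree (M+2) (T+1)) f v = ∑ e ∈ (CE M T).filter (fun e => v ∈ e), f e := by
  rw [vertexSum, incidence_eq, finsum_mem_coe_finset]



lemma mem_CE {e : Sym2 (CV M T)} : e ∈ CE M T ↔ (∃ i, e = pedge M T i) ∨ (∃ j, e = ledge M T j) := by
  simp only [CE, mem_union, mem_image, mem_univ, true_and]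
  constructor
  · rintro (⟨i, rfl⟩ | ⟨j, rfl⟩)
    · exact Or.inl ⟨i, rfl⟩
    · exact Or.inr ⟨j, rfl⟩
  · rintro (⟨i, rfl⟩ | ⟨j, rfl⟩)
    · exact Or.inl ⟨i, rfl⟩
    · exact Or.inr ⟨j, rfl⟩

lemma mem_pedge {v : CV M T} {i : Fin (M+1)} :
    v ∈ pedge M T i ↔ v = inl i.castSucc ∨ v = inl i.succ := Sym2.mem_iff

lemma mem_ledge {v : CV M T} {j : Fin (T+1)} :
    v ∈ ledge M T j ↔ v = inl (Fin.last (M+1)) ∨ v = inr j := Sym2.mem_iff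

lemma filter_zero :
    (CE M T).filter (fun e => inl 0 ∈ e) = {pedge M T 0} := by
  ext e
  simp only [mem_filter, mem_singleton]
  constructor
  · rintro ⟨he, hv⟩
    rcases mem_CE.1 he with ⟨i, rfl⟩ | ⟨j, rfl⟩
    · rcases mem_pedge.1 hv with h | h
      · have hi : i = 0 := by
          have := congrArg Fin.val (inl_injective h)
          simp at this
          exact Fin.ext (by have h2 : (0:ℕ) = (i:ℕ) := congrArg Fin.val (inl_injective h); simp only [Fin.val_zero]; omega)
        rw [hi]
      · exfalso
        have := congrArg Fin.val (inl_injective h)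
        simp at this
    · rcases mem_ledge.1 hv with h | h
      · exfalso
        have := congrArg Fin.val (inl_injective h)
        simp at this
      · exact absurd h (by simp)
  · rintro rfl
    exact ⟨mem_CE.2 (Or.inl ⟨0, rfl⟩), mem_pedge.2 (Or.inl (by simp))⟩

lemma filter_mid (i : Fin M) :
    (CE M T).filter (fun e => inl (i.succ.castSucc) ∈ e) =
      {pedge M T i.castSucc, pedge M T i.succ} := by
  ext e
  simp only [mem_filter, mem_insert, mem_singleton]
  constructor
  · rintro ⟨he, hv⟩
    rcases mem_CE.1 he with ⟨k, rfl⟩ | ⟨j, rfl⟩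
    · rcases mem_pedge.1 hv with h | h
      · have hk : k = i.succ := by
          have := congrArg Fin.val (inl_injective h)
          simp at this
          simp [Fin.ext_iff]; omega
        rw [hk]; right; rfl
      · have hk : k = i.castSucc := by
          have := congrArg Fin.val (inl_injective h)
          simp at this
          simp [Fin.ext_iff]; omega
        rw [hk]; left; rfl
    · rcases mem_ledge.1 hv with h | h
      · exfalso
        have := congrArg Fin.val (inl_injective h)
        have h2 : (i : ℕ) < M := i.isLt
        simp at this
        omega
      · exact absurd h (by simp)
  · rintro (rfl | rfl)
    · exact ⟨mem_CE.2 (Or.inl ⟨_, rfl⟩), mem_pedge.2 (Or.inr (by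
        simp [Fin.ext_iff]))⟩
    · exact ⟨mem_CE.2 (Or.inl ⟨_, rfl⟩), mem_pedge.2 (Or.inl (by
        simp [Fin.ext_iff]))⟩

lemma filter_center :
    (CE M T).filter (fun e => inl (Fin.last (M+1)) ∈ e) =
      insert (pedge M T (Fin.last M)) (univ.image (ledge M T)) := by
  ext e
  simp only [mem_filter, mem_insert, mem_image, mem_univ, true_and]
  constructor
  · rintro ⟨he, hv⟩
    rcases mem_CE.1 he with ⟨k, rfl⟩ | ⟨j, rfl⟩
    · rcases mem_pedge.1 hv with h | h
      · exfalso
        have := congrArg Fin.val (inl_injective h)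
        have h2 : (k : ℕ) < M + 1 := k.isLt
        simp at this
        omega
      · have hk : k = Fin.last M := by
          have := congrArg Fin.val (inl_injective h)
          simp at this
          simp [Fin.ext_iff] at this ⊢; omega
        rw [hk]; left; rfl
    · exact Or.inr ⟨j, rfl⟩
  · rintro (rfl | ⟨j, rfl⟩)
    · exact ⟨mem_CE.2 (Or.inl ⟨_, rfl⟩), mem_pedge.2 (Or.inr (by
        simp [Fin.ext_iff]))⟩
    · exact ⟨mem_CE.2 (Or.inr ⟨_, rfl⟩), mem_ledge.2 (Or.inl rfl)⟩

lemma filter_leaf (j : Fin (T+1)) :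
    (CE M T).filter (fun e => inr j ∈ e) = {ledge M T j} := by
  ext e
  simp only [mem_filter, mem_singleton]
  constructor
  · rintro ⟨he, hv⟩
    rcases mem_CE.1 he with ⟨k, rfl⟩ | ⟨j', rfl⟩
    · rcases mem_pedge.1 hv with h | h <;> exact absurd h (by simp)
    · rcases mem_ledge.1 hv with h | h
      · exact absurd h (by simp)
      · rw [inr.injEq] at h; subst h; rfl
  · rintro rfl
    exact ⟨mem_CE.2 (Or.inr ⟨j, rfl⟩), mem_ledge.2 (Or.inr rfl)⟩

-- vertex sums
lemma vs_zero (f : Sym2 (CV M T) → ℕ) :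
    vertexSum (coconutTree (M+2) (T+1)) f (inl 0) = f (pedge M T 0) := by
  rw [vertexSum_eq, filter_zero, sum_singleton]

lemma vs_mid (f : Sym2 (CV M T) → ℕ) (i : Fin M) :
    vertexSum (coconutTree (M+2) (T+1)) f (inl (i.succ.castSucc)) =
      f (pedge M T i.castSucc) + f (pedge M T i.succ) := by
  rw [vertexSum_eq, filter_mid, sum_pair]
  intro h
  have := pedge_inj h
  have := congrArg Fin.val this
  simp [Fin.ext_iff] at this

lemma vs_center (f : Sym2 (CV M T) → ℕ) :
    vertexSum (coconutTree (M+2) (T+1)) f (inl (Fin.last (M+1))) =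
      f (pedge M T (Fin.last M)) + ∑ j : Fin (T+1), f (ledge M T j) := by
  rw [vertexSum_eq, filter_center, sum_insert, sum_image]
  · intro a _ b _ h; exact ledge_inj h
  · simp only [mem_image, mem_univ, true_and]
    rintro ⟨j, hj⟩
    exact pedge_ne_ledge _ j hj.symm

lemma vs_leaf (f : Sym2 (CV M T) → ℕ) (j : Fin (T+1)) :
    vertexSum (coconutTree (M+2) (T+1)) f (inr j) = f (ledge M T j) := by
  rw [vertexSum_eq, filter_leaf, sum_singleton]


-- generic edge labeling from path labels pl and leaf labels ll
def elabel (M T : ℕ) (pl ll : ℕ → ℕ) : Sym2 (CV M T) → ℕ :=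
  Sym2.lift ⟨fun x y =>
    match x, y with
    | inl a, inl b =>
        if (b : ℕ) = (a : ℕ) + 1 then pl a else if (a : ℕ) = (b : ℕ) + 1 then pl b else 0
    | inl _, inr j => ll j
    | inr j, inl _ => ll j
    | inr _, inr _ => 0,
    by
      intro x y
      match x, y with
      | inl a, inl b =>
        simp only
        split_ifs with h1 h2 h3 h4 h5 <;> first | rfl | omega
      | inl a, inr j => rfl
      | inr j, inl a => rfl
      | inr _, inr _ => rfl⟩

lemma elabel_pedge (pl ll : ℕ → ℕ) (i : Fin (M+1)) :
    elabel M T pl ll (pedge M T i) = pl i := by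
  simp only [elabel, pedge, Sym2.lift_mk]
  have : ((i.succ : Fin (M+2)) : ℕ) = ((i.castSucc : Fin (M+2)) : ℕ) + 1 := by simp
  simp [this]

lemma elabel_ledge (pl ll : ℕ → ℕ) (j : Fin (T+1)) :
    elabel M T pl ll (ledge M T j) = ll j := by
  simp [elabel, ledge]

-- the enumeration of edges
def enum (M T : ℕ) : Fin (M+1) ⊕ Fin (T+1) → Sym2 (CV M T) := Sum.elim (pedge M T) (ledge M T)

lemma enum_inj : Function.Injective (enum M T) := by
  rintro (i | j) (i' | j') h <;> simp only [enum, Sum.elim_inl, Sum.elim_inr] at h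
  · rw [pedge_inj h]
  · exact absurd h (pedge_ne_ledge _ _)
  · exact absurd h.symm (pedge_ne_ledge _ _)
  · rw [ledge_inj h]

lemma elabel_enum (pl ll : ℕ → ℕ) (x : Fin (M+1) ⊕ Fin (T+1)) :
    elabel M T pl ll (enum M T x) = Sum.elim (fun i : Fin (M+1) => pl i) (fun j : Fin (T+1) => ll j) x := by
  rcases x with i | j
  · exact elabel_pedge pl ll i
  · exact elabel_ledge pl ll j

lemma mem_CE_enum {e : Sym2 (CV M T)} : e ∈ CE M T ↔ ∃ x, enum M T x = e := by
  rw [mem_CE]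
  constructor
  · rintro (⟨i, rfl⟩ | ⟨j, rfl⟩)
    · exact ⟨inl i, rfl⟩
    · exact ⟨inr j, rfl⟩
  · rintro ⟨i | j, rfl⟩
    · exact Or.inl ⟨_, rfl⟩
    · exact Or.inr ⟨_, rfl⟩

lemma elabel_bijOn (pl ll : ℕ → ℕ)
    (h : Set.BijOn (Sum.elim (fun i : Fin (M+1) => pl i) (fun j : Fin (T+1) => ll j))
      Set.univ (Set.Icc 1 (M+T+2))) :
    Set.BijOn (elabel M T pl ll) (coconutTree (M+2) (T+1)).edgeSet
      (Set.Icc 1 ((coconutTree (M+2) (T+1)).edgeSet.ncard)) := by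
  rw [ncard_edgeSet, edgeSet_eq]
  obtain ⟨hmap, hinj, hsurj⟩ := h
  refine ⟨?_, ?_, ?_⟩
  · intro e he
    obtain ⟨x, rfl⟩ := mem_CE_enum.1 he
    rw [elabel_enum]
    exact hmap (Set.mem_univ x)
  · intro e1 h1 e2 h2 hf
    obtain ⟨x, rfl⟩ := mem_CE_enum.1 h1
    obtain ⟨y, rfl⟩ := mem_CE_enum.1 h2
    rw [elabel_enum, elabel_enum] at hf
    rw [hinj (Set.mem_univ x) (Set.mem_univ y) hf]
  · intro v hv
    obtain ⟨x, -, hx⟩ := hsurj hv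
    exact ⟨enum M T x, mem_CE_enum.2 ⟨x, rfl⟩, by rw [elabel_enum]; exact hx⟩


/-! zigzag -/

def zig (N k : ℕ) : ℕ := if k % 2 = 1 then (k+1)/2 else N + 1 - k/2

lemma zig_mem {N k : ℕ} (h1 : 1 ≤ k) (h2 : k ≤ N) : 1 ≤ zig N k ∧ zig N k ≤ N := by
  unfold zig; split_ifs <;> omega

lemma zig_inj {N k1 k2 : ℕ} (ha : 1 ≤ k1) (hb : k1 ≤ N) (hc : 1 ≤ k2) (hd : k2 ≤ N)
    (h : zig N k1 = zig N k2) : k1 = k2 := by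
  unfold zig at h; split_ifs at h <;> omega

lemma zig_surj {N v : ℕ} (h1 : 1 ≤ v) (h2 : v ≤ N) : ∃ k, 1 ≤ k ∧ k ≤ N ∧ zig N k = v := by
  by_cases h : 2*v ≤ N+1
  · exact ⟨2*v-1, by unfold zig; split_ifs <;> omega⟩
  · exact ⟨2*(N+1-v), by unfold zig; split_ifs <;> omega⟩

lemma zig_sum {N k : ℕ} (h1 : 1 ≤ k) (h2 : k+1 ≤ N) :
    zig N k + zig N (k+1) = if k % 2 = 1 then N+1 else N+2 := by
  unfold zig; split_ifs <;> omega

/-! Construction A (for T ≥ 1, i.e. t ≥ 2) -/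

def plA (M : ℕ) (i : ℕ) : ℕ := zig (M+1) (i+1)
def llA (M : ℕ) (j : ℕ) : ℕ := M + 2 + j

lemma bijA (hT : 1 ≤ T) :
    Set.BijOn (Sum.elim (fun i : Fin (M+1) => plA M i) (fun j : Fin (T+1) => llA M j))
      Set.univ (Set.Icc 1 (M+T+2)) := by
  refine ⟨?_, ?_, ?_⟩
  · rintro (i | j) -
    · have h := zig_mem (N := M+1) (k := (i:ℕ)+1) (by omega) (by have := i.isLt; omega)
      simp only [Sum.elim_inl, Set.mem_Icc, plA]
      omega
    · have := j.isLt
      simp only [Sum.elim_inr, Set.mem_Icc, llA]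
      omega
  · rintro (i | j) - (i' | j') - h <;>
      simp only [Sum.elim_inl, Sum.elim_inr, plA, llA] at h
    · have h1 := i.isLt; have h2 := i'.isLt
      have := zig_inj (N := M+1) (k1 := (i:ℕ)+1) (k2 := (i':ℕ)+1)
        (by omega) (by omega) (by omega) (by omega) h
      simp only [inl.injEq]
      exact Fin.ext (by omega)
    · exfalso
      have h1 := (zig_mem (N := M+1) (k := (i:ℕ)+1) (by omega) (by have := i.isLt; omega)).2
      omega
    · exfalso
      have h1 := (zig_mem (N := M+1) (k := (i':ℕ)+1) (by omega) (by have := i'.isLt; omega)).2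
      omega
    · have := j.isLt; have := j'.isLt
      simp only [inr.injEq]
      exact Fin.ext (by omega)
  · rintro v ⟨hv1, hv2⟩
    by_cases h : v ≤ M+1
    · obtain ⟨k, hk1, hk2, hk3⟩ := zig_surj (N := M+1) hv1 h
      refine ⟨inl ⟨k-1, by omega⟩, Set.mem_univ _, ?_⟩
      simp only [Sum.elim_inl, plA]
      show zig (M+1) (k-1+1) = v
      rw [show k-1+1 = k by omega]
      exact hk3
    · refine ⟨inr ⟨v - (M+2), by omega⟩, Set.mem_univ _, ?_⟩
      simp only [Sum.elim_inr, llA]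
      show M + 2 + (v - (M+2)) = v
      omega

noncomputable def fA (M T : ℕ) : Sym2 (CV M T) → ℕ := elabel M T (plA M) (llA M)

noncomputable abbrev GA (M T : ℕ) := coconutTree (M+2) (T+1)

lemma fA_pedge (i : Fin (M+1)) : fA M T (pedge M T i) = plA M i := elabel_pedge _ _ _
lemma fA_ledge (j : Fin (T+1)) : fA M T (ledge M T j) = llA M j := elabel_ledge _ _ _

lemma vsA_zero : vertexSum (GA M T) (fA M T) (inl 0) = 1 := by
  rw [vs_zero, fA_pedge]
  simp [plA, zig]

lemma vsA_leaf (j : Fin (T+1)) : vertexSum (GA M T) (fA M T) (inr j) = M + 2 + j := by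
  rw [vs_leaf, fA_ledge]; rfl

lemma vsA_mid (i : Fin M) :
    vertexSum (GA M T) (fA M T) (inl i.succ.castSucc) =
      if ((i:ℕ)+1) % 2 = 1 then M+2 else M+3 := by
  rw [vs_mid, fA_pedge, fA_pedge]
  have h1 : ((i.castSucc : Fin (M+1)) : ℕ) = (i : ℕ) := rfl
  have h2 : ((i.succ : Fin (M+1)) : ℕ) = (i : ℕ) + 1 := rfl
  rw [plA, plA, h1, h2]
  have hs := zig_sum (N := M+1) (k := (i:ℕ)+1) (by omega) (by have := i.isLt; omega)
  rw [show (i:ℕ)+1+1 = (i:ℕ)+2 from rfl] at hs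
  rw [hs]

lemma vsA_center_ge (hT : 1 ≤ T) :
    M + T + 4 ≤ vertexSum (GA M T) (fA M T) (inl (Fin.last (M+1))) := by
  rw [vs_center, fA_pedge]
  have h1 : 1 ≤ plA M ((Fin.last M : Fin (M+1)) : ℕ) := by
    have := zig_mem (N := M+1) (k := ((Fin.last M : Fin (M+1)) : ℕ)+1) (by omega)
      (by simp)
    simp only [plA]; omega
  have hlb : (T+1) * (M+2) ≤ ∑ j : Fin (T+1), fA M T (ledge M T j) := by
    have hcard : (univ : Finset (Fin (T+1))).card = T+1 := by simp
    have := Finset.card_nsmul_le_sum (univ : Finset (Fin (T+1)))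
      (fun j => fA M T (ledge M T j)) (M+2)
      (fun j _ => by show M+2 ≤ fA M T (ledge M T j); rw [fA_ledge]; simp [llA])
    rwa [hcard, smul_eq_mul] at this
  nlinarith [hT, h1, hlb]


lemma vertex_cases (v : CV M T) :
    v = inl 0 ∨ (∃ i : Fin M, v = inl i.succ.castSucc) ∨ v = inl (Fin.last (M+1)) ∨
      ∃ j, v = inr j := by
  rcases v with k | j
  · by_cases h0 : (k : ℕ) = 0
    · exact Or.inl (by rw [show k = 0 from Fin.ext (by simp [h0])])
    · by_cases hM : (k : ℕ) = M + 1
      · exact Or.inr (Or.inr (Or.inl (by rw [show k = Fin.last (M+1) from Fin.ext (by simp [hM])])))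
      · have hk := k.isLt
        refine Or.inr (Or.inl ⟨⟨(k : ℕ) - 1, by omega⟩, ?_⟩)
        exact congrArg inl (Fin.ext (by simp; omega))
  · exact Or.inr (Or.inr (Or.inr ⟨j, rfl⟩))

lemma vsA_inl (k : Fin (M+2)) (h0 : (k:ℕ) ≠ 0) (h1 : (k:ℕ) ≠ M+1) :
    vertexSum (GA M T) (fA M T) (inl k) = if (k:ℕ) % 2 = 1 then M+2 else M+3 := by
  have hk := k.isLt
  have hin : (inl k : CV M T) = inl ((⟨(k:ℕ)-1, by omega⟩ : Fin M).succ.castSucc) :=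
    congrArg inl (Fin.ext (by simp; omega))
  rw [hin, vsA_mid]
  have hval : ((⟨(k:ℕ)-1, by omega⟩ : Fin M) : ℕ) = (k:ℕ) - 1 := rfl
  rw [hval, show (k:ℕ) - 1 + 1 = (k:ℕ) by omega]

lemma antimagicA (hT : 1 ≤ T) : IsLocalAntimagic (GA M T) (fA M T) := by
  constructor
  · exact elabel_bijOn _ _ (bijA hT)
  · have aux1 : ∀ i : Fin (M+1),
        vertexSum (GA M T) (fA M T) (inl i.castSucc) ≠
        vertexSum (GA M T) (fA M T) (inl i.succ) := by
      intro i
      have hi := i.isLt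
      have hcs : ((i.castSucc : Fin (M+2)) : ℕ) = (i : ℕ) := rfl
      have hsc : ((i.succ : Fin (M+2)) : ℕ) = (i : ℕ) + 1 := rfl
      by_cases h0 : (i : ℕ) = 0
      · have hz : i.castSucc = 0 := Fin.ext (by simp [hcs, h0])
        rw [hz, vsA_zero]
        by_cases hM : (i : ℕ) = M
        · have hl : i.succ = Fin.last (M+1) := Fin.ext (by simp [hsc]; omega)
          rw [hl]
          have := vsA_center_ge (M := M) hT
          omega
        · rw [vsA_inl i.succ (by omega) (by omega)]
          split_ifs <;> omega
      · by_cases hM : (i : ℕ) = M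
        · rw [vsA_inl i.castSucc (by omega) (by omega)]
          have hl : i.succ = Fin.last (M+1) := Fin.ext (by simp [hsc]; omega)
          rw [hl]
          have := vsA_center_ge (M := M) hT
          split_ifs <;> omega
        · rw [vsA_inl i.castSucc (by omega) (by omega),
            vsA_inl i.succ (by omega) (by omega), hcs, hsc]
          split_ifs <;> omega
    have aux2 : ∀ j : Fin (T+1),
        vertexSum (GA M T) (fA M T) (inl (Fin.last (M+1))) ≠
        vertexSum (GA M T) (fA M T) (inr j) := by
      intro j
      have := vsA_center_ge (M := M) hT
      rw [vsA_leaf]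
      have := j.isLt
      omega
    intro u v huv
    rcases (adj_iff u v).1 huv with ⟨i, ⟨rfl, rfl⟩ | ⟨rfl, rfl⟩⟩ | ⟨j, ⟨rfl, rfl⟩ | ⟨rfl, rfl⟩⟩
    · exact aux1 i
    · exact (aux1 i).symm
    · exact aux2 j
    · exact (aux2 j).symm

lemma colorCountA (hT : 1 ≤ T) : colorCount (GA M T) (fA M T) = T + 3 := by
  set C := vertexSum (GA M T) (fA M T) (inl (Fin.last (M+1))) with hC
  have hCge : M+T+4 ≤ C := vsA_center_ge hT
  have hrange : Set.range (vertexSum (GA M T) (fA M T)) =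
      ↑(insert 1 (insert C (Finset.Icc (M+2) (M+2+T)))) := by
    ext x
    simp only [Set.mem_range, coe_insert, Set.mem_insert_iff, mem_coe, Finset.mem_Icc]
    constructor
    · rintro ⟨v, rfl⟩
      rcases vertex_cases v with rfl | ⟨i, rfl⟩ | rfl | ⟨j, rfl⟩
      · left; exact vsA_zero
      · right; right; rw [vsA_mid]; split_ifs <;> omega
      · right; left; rfl
      · right; right; rw [vsA_leaf]; have := j.isLt; omega
    · rintro (rfl | rfl | ⟨h1, h2⟩)
      · exact ⟨inl 0, vsA_zero⟩
      · exact ⟨inl (Fin.last (M+1)), rfl⟩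
      · refine ⟨inr ⟨x - (M+2), by omega⟩, ?_⟩
        rw [vsA_leaf]
        show M + 2 + (x - (M+2)) = x
        omega
  rw [colorCount, hrange, Set.ncard_coe_finset]
  rw [card_insert_of_notMem, card_insert_of_notMem, Nat.card_Icc]
  · omega
  · simp only [Finset.mem_Icc]; omega
  · simp only [mem_insert, Finset.mem_Icc]; push_neg; omega


/-! Construction B (T = 0, i.e. t = 1) -/

def plB (M : ℕ) (i : ℕ) : ℕ := M + 3 - zig (M+2) (i+1)
def llB (M : ℕ) (_j : ℕ) : ℕ := M + 3 - zig (M+2) (M+2)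

lemma bijB :
    Set.BijOn (Sum.elim (fun i : Fin (M+1) => plB M i) (fun j : Fin 1 => llB M j))
      Set.univ (Set.Icc 1 (M+0+2)) := by
  have hmem : ∀ k, 1 ≤ k → k ≤ M+2 → 1 ≤ zig (M+2) k ∧ zig (M+2) k ≤ M+2 :=
    fun k h1 h2 => zig_mem h1 h2
  refine ⟨?_, ?_, ?_⟩
  · rintro (i | j) -
    · have h := hmem ((i:ℕ)+1) (by omega) (by have := i.isLt; omega)
      simp only [Sum.elim_inl, Set.mem_Icc, plB]
      omega
    · have h := hmem (M+2) (by omega) le_rfl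
      simp only [Sum.elim_inr, Set.mem_Icc, llB]
      omega
  · rintro (i | j) - (i' | j') - h <;>
      simp only [Sum.elim_inl, Sum.elim_inr, plB, llB] at h
    · have hb1 := hmem ((i:ℕ)+1) (by omega) (by have := i.isLt; omega)
      have hb2 := hmem ((i':ℕ)+1) (by omega) (by have := i'.isLt; omega)
      have heq : zig (M+2) ((i:ℕ)+1) = zig (M+2) ((i':ℕ)+1) := by omega
      have := zig_inj (N := M+2) (k1 := (i:ℕ)+1) (k2 := (i':ℕ)+1)
        (by omega) (by have := i.isLt; omega) (by omega) (by have := i'.isLt; omega) heq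
      simp only [inl.injEq]
      exact Fin.ext (by omega)
    · exfalso
      have hb1 := hmem ((i:ℕ)+1) (by omega) (by have := i.isLt; omega)
      have hb2 := hmem (M+2) (by omega) le_rfl
      have heq : zig (M+2) ((i:ℕ)+1) = zig (M+2) (M+2) := by omega
      have := zig_inj (N := M+2) (k1 := (i:ℕ)+1) (k2 := M+2)
        (by omega) (by have := i.isLt; omega) (by omega) le_rfl heq
      have := i.isLt
      omega
    · exfalso
      have hb1 := hmem ((i':ℕ)+1) (by omega) (by have := i'.isLt; omega)
      have hb2 := hmem (M+2) (by omega) le_rfl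
      have heq : zig (M+2) (M+2) = zig (M+2) ((i':ℕ)+1) := by omega
      have := zig_inj (N := M+2) (k1 := M+2) (k2 := (i':ℕ)+1)
        (by omega) le_rfl (by omega) (by have := i'.isLt; omega) heq
      have := i'.isLt
      omega
    · simp only [inr.injEq]
      exact Subsingleton.elim _ _
  · rintro v ⟨hv1, hv2⟩
    obtain ⟨k, hk1, hk2, hk3⟩ := zig_surj (N := M+2) (v := M+3-v) (by omega) (by omega)
    have hzb := hmem k hk1 hk2
    by_cases h : k ≤ M+1
    · refine ⟨inl ⟨k-1, by omega⟩, Set.mem_univ _, ?_⟩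
      simp only [Sum.elim_inl, plB]
      show M + 3 - zig (M+2) (k-1+1) = v
      rw [show k-1+1 = k by omega]
      omega
    · refine ⟨inr 0, Set.mem_univ _, ?_⟩
      simp only [Sum.elim_inr, llB]
      have hke : k = M+2 := by omega
      subst hke
      omega

noncomputable def fB (M : ℕ) : Sym2 (CV M 0) → ℕ := elabel M 0 (plB M) (llB M)

noncomputable abbrev GB (M : ℕ) := coconutTree (M+2) (0+1)

lemma fB_pedge (i : Fin (M+1)) : fB M (pedge M 0 i) = plB M i := elabel_pedge _ _ _
lemma fB_ledge (j : Fin 1) : fB M (ledge M 0 j) = llB M j := elabel_ledge _ _ _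

lemma vsB_inl (k : Fin (M+2)) :
    vertexSum (GB M) (fB M) (inl k) = if (k:ℕ) % 2 = 1 then M+3 else M+2 := by
  have hk := k.isLt
  by_cases h0 : (k:ℕ) = 0
  · rw [show k = 0 from Fin.ext (by simp [h0]), vs_zero, fB_pedge]
    have : ((0 : Fin (M+1)) : ℕ) = 0 := rfl
    rw [show plB M ((0 : Fin (M+1)) : ℕ) = plB M 0 by rw [this]]
    simp only [plB, zig, h0]
    norm_num
  · by_cases hM : (k:ℕ) = M+1
    · rw [show k = Fin.last (M+1) from Fin.ext (by simp [hM]), vs_center, fB_pedge]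
      rw [Fin.sum_univ_one, fB_ledge]
      have hvl : ((Fin.last M : Fin (M+1)) : ℕ) = M := rfl
      rw [hvl]
      simp only [plB, llB]
      have ha := zig_mem (N := M+2) (k := M+1) (by omega) (by omega)
      have hb := zig_mem (N := M+2) (k := M+2) (by omega) le_rfl
      have hs := zig_sum (N := M+2) (k := M+1) (by omega) le_rfl
      rw [show ((Fin.last (M+1) : Fin (M+2)) : ℕ) = M+1 from rfl,
        show M+1+1 = M+2 from rfl] at *
      split_ifs at hs ⊢ <;> omega
    · have hin : (inl k : CV M 0) = inl ((⟨(k:ℕ)-1, by omega⟩ : Fin M).succ.castSucc) :=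
        congrArg inl (Fin.ext (by simp; omega))
      rw [hin, vs_mid, fB_pedge, fB_pedge]
      have hv1 : (((⟨(k:ℕ)-1, by omega⟩ : Fin M).castSucc : Fin (M+1)) : ℕ) = (k:ℕ) - 1 := rfl
      have hv2 : (((⟨(k:ℕ)-1, by omega⟩ : Fin M).succ : Fin (M+1)) : ℕ) = (k:ℕ) - 1 + 1 := rfl
      rw [hv1, hv2]
      simp only [plB]
      rw [show (k:ℕ)-1+1 = (k:ℕ) by omega]
      have ha := zig_mem (N := M+2) (k := (k:ℕ)) (by omega) (by omega)
      have hb := zig_mem (N := M+2) (k := (k:ℕ)+1) (by omega) (by omega)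
      have hs := zig_sum (N := M+2) (k := (k:ℕ)) (by omega) (by omega)
      split_ifs at hs ⊢ <;> omega

lemma vsB_leaf (j : Fin 1) :
    vertexSum (GB M) (fB M) (inr j) = M + 3 - zig (M+2) (M+2) := by
  rw [vs_leaf, fB_ledge]; rfl

lemma zig_top_bounds : 2 ≤ zig (M+2) (M+2) ∧ zig (M+2) (M+2) ≤ M+2 := by
  unfold zig; split_ifs <;> omega

lemma antimagicB : IsLocalAntimagic (GB M) (fB M) := by
  constructor
  · exact elabel_bijOn _ _ bijB
  · intro u v huv
    have hleafvs : ∀ j : Fin 1, vertexSum (GB M) (fB M) (inr j) ≤ M + 1 := by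
      intro j
      rw [vsB_leaf]
      have := zig_top_bounds (M := M)
      omega
    rcases (adj_iff u v).1 huv with ⟨i, ⟨rfl, rfl⟩ | ⟨rfl, rfl⟩⟩ | ⟨j, ⟨rfl, rfl⟩ | ⟨rfl, rfl⟩⟩
    · rw [vsB_inl, vsB_inl]
      have h1 : ((i.castSucc : Fin (M+2)) : ℕ) = (i : ℕ) := rfl
      have h2 : ((i.succ : Fin (M+2)) : ℕ) = (i : ℕ) + 1 := rfl
      rw [h1, h2]
      split_ifs <;> omega
    · rw [vsB_inl, vsB_inl]
      have h1 : ((i.castSucc : Fin (M+2)) : ℕ) = (i : ℕ) := rfl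
      have h2 : ((i.succ : Fin (M+2)) : ℕ) = (i : ℕ) + 1 := rfl
      rw [h1, h2]
      split_ifs <;> omega
    · rw [vsB_inl]
      have := hleafvs j
      split_ifs <;> omega
    · rw [vsB_inl]
      have := hleafvs j
      split_ifs <;> omega

lemma colorCountB : colorCount (GB M) (fB M) = 3 := by
  set β := M + 3 - zig (M+2) (M+2) with hβ
  have hβb : 1 ≤ β ∧ β ≤ M + 1 := by
    have := zig_top_bounds (M := M)
    omega
  have hrange : Set.range (vertexSum (GB M) (fB M)) = ↑({M+2, M+3, β} : Finset ℕ) := by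
    ext x
    simp only [Set.mem_range, coe_insert, Set.mem_insert_iff, coe_singleton,
      Set.mem_singleton_iff]
    constructor
    · rintro ⟨v, rfl⟩
      rcases v with k | j
      · rw [vsB_inl]; split_ifs with h
        · right; left; rfl
        · left; rfl
      · right; right; rw [vsB_leaf]
    · rintro (rfl | rfl | rfl)
      · exact ⟨inl 0, by rw [vsB_inl]; norm_num⟩
      · refine ⟨inl ⟨1, by omega⟩, ?_⟩
        rw [vsB_inl]
        norm_num
      · exact ⟨inr 0, vsB_leaf 0⟩
  rw [colorCount, hrange, Set.ncard_coe_finset]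
  rw [card_insert_of_notMem, card_insert_of_notMem, card_singleton]
  · simp only [mem_singleton]; omega
  · simp only [mem_insert, mem_singleton]; push_neg; omega


/-! Lower bound -/

lemma lowerBound (f : Sym2 (CV M T) → ℕ)
    (hf : IsLocalAntimagic (coconutTree (M+2) (T+1)) f) :
    T + 3 ≤ colorCount (coconutTree (M+2) (T+1)) f := by
  obtain ⟨⟨hmap, hinj, hsurj⟩, -⟩ := hf
  rw [ncard_edgeSet] at hmap hsurj
  have hCE : ∀ e ∈ CE M T, e ∈ (coconutTree (M+2) (T+1)).edgeSet := by
    intro e he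
    rw [edgeSet_eq]
    exact he
  have hpe : ∀ i, pedge M T i ∈ (coconutTree (M+2) (T+1)).edgeSet :=
    fun i => hCE _ (mem_CE.2 (Or.inl ⟨i, rfl⟩))
  have hle : ∀ j, ledge M T j ∈ (coconutTree (M+2) (T+1)).edgeSet :=
    fun j => hCE _ (mem_CE.2 (Or.inr ⟨j, rfl⟩))
  have hpb : ∀ i, 1 ≤ f (pedge M T i) ∧ f (pedge M T i) ≤ M+T+2 := fun i => hmap (hpe i)
  have hlb : ∀ j, 1 ≤ f (ledge M T j) ∧ f (ledge M T j) ≤ M+T+2 := fun j => hmap (hle j)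
  -- the ledge-sum at the center is at least any single ledge label
  have hsumle : ∀ j₀ : Fin (T+1), f (ledge M T j₀) ≤ ∑ j : Fin (T+1), f (ledge M T j) :=
    fun j₀ => Finset.single_le_sum (f := fun j => f (ledge M T j))
      (fun j _ => Nat.zero_le _) (mem_univ j₀)
  -- a vertex with sum > q
  have hbig : ∃ v, M+T+3 ≤ vertexSum (coconutTree (M+2) (T+1)) f v := by
    obtain ⟨e, he, hfe⟩ := hsurj (Set.mem_Icc.2 ⟨by omega, le_rfl⟩)
    rw [edgeSet_eq] at he
    rcases mem_CE.1 he with ⟨i, rfl⟩ | ⟨j, rfl⟩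
    · by_cases hiM : (i : ℕ) < M
      · refine ⟨inl ((⟨(i:ℕ), hiM⟩ : Fin M).succ.castSucc), ?_⟩
        rw [vs_mid]
        have hee : (⟨(i:ℕ), hiM⟩ : Fin M).castSucc = i := Fin.ext rfl
        rw [hee, hfe]
        have := (hpb (⟨(i:ℕ), hiM⟩ : Fin M).succ).1
        omega
      · have hil : i = Fin.last M := Fin.ext (by have := i.isLt; simp; omega)
        subst hil
        refine ⟨inl (Fin.last (M+1)), ?_⟩
        rw [vs_center, hfe]
        have h0 := (hlb 0).1
        have := hsumle 0
        omega
    · refine ⟨inl (Fin.last (M+1)), ?_⟩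
      rw [vs_center]
      have := hsumle j
      have := (hpb (Fin.last M)).1
      omega
  obtain ⟨w, hw⟩ := hbig
  -- the small distinct colors
  set S : Finset ℕ :=
    insert (vertexSum (coconutTree (M+2) (T+1)) f w)
      (insert (f (pedge M T 0)) (univ.image (fun j => f (ledge M T j)))) with hS
  have himinj : Function.Injective (fun j : Fin (T+1) => f (ledge M T j)) := by
    intro a b h
    exact ledge_inj (hinj (hle a) (hle b) h)
  have hcard : S.card = T + 3 := by
    rw [hS, card_insert_of_notMem, card_insert_of_notMem,
      card_image_of_injective _ himinj, card_univ, Fintype.card_fin]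
    · simp only [mem_image, mem_univ, true_and]
      rintro ⟨j, hj⟩
      exact pedge_ne_ledge 0 j (hinj (hpe 0) (hle j) hj.symm)
    · simp only [mem_insert, mem_image, mem_univ, true_and]
      push_neg
      refine ⟨by have := (hpb 0).2; omega, fun j => by have := (hlb j).2; omega⟩
  have hsub : ↑S ⊆ Set.range (vertexSum (coconutTree (M+2) (T+1)) f) := by
    intro x hx
    simp only [hS, coe_insert, Set.mem_insert_iff, coe_image, coe_univ, Set.image_univ,
      Set.mem_range, mem_coe, mem_image, mem_univ, true_and] at hx
    rcases hx with rfl | rfl | ⟨j, rfl⟩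
    · exact ⟨w, rfl⟩
    · exact ⟨inl 0, vs_zero f⟩
    · exact ⟨inr j, vs_leaf f j⟩
  calc T + 3 = S.card := hcard.symm
    _ = (↑S : Set ℕ).ncard := (Set.ncard_coe_finset S).symm
    _ ≤ colorCount (coconutTree (M+2) (T+1)) f :=
        Set.ncard_le_ncard hsub (Set.finite_range _)

end CoconutTreeAux

theorem chiLA_coconutTree (m t : ℕ) (hm : 2 ≤ m) (ht : 1 ≤ t) :
    chiLA (coconutTree m t) = t + 2 := by
  obtain ⟨M, rfl⟩ : ∃ M, m = M + 2 := ⟨m - 2, by omega⟩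
  obtain ⟨T, rfl⟩ : ∃ T, t = T + 1 := ⟨t - 1, by omega⟩
  have hmem : (T + 3) ∈ {n | ∃ f, IsLocalAntimagic (coconutTree (M+2) (T+1)) f ∧
      colorCount (coconutTree (M+2) (T+1)) f = n} := by
    rcases Nat.eq_zero_or_pos T with rfl | hT
    · exact ⟨fB M, antimagicB, colorCountB⟩
    · exact ⟨fA M T, antimagicA hT, colorCountA hT⟩
  have hle : ∀ n ∈ {n | ∃ f, IsLocalAntimagic (coconutTree (M+2) (T+1)) f ∧
      colorCount (coconutTree (M+2) (T+1)) f = n}, T + 3 ≤ n := by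
    rintro n ⟨f, hf, rfl⟩
    exact lowerBound f hf
  have : chiLA (coconutTree (M+2) (T+1)) = T + 3 := by
    rw [chiLA]
    exact le_antisymm (csInf_le (OrderBot.bddBelow _) hmem) (le_csInf ⟨_, hmem⟩ hle)
  rw [this]
end

section
/- For integers n and k with n ≥ k + 3 ≥ 3, there exists a connected graph G of order n with χ_la(G) = n − k; specifically, the coconut tree CT(k+2, n−k−2) has order n and local antimagic chromatic number n − k. -/
open scoped BigOperators

section Aux

open Sum Set Function

namespace CT

variable (p t : ℕ)

abbrev V (p t : ℕ) := Fin (p+1) ⊕ Fin t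

lemma adj_inl_inl {a b : Fin (p+1)} :
    (coconutTree (p+1) t).Adj (inl a) (inl b) ↔ ((b:ℕ) = (a:ℕ) + 1 ∨ (a:ℕ) = (b:ℕ) + 1) := by
  rw [coconutTree, SimpleGraph.fromRel_adj]
  constructor
  · rintro ⟨hne, h⟩
    rcases h with ((⟨a',b',ha,hb,hx⟩|⟨a',j,ha,hb,hx⟩)|(⟨a',b',ha,hb,hx⟩|⟨a',j,ha,hb,hx⟩)) <;>
      simp_all
  · intro h
    have hne : a ≠ b := by rintro rfl; omega
    refine ⟨by simpa using hne, ?_⟩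
    rcases h with h | h
    · exact Or.inl (Or.inl ⟨a, b, rfl, rfl, h⟩)
    · exact Or.inr (Or.inl ⟨b, a, rfl, rfl, h⟩)

lemma adj_inl_inr {a : Fin (p+1)} {j : Fin t} :
    (coconutTree (p+1) t).Adj (inl a) (inr j) ↔ (a:ℕ) = p := by
  rw [coconutTree, SimpleGraph.fromRel_adj]
  constructor
  · rintro ⟨hne, h⟩
    rcases h with ((⟨a',b',ha,hb,hx⟩|⟨a',j',ha,hb,hx⟩)|(⟨a',b',ha,hb,hx⟩|⟨a',j',ha,hb,hx⟩)) <;>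
      simp_all
  · intro h
    exact ⟨by simp, Or.inl (Or.inr ⟨a, j, rfl, rfl, by simpa using h⟩)⟩

lemma adj_inr_inl {a : Fin (p+1)} {j : Fin t} :
    (coconutTree (p+1) t).Adj (inr j) (inl a) ↔ (a:ℕ) = p := by
  rw [SimpleGraph.adj_comm]; exact adj_inl_inr p t

lemma adj_inr_inr {j j' : Fin t} : ¬ (coconutTree (p+1) t).Adj (inr j) (inr j') := by
  rw [coconutTree, SimpleGraph.fromRel_adj]
  rintro ⟨hne, h⟩
  rcases h with ((⟨a',b',ha,hb,hx⟩|⟨a',j'',ha,hb,hx⟩)|(⟨a',b',ha,hb,hx⟩|⟨a',j'',ha,hb,hx⟩)) <;>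
    simp_all

def lab (p i : ℕ) : ℕ := if i % 2 = 1 then p - (i-1)/2 else i/2

def g (p t : ℕ) : V p t → V p t → ℕ
  | inl a, inl b =>
      if (b:ℕ) = (a:ℕ) + 1 then lab p b else if (a:ℕ) = (b:ℕ) + 1 then lab p a else 0
  | inl a, inr j => if (a:ℕ) = p then p + 1 + (j:ℕ) else 0
  | inr j, inl a => if (a:ℕ) = p then p + 1 + (j:ℕ) else 0
  | inr _, inr _ => 0

lemma g_symm : ∀ x y : V p t, g p t x y = g p t y x := by
  rintro (a|j) (b|j') <;> simp only [g] <;> split_ifs <;> first | rfl | omega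

def fl : Sym2 (V p t) → ℕ := Sym2.lift ⟨g p t, g_symm p t⟩

def pe (i : Fin p) : Sym2 (V p t) := s(inl i.castSucc, inl i.succ)
def se (j : Fin t) : Sym2 (V p t) := s(inl (Fin.last p), inr j)

lemma fl_pe (i : Fin p) : fl p t (pe p t i) = lab p ((i:ℕ)+1) := by
  simp [fl, pe, g, Sym2.lift_mk]

lemma fl_se (j : Fin t) : fl p t (se p t j) = p + 1 + (j:ℕ) := by
  simp [fl, se, g, Sym2.lift_mk]

lemma pe_inj : Injective (pe p t) := by
  intro i i' h
  rw [pe, pe, Sym2.eq_iff] at h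
  rcases h with ⟨h1, h2⟩ | ⟨h1, h2⟩ <;>
    [skip; skip] <;>
    · injection h1 with h1; injection h2 with h2
      have := congrArg Fin.val h1; have := congrArg Fin.val h2
      simp only [Fin.coe_castSucc, Fin.val_succ] at *
      exact Fin.ext (by omega)

lemma se_inj : Injective (se p t) := by
  intro j j' h
  rw [se, se, Sym2.eq_iff] at h
  simp_all

lemma pe_ne_se (i : Fin p) (j : Fin t) : pe p t i ≠ se p t j := by
  intro h
  rw [pe, se, Sym2.eq_iff] at h
  simp at h


def E : Finset (Sym2 (V p t)) := (Finset.univ.image (pe p t)) ∪ (Finset.univ.image (se p t))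

lemma mem_E {e : Sym2 (V p t)} :
    e ∈ E p t ↔ (∃ i, pe p t i = e) ∨ (∃ j, se p t j = e) := by simp [E]

lemma edgeSet_eq : (coconutTree (p+1) t).edgeSet = ↑(E p t) := by
  ext e
  refine Sym2.ind (fun x y => ?_) e
  rw [SimpleGraph.mem_edgeSet, Finset.mem_coe, mem_E]
  constructor
  · intro h
    rcases x with a | j <;> rcases y with b | j'
    · rw [adj_inl_inl] at h
      rcases h with h | h
      · refine Or.inl ⟨⟨(a:ℕ), by omega⟩, ?_⟩
        rw [pe, Sym2.eq_iff]
        left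
        constructor <;> (congr 1 <;> exact Fin.ext (by simp; try omega))
      · refine Or.inl ⟨⟨(b:ℕ), by omega⟩, ?_⟩
        rw [pe, Sym2.eq_iff]
        right
        constructor <;> (congr 1 <;> exact Fin.ext (by simp; try omega))
    · rw [adj_inl_inr] at h
      refine Or.inr ⟨j', ?_⟩
      rw [se, Sym2.eq_iff]
      left
      exact ⟨by congr 1 <;> exact Fin.ext (by simp [h]), rfl⟩
    · rw [adj_inr_inl] at h
      refine Or.inr ⟨j, ?_⟩
      rw [se, Sym2.eq_iff]
      right
      exact ⟨by congr 1 <;> exact Fin.ext (by simp [h]), rfl⟩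
    · exact absurd h (adj_inr_inr p t)
  · rintro (⟨i, hi⟩ | ⟨j, hj⟩)
    · rw [pe, Sym2.eq_iff] at hi
      rcases hi with ⟨rfl, rfl⟩ | ⟨rfl, rfl⟩ <;> · rw [adj_inl_inl]; simp
    · rw [se, Sym2.eq_iff] at hj
      rcases hj with ⟨rfl, rfl⟩ | ⟨rfl, rfl⟩
      · rw [adj_inl_inr]; simp
      · rw [adj_inr_inl]; simp

lemma card_E : (E p t).card = p + t := by
  rw [E, Finset.card_union_of_disjoint, Finset.card_image_of_injective _ (pe_inj p t),
    Finset.card_image_of_injective _ (se_inj p t), Finset.card_univ, Finset.card_univ,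
    Fintype.card_fin, Fintype.card_fin]
  rw [Finset.disjoint_left]
  rintro e he he'
  simp only [Finset.mem_image, Finset.mem_univ, true_and] at he he'
  obtain ⟨i, rfl⟩ := he
  obtain ⟨j, hj⟩ := he'
  exact pe_ne_se p t i j hj.symm

lemma ncard_edgeSet : (coconutTree (p+1) t).edgeSet.ncard = p + t := by
  rw [edgeSet_eq, Set.ncard_coe_finset, card_E]

lemma inc_leaf (j : Fin t) :
    (coconutTree (p+1) t).incidenceSet (inr j) = {se p t j} := by
  ext e
  refine Sym2.ind (fun x y => ?_) e
  rw [SimpleGraph.mk'_mem_incidenceSet_iff, Set.mem_singleton_iff]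
  constructor
  · rintro ⟨hadj, h | h⟩ <;> subst h
    · rcases y with b | j'
      · rw [adj_inr_inl] at hadj
        rw [se, Sym2.eq_iff]
        right
        exact ⟨rfl, by congr 1 <;> exact Fin.ext (by simp [hadj])⟩
      · exact absurd hadj (adj_inr_inr p t)
    · rcases x with a | j'
      · rw [adj_inl_inr] at hadj
        rw [se, Sym2.eq_iff]
        left
        exact ⟨by congr 1 <;> exact Fin.ext (by simp [hadj]), rfl⟩
      · exact absurd hadj (adj_inr_inr p t)
  · intro h
    rw [se, Sym2.eq_iff] at h
    rcases h with ⟨rfl, rfl⟩ | ⟨rfl, rfl⟩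
    · exact ⟨(adj_inl_inr p t).mpr (by simp), Or.inr rfl⟩
    · exact ⟨(adj_inr_inl p t).mpr (by simp), Or.inl rfl⟩

lemma vsum_leaf (f : Sym2 (V p t) → ℕ) (j : Fin t) :
    vertexSum (coconutTree (p+1) t) f (inr j) = f (se p t j) := by
  rw [vertexSum, inc_leaf, finsum_mem_singleton]

lemma inc_v0 (hp : 0 < p) :
    (coconutTree (p+1) t).incidenceSet (inl 0) = {pe p t ⟨0, hp⟩} := by
  ext e
  refine Sym2.ind (fun x y => ?_) e
  rw [SimpleGraph.mk'_mem_incidenceSet_iff, Set.mem_singleton_iff]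
  have h0 : ((0 : Fin (p+1)) : ℕ) = 0 := rfl
  constructor
  · rintro ⟨hadj, h | h⟩ <;> subst h
    · rcases y with b | j'
      · rw [adj_inl_inl] at hadj
        rw [pe, Sym2.eq_iff]
        rcases hadj with hb | hb
        · left
          constructor <;> (congr 1 <;> exact Fin.ext (by simp; try omega))
        · exfalso; omega
      · rw [adj_inl_inr] at hadj
        exfalso; rw [h0] at hadj; omega
    · rcases x with a | j'
      · rw [adj_inl_inl] at hadj
        rw [pe, Sym2.eq_iff]
        rcases hadj with hb | hb
        · exfalso; omega
        · right
          constructor <;> (congr 1 <;> exact Fin.ext (by simp; try omega))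
      · rw [adj_inr_inl] at hadj
        exfalso; rw [h0] at hadj; omega
  · intro h
    rw [pe, Sym2.eq_iff] at h
    rcases h with ⟨rfl, rfl⟩ | ⟨rfl, rfl⟩
    · refine ⟨(adj_inl_inl p t).mpr (by simp), Or.inl ?_⟩
      congr 1 <;> exact Fin.ext (by simp)
    · refine ⟨(adj_inl_inl p t).mpr (by simp), Or.inr ?_⟩
      congr 1 <;> exact Fin.ext (by simp)

lemma vsum_v0 (hp : 0 < p) (f : Sym2 (V p t) → ℕ) :
    vertexSum (coconutTree (p+1) t) f (inl 0) = f (pe p t ⟨0, hp⟩) := by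
  rw [vertexSum, inc_v0 p t hp, finsum_mem_singleton]

lemma inc_mid (c : Fin (p+1)) (h0 : 0 < (c:ℕ)) (hc : (c:ℕ) < p) :
    (coconutTree (p+1) t).incidenceSet (inl c) =
      {pe p t ⟨(c:ℕ) - 1, by omega⟩, pe p t ⟨(c:ℕ), hc⟩} := by
  ext e
  refine Sym2.ind (fun x y => ?_) e
  rw [SimpleGraph.mk'_mem_incidenceSet_iff, Set.mem_insert_iff, Set.mem_singleton_iff]
  constructor
  · rintro ⟨hadj, h | h⟩ <;> subst h
    · rcases y with b | j'
      · rw [adj_inl_inl] at hadj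
        rw [pe, pe, Sym2.eq_iff, Sym2.eq_iff]
        rcases hadj with hb | hb
        · right; left
          constructor <;> (congr 1 <;> exact Fin.ext (by simp; try omega))
        · left; right
          constructor <;> (congr 1 <;> exact Fin.ext (by simp; try omega))
      · rw [adj_inl_inr] at hadj
        exfalso; omega
    · rcases x with a | j'
      · rw [adj_inl_inl] at hadj
        rw [pe, pe, Sym2.eq_iff, Sym2.eq_iff]
        rcases hadj with hb | hb
        · left; left
          constructor <;> (congr 1 <;> exact Fin.ext (by simp; try omega))
        · right; right
          constructor <;> (congr 1 <;> exact Fin.ext (by simp; try omega))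
      · rw [adj_inr_inl] at hadj
        exfalso; omega
  · rintro (h | h) <;> rw [pe, Sym2.eq_iff] at h <;>
      rcases h with ⟨rfl, rfl⟩ | ⟨rfl, rfl⟩
    · refine ⟨(adj_inl_inl p t).mpr (by simp; try omega), Or.inr ?_⟩
      congr 1 <;> exact Fin.ext (by simp; try omega)
    · refine ⟨(adj_inl_inl p t).mpr (by simp; try omega), Or.inl ?_⟩
      congr 1 <;> exact Fin.ext (by simp; try omega)
    · refine ⟨(adj_inl_inl p t).mpr (by simp; try omega), Or.inl ?_⟩
      congr 1 <;> exact Fin.ext (by simp; try omega)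
    · refine ⟨(adj_inl_inl p t).mpr (by simp; try omega), Or.inr ?_⟩
      congr 1 <;> exact Fin.ext (by simp; try omega)

lemma vsum_mid (c : Fin (p+1)) (h0 : 0 < (c:ℕ)) (hc : (c:ℕ) < p) (f : Sym2 (V p t) → ℕ) :
    vertexSum (coconutTree (p+1) t) f (inl c) =
      f (pe p t ⟨(c:ℕ) - 1, by omega⟩) + f (pe p t ⟨(c:ℕ), hc⟩) := by
  rw [vertexSum, inc_mid p t c h0 hc, finsum_mem_pair]
  intro h
  have := pe_inj p t h
  rw [Fin.ext_iff] at this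
  simp at this
  omega

lemma inc_center (hp : 0 < p) :
    (coconutTree (p+1) t).incidenceSet (inl (Fin.last p)) =
      insert (pe p t ⟨p - 1, by omega⟩) ↑(Finset.univ.image (se p t)) := by
  ext e
  refine Sym2.ind (fun x y => ?_) e
  rw [SimpleGraph.mk'_mem_incidenceSet_iff, Set.mem_insert_iff, Finset.coe_image,
    Finset.coe_univ, Set.image_univ, Set.mem_range]
  constructor
  · rintro ⟨hadj, h | h⟩ <;> subst h
    · rcases y with b | j'
      · rw [adj_inl_inl] at hadj
        left
        rw [pe, Sym2.eq_iff]
        rcases hadj with hb | hb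
        · exfalso; simp at hb; omega
        · right
          constructor <;> (congr 1 <;> exact Fin.ext (by simp at *; omega))
      · exact Or.inr ⟨j', rfl⟩
    · rcases x with a | j'
      · rw [adj_inl_inl] at hadj
        left
        rw [pe, Sym2.eq_iff]
        rcases hadj with hb | hb
        · left
          constructor <;> (congr 1 <;> exact Fin.ext (by simp at *; omega))
        · exfalso; simp at hb; omega
      · rw [adj_inr_inl] at hadj
        right
        refine ⟨j', ?_⟩
        rw [se, Sym2.eq_iff]
        right
        exact ⟨rfl, by congr 1 <;> exact Fin.ext (by simp [hadj])⟩
  · rintro (h | ⟨j, h⟩)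
    · rw [pe, Sym2.eq_iff] at h
      rcases h with ⟨rfl, rfl⟩ | ⟨rfl, rfl⟩
      · refine ⟨(adj_inl_inl p t).mpr (by simp; try omega), Or.inr ?_⟩
        congr 1 <;> exact Fin.ext (by simp; try omega)
      · refine ⟨(adj_inl_inl p t).mpr (by simp; try omega), Or.inl ?_⟩
        congr 1 <;> exact Fin.ext (by simp; try omega)
    · rw [se, Sym2.eq_iff] at h
      rcases h with ⟨rfl, rfl⟩ | ⟨rfl, rfl⟩
      · exact ⟨(adj_inl_inr p t).mpr (by simp), Or.inl rfl⟩
      · exact ⟨(adj_inr_inl p t).mpr (by simp), Or.inr rfl⟩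

lemma vsum_center (hp : 0 < p) (f : Sym2 (V p t) → ℕ) :
    vertexSum (coconutTree (p+1) t) f (inl (Fin.last p)) =
      f (pe p t ⟨p - 1, by omega⟩) + ∑ j : Fin t, f (se p t j) := by
  rw [vertexSum, inc_center p t hp, finsum_mem_insert, finsum_mem_coe_finset,
    Finset.sum_image (fun x _ y _ h => se_inj p t h)]
  · intro h
    rw [Finset.mem_coe, Finset.mem_image] at h
    obtain ⟨j, -, hj⟩ := h
    exact pe_ne_se p t _ j hj.symm
  · exact (Finset.univ.image (se p t)).finite_toSet

lemma lab_bounds {p i : ℕ} (h1 : 1 ≤ i) (h2 : i ≤ p) : 1 ≤ lab p i ∧ lab p i ≤ p := by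
  unfold lab; split <;> omega

lemma lab_inj {p i i' : ℕ} (h1 : 1 ≤ i) (h2 : i ≤ p) (h1' : 1 ≤ i') (h2' : i' ≤ p)
    (h : lab p i = lab p i') : i = i' := by
  unfold lab at h; split_ifs at h <;> omega

lemma lab_one {p : ℕ} (hp : 1 ≤ p) : lab p 1 = p := by unfold lab; norm_num

lemma lab_sum_odd {p c : ℕ} (h1 : 1 ≤ c) (h2 : c < p) (hodd : c % 2 = 1) :
    lab p c + lab p (c+1) = p + 1 := by
  unfold lab; split_ifs <;> omega

lemma lab_sum_even {p c : ℕ} (h1 : 1 ≤ c) (h2 : c < p) (heven : c % 2 = 0) :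
    lab p c + lab p (c+1) = p := by
  unfold lab; split_ifs <;> omega

lemma lab_surj {p v : ℕ} (h1 : 1 ≤ v) (h2 : v ≤ p) :
    ∃ i, 1 ≤ i ∧ i ≤ p ∧ lab p i = v := by
  refine ⟨if 2*v ≤ p then 2*v else 2*(p-v)+1, ?_⟩
  unfold lab; split_ifs <;> omega

def Cval : ℕ := lab p p + ∑ j : Fin t, (p + 1 + (j:ℕ))

lemma Cval_gt (hp : 1 ≤ p) (ht : 1 ≤ t) : p + t < Cval p t := by
  have h1 : (Finset.univ : Finset (Fin t)).card • (p+1) ≤ ∑ j : Fin t, (p + 1 + (j:ℕ)) :=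
    Finset.card_nsmul_le_sum _ _ _ (fun j _ => by omega)
  simp only [Finset.card_univ, Fintype.card_fin, smul_eq_mul] at h1
  have h2 := (lab_bounds hp (le_refl p)).1
  have h3 : t * (p+1) ≥ p + t := by nlinarith
  unfold Cval
  omega

lemma vsum_fl_v0 (hp : 0 < p) :
    vertexSum (coconutTree (p+1) t) (fl p t) (inl 0) = p := by
  rw [vsum_v0 p t hp, fl_pe]
  simpa using lab_one hp

lemma vsum_fl_leaf (j : Fin t) :
    vertexSum (coconutTree (p+1) t) (fl p t) (inr j) = p + 1 + (j:ℕ) := by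
  rw [vsum_leaf, fl_se]

lemma vsum_fl_mid (c : Fin (p+1)) (h0 : 0 < (c:ℕ)) (hc : (c:ℕ) < p) :
    vertexSum (coconutTree (p+1) t) (fl p t) (inl c) =
      if (c:ℕ) % 2 = 1 then p + 1 else p := by
  rw [vsum_mid p t c h0 hc, fl_pe, fl_pe]
  have h : (c:ℕ) - 1 + 1 = (c:ℕ) := by omega
  simp only [h]
  rcases Nat.even_or_odd (c:ℕ) with he | ho
  · have h2 : (c:ℕ) % 2 = 0 := Nat.even_iff.mp he
    rw [if_neg (by omega), lab_sum_even h0 hc h2]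
  · have h2 : (c:ℕ) % 2 = 1 := Nat.odd_iff.mp ho
    rw [if_pos h2, lab_sum_odd h0 hc h2]

lemma vsum_fl_center (hp : 0 < p) :
    vertexSum (coconutTree (p+1) t) (fl p t) (inl (Fin.last p)) = Cval p t := by
  rw [vsum_center p t hp, fl_pe]
  have h : p - 1 + 1 = p := by omega
  simp only [h, Cval]
  congr 1
  exact Finset.sum_congr rfl (fun j _ => fl_se p t j)

lemma bijOn_fl (hp : 1 ≤ p) :
    Set.BijOn (fl p t) (coconutTree (p+1) t).edgeSet (Set.Icc 1 (p+t)) := by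
  rw [edgeSet_eq]
  refine ⟨?_, ?_, ?_⟩
  · intro e he
    rw [Finset.mem_coe, mem_E] at he
    rcases he with ⟨i, rfl⟩ | ⟨j, rfl⟩
    · rw [fl_pe]
      have := lab_bounds (p := p) (i := (i:ℕ)+1) (by omega) (by omega)
      exact ⟨this.1, by omega⟩
    · rw [fl_se]
      have := j.isLt
      exact ⟨by omega, by omega⟩
  · intro e he e' he' hf
    rw [Finset.mem_coe, mem_E] at he he'
    rcases he with ⟨i, rfl⟩ | ⟨j, rfl⟩ <;> rcases he' with ⟨i', rfl⟩ | ⟨j', rfl⟩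
    · rw [fl_pe, fl_pe] at hf
      have h := lab_inj (p := p) (by omega) (by omega : (i:ℕ)+1 ≤ p) (by omega)
        (by omega : (i':ℕ)+1 ≤ p) hf
      exact congrArg (pe p t) (Fin.ext (by omega))
    · rw [fl_pe, fl_se] at hf
      have := lab_bounds (p := p) (i := (i:ℕ)+1) (by omega) (by omega)
      omega
    · rw [fl_se, fl_pe] at hf
      have := lab_bounds (p := p) (i := (i':ℕ)+1) (by omega) (by omega)
      omega
    · rw [fl_se, fl_se] at hf
      exact congrArg (se p t) (Fin.ext (by omega))
  · intro v hv
    rw [Set.mem_Icc] at hv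
    by_cases hvp : v ≤ p
    · obtain ⟨i, hi1, hi2, hi3⟩ := lab_surj hv.1 hvp
      refine ⟨pe p t ⟨i - 1, by omega⟩, ?_, ?_⟩
      · rw [Finset.mem_coe, mem_E]; exact Or.inl ⟨_, rfl⟩
      · rw [fl_pe]
        simp only []
        have : (i - 1) + 1 = i := by omega
        rw [this, hi3]
    · refine ⟨se p t ⟨v - p - 1, by omega⟩, ?_, ?_⟩
      · rw [Finset.mem_coe, mem_E]; exact Or.inr ⟨_, rfl⟩
      · rw [fl_se]; simp only []; omega

lemma isLA_fl (hp : 1 ≤ p) (ht : 1 ≤ t) :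
    IsLocalAntimagic (coconutTree (p+1) t) (fl p t) := by
  have hC := Cval_gt p t hp ht
  constructor
  · rw [ncard_edgeSet]
    exact bijOn_fl p t hp
  · -- adjacent vertices have distinct sums
    have key : ∀ a b : Fin (p+1), (b:ℕ) = (a:ℕ) + 1 →
        vertexSum (coconutTree (p+1) t) (fl p t) (inl a) ≠
        vertexSum (coconutTree (p+1) t) (fl p t) (inl b) := by
      intro a b hb
      have hbpos : 0 < (b:ℕ) := by omega
      by_cases ha0 : (a:ℕ) = 0
      · have : a = 0 := Fin.ext (by simpa using ha0)
        subst this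
        rw [vsum_fl_v0 p t hp]
        by_cases hbp : (b:ℕ) = p
        · have : b = Fin.last p := Fin.ext (by simpa using hbp)
          rw [this, vsum_fl_center p t hp]
          omega
        · rw [vsum_fl_mid p t b hbpos (by omega)]
          split <;> omega
      · have hap : (a:ℕ) < p := by omega
        rw [vsum_fl_mid p t a (by omega) hap]
        by_cases hbp : (b:ℕ) = p
        · have : b = Fin.last p := Fin.ext (by simpa using hbp)
          rw [this, vsum_fl_center p t hp]
          split <;> omega
        · rw [vsum_fl_mid p t b hbpos (by omega)]
          rcases Nat.even_or_odd (a:ℕ) with he | ho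
          · have h2 : (a:ℕ) % 2 = 0 := Nat.even_iff.mp he
            rw [if_neg (by omega), if_pos (by omega)]
            omega
          · have h2 : (a:ℕ) % 2 = 1 := Nat.odd_iff.mp ho
            rw [if_pos h2, if_neg (by omega)]
            omega
    have keyC : ∀ (a : Fin (p+1)) (j : Fin t), (a:ℕ) = p →
        vertexSum (coconutTree (p+1) t) (fl p t) (inl a) ≠
        vertexSum (coconutTree (p+1) t) (fl p t) (inr j) := by
      intro a j hap
      have : a = Fin.last p := Fin.ext (by simpa using hap)
      subst this
      rw [vsum_fl_center p t hp, vsum_fl_leaf]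
      have := j.isLt
      omega
    rintro (a | j) (b | j') hadj
    · rw [adj_inl_inl] at hadj
      rcases hadj with hb | hb
      · exact key a b hb
      · exact (key b a hb).symm
    · exact keyC a j' ((adj_inl_inr p t).mp hadj)
    · exact (keyC b j ((adj_inr_inl p t).mp hadj)).symm
    · exact absurd hadj (adj_inr_inr p t)

lemma range_vsum_fl (hp : 1 ≤ p) (ht : 1 ≤ t) :
    Set.range (vertexSum (coconutTree (p+1) t) (fl p t)) =
      Set.Icc p (p+t) ∪ {Cval p t} := by
  ext x
  constructor
  · rintro ⟨v, rfl⟩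
    rcases v with c | j
    · by_cases hc0 : (c:ℕ) = 0
      · have : c = 0 := Fin.ext (by simpa using hc0)
        subst this
        rw [vsum_fl_v0 p t hp]
        exact Or.inl ⟨le_refl p, by omega⟩
      · by_cases hcp : (c:ℕ) = p
        · have : c = Fin.last p := Fin.ext (by simpa using hcp)
          subst this
          rw [vsum_fl_center p t hp]
          exact Or.inr rfl
        · rw [vsum_fl_mid p t c (by omega) (by omega)]
          have := c.isLt
          split <;> exact Or.inl ⟨by omega, by omega⟩
    · rw [vsum_fl_leaf]
      have := j.isLt
      exact Or.inl ⟨by omega, by omega⟩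
  · rintro (⟨h1, h2⟩ | h)
    · by_cases hxp : x = p
      · exact ⟨inl 0, by rw [vsum_fl_v0 p t hp, hxp]⟩
      · refine ⟨inr ⟨x - p - 1, by omega⟩, ?_⟩
        rw [vsum_fl_leaf]
        simp only []
        omega
    · rw [Set.mem_singleton_iff] at h
      subst h
      exact ⟨inl (Fin.last p), vsum_fl_center p t hp⟩

lemma colorCount_fl (hp : 1 ≤ p) (ht : 1 ≤ t) :
    colorCount (coconutTree (p+1) t) (fl p t) = t + 2 := by
  rw [colorCount, range_vsum_fl p t hp ht]
  have hC := Cval_gt p t hp ht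
  rw [Set.union_singleton, Set.ncard_insert_of_notMem (by rw [Set.mem_Icc]; omega)
    (Set.finite_Icc _ _), ← Finset.coe_Icc, Set.ncard_coe_finset, Nat.card_Icc]
  omega

lemma pe_mem_edgeSet (i : Fin p) : pe p t i ∈ (coconutTree (p+1) t).edgeSet := by
  rw [edgeSet_eq, Finset.mem_coe, mem_E]; exact Or.inl ⟨i, rfl⟩

lemma se_mem_edgeSet (j : Fin t) : se p t j ∈ (coconutTree (p+1) t).edgeSet := by
  rw [edgeSet_eq, Finset.mem_coe, mem_E]; exact Or.inr ⟨j, rfl⟩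

lemma lower_bound (hp : 1 ≤ p) (ht : 1 ≤ t) (f : Sym2 (V p t) → ℕ)
    (hf : IsLocalAntimagic (coconutTree (p+1) t) f) :
    t + 2 ≤ colorCount (coconutTree (p+1) t) f := by
  obtain ⟨hbij, -⟩ := hf
  rw [ncard_edgeSet] at hbij
  have hpos : ∀ e ∈ (coconutTree (p+1) t).edgeSet, 1 ≤ f e :=
    fun e he => (Set.mem_Icc.mp (hbij.1 he)).1
  have hinj := hbij.2.1
  set G := coconutTree (p+1) t with hG
  set L : Fin t → ℕ := fun j => f (se p t j) with hL
  have hLinj : Injective L := by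
    intro j j' h
    exact se_inj p t (hinj (se_mem_edgeSet p t j) (se_mem_edgeSet p t j') h)
  have hLpos : ∀ j, 1 ≤ L j := fun j => hpos _ (se_mem_edgeSet p t j)
  set X : ℕ := f (pe p t ⟨0, hp⟩) with hX
  have hXL : ∀ j, X ≠ L j := by
    intro j h
    exact pe_ne_se p t _ j (hinj (pe_mem_edgeSet p t _) (se_mem_edgeSet p t j) h)
  set C : ℕ := vertexSum G f (inl (Fin.last p)) with hC
  have hCeq : C = f (pe p t ⟨p - 1, by omega⟩) + ∑ j : Fin t, L j := vsum_center p t hp f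
  have hsumL : ∀ j, L j ≤ ∑ j' : Fin t, L j' :=
    fun j => Finset.single_le_sum (fun j' _ => Nat.zero_le (L j')) (Finset.mem_univ j)
  have hCL : ∀ j, L j < C := by
    intro j
    have := hpos _ (pe_mem_edgeSet p t ⟨p - 1, by omega⟩)
    have := hsumL j
    omega
  have hfinR : (Set.range (vertexSum G f)).Finite := Set.finite_range _
  have hsub_card : ∀ T : Finset ℕ, ↑T ⊆ Set.range (vertexSum G f) →
      T.card ≤ colorCount G f := by
    intro T hT
    rw [colorCount, ← Set.ncard_coe_finset]
    exact Set.ncard_le_ncard hT hfinR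
  have hLmem : ∀ j, L j ∈ Set.range (vertexSum G f) :=
    fun j => ⟨inr j, vsum_leaf p t f j⟩
  have hCmem : C ∈ Set.range (vertexSum G f) := ⟨inl (Fin.last p), rfl⟩
  have hXmem : X ∈ Set.range (vertexSum G f) := ⟨inl 0, vsum_v0 p t hp f⟩
  have hcardL : (Finset.univ.image L).card = t := by
    rw [Finset.card_image_of_injective _ hLinj, Finset.card_univ, Fintype.card_fin]
  by_cases hXC : X = C
  · -- then p ≥ 2 and the second path vertex gives a new color
    have hp2 : 2 ≤ p := by
      by_contra hcon
      have hp1 : p = 1 := by omega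
      have : (⟨p - 1, by omega⟩ : Fin p) = ⟨0, hp⟩ := Fin.ext (by omega)
      rw [this] at hCeq
      have := hsumL ⟨0, by omega⟩
      have := hLpos ⟨0, by omega⟩
      omega
    set Y : ℕ := vertexSum G f (inl (⟨1, by omega⟩ : Fin (p+1))) with hY
    have hYeq : Y = f (pe p t ⟨0, by omega⟩) + f (pe p t ⟨1, by omega⟩) := by
      rw [hY, vsum_mid p t _ (by simp) (by simp; omega)]
      congr 2
    have hYgt : C < Y := by
      have h1 : (⟨0, by omega⟩ : Fin p) = ⟨0, hp⟩ := rfl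
      have := hpos _ (pe_mem_edgeSet p t ⟨1, by omega⟩)
      rw [hYeq, h1]
      omega
    have hYmem : Y ∈ Set.range (vertexSum G f) := ⟨_, rfl⟩
    have hTsub : ↑(insert Y (insert C (Finset.univ.image L))) ⊆
        Set.range (vertexSum G f) := by
      intro x hx
      simp only [Finset.coe_insert, Set.mem_insert_iff, Finset.coe_image, Finset.coe_univ,
        Set.image_univ, Set.mem_range] at hx
      rcases hx with rfl | rfl | ⟨j, rfl⟩
      · exact hYmem
      · exact hCmem
      · exact hLmem j
    have hcard : (insert Y (insert C (Finset.univ.image L))).card = t + 2 := by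
      rw [Finset.card_insert_of_notMem, Finset.card_insert_of_notMem, hcardL]
      · intro hmem
        rw [Finset.mem_image] at hmem
        obtain ⟨j, -, hj⟩ := hmem
        have := hCL j; omega
      · intro hmem
        rw [Finset.mem_insert, Finset.mem_image] at hmem
        rcases hmem with h | ⟨j, -, hj⟩
        · omega
        · have := hCL j
          omega
    calc t + 2 = (insert Y (insert C (Finset.univ.image L))).card := hcard.symm
      _ ≤ _ := hsub_card _ hTsub
  · have hTsub : ↑(insert C (insert X (Finset.univ.image L))) ⊆
        Set.range (vertexSum G f) := by
      intro x hx
      simp only [Finset.coe_insert, Set.mem_insert_iff, Finset.coe_image, Finset.coe_univ,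
        Set.image_univ, Set.mem_range] at hx
      rcases hx with rfl | rfl | ⟨j, rfl⟩
      · exact hCmem
      · exact hXmem
      · exact hLmem j
    have hcard : (insert C (insert X (Finset.univ.image L))).card = t + 2 := by
      rw [Finset.card_insert_of_notMem, Finset.card_insert_of_notMem, hcardL]
      · intro hmem
        rw [Finset.mem_image] at hmem
        obtain ⟨j, -, hj⟩ := hmem
        exact hXL j hj.symm
      · intro hmem
        rw [Finset.mem_insert, Finset.mem_image] at hmem
        rcases hmem with h | ⟨j, -, hj⟩
        · exact hXC h.symm
        · have := hCL j
          omega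
    calc t + 2 = (insert C (insert X (Finset.univ.image L))).card := hcard.symm
      _ ≤ _ := hsub_card _ hTsub

lemma chiLA_coconut (hp : 1 ≤ p) (ht : 1 ≤ t) :
    chiLA (coconutTree (p+1) t) = t + 2 := by
  have hmem : (t + 2) ∈ {n | ∃ f, IsLocalAntimagic (coconutTree (p+1) t) f ∧
      colorCount (coconutTree (p+1) t) f = n} :=
    ⟨fl p t, isLA_fl p t hp ht, colorCount_fl p t hp ht⟩
  rw [chiLA]
  apply le_antisymm
  · exact Nat.sInf_le hmem
  · apply le_csInf ⟨_, hmem⟩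
    rintro b ⟨f, hf, rfl⟩
    exact lower_bound p t hp ht f hf

lemma reach_center : ∀ (c : Fin (p+1)),
    (coconutTree (p+1) t).Reachable (inl c) (inl (Fin.last p)) := by
  have key : ∀ d (c : Fin (p+1)), p - (c:ℕ) = d →
      (coconutTree (p+1) t).Reachable (inl c) (inl (Fin.last p)) := by
    intro d
    induction d with
    | zero =>
      intro c hc
      have hcv : c = Fin.last p := Fin.ext (by simp only [Fin.val_last]; omega)
      rw [hcv]
    | succ d ih =>
      intro c hc
      have hlt : (c:ℕ) < p := by omega
      have hadj : (coconutTree (p+1) t).Adj (inl c) (inl ⟨(c:ℕ)+1, by omega⟩) :=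
        (adj_inl_inl p t).mpr (Or.inl (by simp))
      exact hadj.reachable.trans (ih ⟨(c:ℕ)+1, by omega⟩ (by simp; omega))
  exact fun c => key (p - (c:ℕ)) c rfl

lemma coconut_connected : (coconutTree (p+1) t).Connected := by
  rw [SimpleGraph.connected_iff]
  refine ⟨?_, ⟨inl 0⟩⟩
  intro u v
  have h : ∀ w : V p t, (coconutTree (p+1) t).Reachable w (inl (Fin.last p)) := by
    rintro (c | j)
    · exact reach_center p t c
    · exact ((adj_inr_inl p t).mpr (by simp)).reachable
  exact (h u).trans (h v).symm

end CT

section Iso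

open SimpleGraph

variable {W X : Type*} {G : SimpleGraph W} {H : SimpleGraph X}

lemma iso_comp_id (φ : G ≃g H) : (⇑φ.symm ∘ ⇑φ) = id :=
  funext fun x => φ.symm_apply_apply x

lemma sym2_map_iso_inv (φ : G ≃g H) (z : Sym2 W) :
    Sym2.map ⇑φ.symm (Sym2.map ⇑φ z) = z := by
  rw [Sym2.map_map, iso_comp_id, Sym2.map_id, id]

lemma edge_bijOn (φ : G ≃g H) : Set.BijOn (Sym2.map ⇑φ) G.edgeSet H.edgeSet := by
  refine ⟨?_, ?_, ?_⟩
  · intro z hz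
    exact φ.map_mem_edgeSet_iff.mpr hz
  · exact (Sym2.map.injective φ.injective).injOn
  · intro z hz
    refine ⟨Sym2.map ⇑φ.symm z, ?_, sym2_map_iso_inv φ.symm z⟩
    exact φ.symm.map_mem_edgeSet_iff.mpr hz

lemma inc_bijOn (φ : G ≃g H) (v : W) :
    Set.BijOn (Sym2.map ⇑φ) (G.incidenceSet v) (H.incidenceSet (φ v)) := by
  refine ⟨?_, ?_, ?_⟩
  · rintro z ⟨hz, hv⟩
    exact ⟨φ.map_mem_edgeSet_iff.mpr hz, Sym2.mem_map.mpr ⟨v, hv, rfl⟩⟩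
  · exact (Sym2.map.injective φ.injective).injOn
  · rintro z ⟨hz, hv⟩
    refine ⟨Sym2.map ⇑φ.symm z, ⟨φ.symm.map_mem_edgeSet_iff.mpr hz, ?_⟩,
      sym2_map_iso_inv φ.symm z⟩
    exact Sym2.mem_map.mpr ⟨φ v, hv, φ.symm_apply_apply v⟩

lemma vsum_map (φ : G ≃g H) (g : Sym2 X → ℕ) (v : W) :
    vertexSum H g (φ v) = vertexSum G (g ∘ Sym2.map ⇑φ) v :=
  (finsum_mem_eq_of_bijOn (Sym2.map ⇑φ) (inc_bijOn φ v) (fun _ _ => rfl)).symm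

lemma isLA_transfer (φ : G ≃g H) (f : Sym2 W → ℕ) (hf : IsLocalAntimagic G f) :
    IsLocalAntimagic H (f ∘ Sym2.map ⇑φ.symm) := by
  obtain ⟨hbij, hadj⟩ := hf
  have hcomp : (f ∘ Sym2.map ⇑φ.symm) ∘ Sym2.map ⇑φ = f :=
    funext fun z => by simp only [Function.comp_apply, sym2_map_iso_inv φ z]
  have hncard : H.edgeSet.ncard = G.edgeSet.ncard := by
    rw [← (edge_bijOn φ).image_eq, Set.ncard_image_of_injective _
      (Sym2.map.injective φ.injective)]
  have key : ∀ w, vertexSum H (f ∘ Sym2.map ⇑φ.symm) w = vertexSum G f (φ.symm w) := by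
    intro w
    conv_lhs => rw [show w = φ (φ.symm w) from (φ.apply_symm_apply w).symm]
    rw [vsum_map φ, hcomp]
  constructor
  · rw [hncard]
    exact hbij.comp (edge_bijOn φ.symm)
  · intro u w huw
    rw [key u, key w]
    exact hadj _ _ (φ.symm.map_adj_iff.mpr huw)

lemma colorCount_transfer (φ : G ≃g H) (f : Sym2 W → ℕ) :
    colorCount H (f ∘ Sym2.map ⇑φ.symm) = colorCount G f := by
  have hcomp : (f ∘ Sym2.map ⇑φ.symm) ∘ Sym2.map ⇑φ = f :=
    funext fun z => by simp only [Function.comp_apply, sym2_map_iso_inv φ z]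
  have key : ∀ w, vertexSum H (f ∘ Sym2.map ⇑φ.symm) w = vertexSum G f (φ.symm w) := by
    intro w
    conv_lhs => rw [show w = φ (φ.symm w) from (φ.apply_symm_apply w).symm]
    rw [vsum_map φ, hcomp]
  rw [colorCount, colorCount]
  congr 1
  ext x
  constructor
  · rintro ⟨w, rfl⟩
    exact ⟨φ.symm w, (key w).symm⟩
  · rintro ⟨v, rfl⟩
    exact ⟨φ v, by rw [key (φ v), φ.symm_apply_apply]⟩

lemma chiLA_iso (φ : G ≃g H) : chiLA G = chiLA H := by
  rw [chiLA, chiLA]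
  congr 1
  ext n
  constructor
  · rintro ⟨f, hf, rfl⟩
    exact ⟨f ∘ Sym2.map ⇑φ.symm, isLA_transfer φ f hf, colorCount_transfer φ f⟩
  · rintro ⟨g, hg, rfl⟩
    exact ⟨g ∘ Sym2.map ⇑φ.symm.symm, isLA_transfer φ.symm g hg,
      colorCount_transfer φ.symm g⟩

end Iso

end Aux

theorem exists_graph_chiLA_n_sub_k (n k : ℕ) (h : k + 3 ≤ n) :
    chiLA (coconutTree (k + 2) (n - k - 2)) = n - k ∧
    ∃ (G : SimpleGraph (Fin n)), G.Connected ∧ chiLA G = n - k := by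
  have hp : 1 ≤ k + 1 := by omega
  have ht : 1 ≤ n - k - 2 := by omega
  have h1 : chiLA (coconutTree ((k+1)+1) (n - k - 2)) = (n - k - 2) + 2 :=
    CT.chiLA_coconut (k+1) (n-k-2) hp ht
  have h2 : chiLA (coconutTree (k+2) (n - k - 2)) = n - k := by
    have heq : (n - k - 2) + 2 = n - k := by omega
    rw [← heq]
    exact h1
  refine ⟨h2, ?_⟩
  have hcard : (k + 2) + (n - k - 2) = n := by omega
  let e : (Fin (k+2) ⊕ Fin (n-k-2)) ≃ Fin n :=
    finSumFinEquiv.trans (finCongr hcard)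
  refine ⟨SimpleGraph.map e.toEmbedding (coconutTree (k+2) (n-k-2)), ?_, ?_⟩
  · have hconn : (coconutTree ((k+1)+1) (n-k-2)).Connected :=
      CT.coconut_connected (k+1) (n-k-2)
    exact (SimpleGraph.Iso.map e (coconutTree (k+2) (n-k-2))).connected_iff.mp hconn
  · refine (chiLA_iso (SimpleGraph.Iso.map e (coconutTree (k+2) (n-k-2)))).symm.trans ?_
    exact h2
end

section
/- There is no graph G of order 3 or 4 with χ_la(G) = 2. -/
open scoped BigOperators

section Aux
variable {V : Type} [Fintype V] {G : SimpleGraph V} {f : Sym2 V → ℕ}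

lemma mem_edge_exists {e : Sym2 V} (he : e ∈ G.edgeSet) :
    ∃ u v, G.Adj u v ∧ e = s(u, v) := by
  induction e using Sym2.ind with
  | _ u v => exact ⟨u, v, he, rfl⟩

lemma star_false (hG : G.Connected) (hcard : 3 ≤ Fintype.card V)
    (hinj : Set.InjOn f G.edgeSet)
    (hadj : ∀ u v, G.Adj u v → vertexSum G f u ≠ vertexSum G f v)
    (c : V) (p : ℕ) (hp : ∀ v, v ≠ c → vertexSum G f v = p) : False := by
  classical
  have hstep1 : ∀ u v, G.Adj u v → u = c ∨ v = c := by
    intro u v huv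
    by_contra hcon
    push_neg at hcon
    exact hadj u v huv (by rw [hp u hcon.1, hp v hcon.2])
  have hstep2 : ∀ w, w ≠ c → G.Adj c w := by
    intro w hw
    obtain ⟨W⟩ := hG.preconnected w c
    cases W with
    | nil => exact absurd rfl hw
    | cons h _ =>
      rcases hstep1 _ _ h with h1 | h1
      · exact absurd h1 hw
      · subst h1; exact h.symm
  have hstep3 : ∀ w, w ≠ c → G.incidenceSet w = {s(c, w)} := by
    intro w hw
    apply Set.Subset.antisymm
    · rintro e ⟨he, hwe⟩
      obtain ⟨u, v, huv, rfl⟩ := mem_edge_exists he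
      rw [Sym2.mem_iff] at hwe
      rcases hstep1 u v huv with h1 | h1 <;> subst h1
      · rcases hwe with h2 | h2
        · exact absurd h2 hw
        · subst h2; rfl
      · rcases hwe with h2 | h2
        · subst h2; exact Sym2.eq_swap ▸ rfl
        · exact absurd h2 hw
    · intro e he
      rw [Set.mem_singleton_iff] at he
      subst he
      exact ⟨(hstep2 w hw), Sym2.mem_mk_right c w⟩
  have hvs : ∀ w, w ≠ c → f s(c, w) = p := by
    intro w hw
    have := hp w hw
    rwa [vertexSum, hstep3 w hw, finsum_mem_singleton] at this
  have h2 : 1 < (Finset.univ.erase c).card := by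
    have := Finset.card_erase_of_mem (Finset.mem_univ c)
    rw [Finset.card_univ] at this
    omega
  obtain ⟨w1, hw1, w2, hw2, hne⟩ := Finset.one_lt_card.mp h2
  have hw1c : w1 ≠ c := Finset.ne_of_mem_erase hw1
  have hw2c : w2 ≠ c := Finset.ne_of_mem_erase hw2
  have heq : s(c, w1) = s(c, w2) := by
    apply hinj (G.mem_edgeSet.mpr (hstep2 w1 hw1c)) (G.mem_edgeSet.mpr (hstep2 w2 hw2c))
    rw [hvs w1 hw1c, hvs w2 hw2c]
  rw [Sym2.congr_right] at heq
  exact hne heq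

lemma pair_total
    (hadj : ∀ u v, G.Adj u v → vertexSum G f u ≠ vertexSum G f v)
    (x y : V) (hxy : x ≠ y) (t : ℕ) (hx : vertexSum G f x = t) (hy : vertexSum G f y = t)
    (hcover : ∀ e ∈ G.edgeSet, x ∈ e ∨ y ∈ e) :
    t + t = ∑ᶠ e ∈ G.edgeSet, f e := by
  have hnadj : ¬ G.Adj x y := fun h => hadj x y h (hx.trans hy.symm)
  have hdisj : Disjoint (G.incidenceSet x) (G.incidenceSet y) := by
    rw [Set.disjoint_left]
    rintro e ⟨he, hxe⟩ ⟨_, hye⟩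
    have heq := (Sym2.mem_and_mem_iff hxy).mp ⟨hxe, hye⟩
    subst heq
    exact hnadj (G.mem_edgeSet.mp he)
  have hunion : G.incidenceSet x ∪ G.incidenceSet y = G.edgeSet := by
    apply Set.Subset.antisymm
    · rintro e (⟨he, _⟩ | ⟨he, _⟩) <;> exact he
    · intro e he
      rcases hcover e he with h | h
      · exact Or.inl ⟨he, h⟩
      · exact Or.inr ⟨he, h⟩
    
  calc t + t = vertexSum G f x + vertexSum G f y := by rw [hx, hy]
    _ = ∑ᶠ e ∈ (G.incidenceSet x ∪ G.incidenceSet y), f e :=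
        (finsum_mem_union hdisj (Set.toFinite _) (Set.toFinite _)).symm
    _ = ∑ᶠ e ∈ G.edgeSet, f e := by rw [hunion]

end Aux

theorem no_order_three_four_chiLA_two (V : Type) [Fintype V] (G : SimpleGraph V)
    (hG : G.Connected) (hV : Fintype.card V = 3 ∨ Fintype.card V = 4) :
    chiLA G ≠ 2 := by
  classical
  intro h
  rw [chiLA] at h
  have hne : { n | ∃ f, IsLocalAntimagic G f ∧ colorCount G f = n }.Nonempty := by
    by_contra hemp
    rw [Set.not_nonempty_iff_eq_empty] at hemp
    rw [hemp, Nat.sInf_empty] at h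
    exact two_ne_zero h.symm
  have h2 := Nat.sInf_mem hne
  rw [h] at h2
  obtain ⟨f, ⟨hbij, hadj⟩, hcc⟩ := h2
  obtain ⟨a, b, hab, hr⟩ := Set.ncard_eq_two.mp hcc
  have hmem : ∀ v, vertexSum G f v = a ∨ vertexSum G f v = b := by
    intro v
    have hv : vertexSum G f v ∈ Set.range (vertexSum G f) := ⟨v, rfl⟩
    rw [hr] at hv
    simpa using hv
  set A := Finset.univ.filter (fun v => vertexSum G f v = a) with hA
  set B := Finset.univ.filter (fun v => vertexSum G f v = b) with hB
  have hAmem : ∀ v, v ∈ A ↔ vertexSum G f v = a := by intro v; simp [hA]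
  have hBmem : ∀ v, v ∈ B ↔ vertexSum G f v = b := by intro v; simp [hB]
  have hUnion : A ∪ B = Finset.univ := by
    apply Finset.eq_univ_of_forall
    intro v
    rcases hmem v with hv | hv
    · exact Finset.mem_union_left _ ((hAmem v).mpr hv)
    · exact Finset.mem_union_right _ ((hBmem v).mpr hv)
  have hdisjAB : Disjoint A B := by
    rw [Finset.disjoint_left]
    intro v hvA hvB
    exact hab (((hAmem v).mp hvA).symm.trans ((hBmem v).mp hvB))
  have hcards : A.card + B.card = Fintype.card V := by
    rw [← Finset.card_union_of_disjoint hdisjAB, hUnion, Finset.card_univ]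
  have hAne : A.Nonempty := by
    have ha : a ∈ Set.range (vertexSum G f) := by rw [hr]; exact Set.mem_insert a {b}
    obtain ⟨v, hv⟩ := ha
    exact ⟨v, (hAmem v).mpr hv⟩
  have hBne : B.Nonempty := by
    have hb : b ∈ Set.range (vertexSum G f) := by rw [hr]; exact Set.mem_insert_of_mem a rfl
    obtain ⟨v, hv⟩ := hb
    exact ⟨v, (hBmem v).mpr hv⟩
  have hc3 : 3 ≤ Fintype.card V := by rcases hV with h' | h' <;> omega
  have hA1 := hAne.card_pos
  have hB1 := hBne.card_pos
  have hsplit : A.card = 1 ∨ B.card = 1 ∨ (A.card = 2 ∧ B.card = 2) := by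
    rcases hV with h' | h' <;> omega
  -- helper for the singleton cases
  have starapp : ∀ (c : V) (q : ℕ), (∀ v, v ≠ c → vertexSum G f v = q) → False := fun c q hq =>
    star_false hG hc3 hbij.injOn hadj c q hq
  rcases hsplit with h1 | h1 | ⟨h1, h1'⟩
  · obtain ⟨c, hc⟩ := Finset.card_eq_one.mp h1
    apply starapp c b
    intro v hv
    have hvA : v ∉ A := by rw [hc]; simpa using hv
    rcases hmem v with hva | hvb
    · exact absurd ((hAmem v).mpr hva) hvA
    · exact hvb
  · obtain ⟨c, hc⟩ := Finset.card_eq_one.mp h1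
    apply starapp c a
    intro v hv
    have hvB : v ∉ B := by rw [hc]; simpa using hv
    rcases hmem v with hva | hvb
    · exact hva
    · exact absurd ((hBmem v).mpr hvb) hvB
  · -- (2,2) case
    obtain ⟨x, y, hxy, hAeq⟩ := Finset.card_eq_two.mp h1
    obtain ⟨z, w, hzw, hBeq⟩ := Finset.card_eq_two.mp h1'
    have hcov : ∀ (s : Finset V) (q : ℕ), (∀ v, v ∉ s → vertexSum G f v = q) →
        ∀ e ∈ G.edgeSet, ∃ u ∈ s, u ∈ e := by
      intro s q hq e he
      obtain ⟨u, v, huv, rfl⟩ := mem_edge_exists he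
      by_cases hu : u ∈ s
      · exact ⟨u, hu, Sym2.mem_mk_left u v⟩
      by_cases hv : v ∈ s
      · exact ⟨v, hv, Sym2.mem_mk_right u v⟩
      exact absurd ((hq u hu).trans (hq v hv).symm) (hadj u v huv)
    have hnotA : ∀ v, v ∉ A → vertexSum G f v = b := by
      intro v hv
      rcases hmem v with hva | hvb
      · exact absurd ((hAmem v).mpr hva) hv
      · exact hvb
    have hnotB : ∀ v, v ∉ B → vertexSum G f v = a := by
      intro v hv
      rcases hmem v with hva | hvb
      · exact hva
      · exact absurd ((hBmem v).mpr hvb) hv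
    have hcovA : ∀ e ∈ G.edgeSet, x ∈ e ∨ y ∈ e := by
      intro e he
      obtain ⟨u, hu, hue⟩ := hcov A b hnotA e he
      rw [hAeq, Finset.mem_insert, Finset.mem_singleton] at hu
      rcases hu with rfl | rfl
      · exact Or.inl hue
      · exact Or.inr hue
    have hcovB : ∀ e ∈ G.edgeSet, z ∈ e ∨ w ∈ e := by
      intro e he
      obtain ⟨u, hu, hue⟩ := hcov B a hnotB e he
      rw [hBeq, Finset.mem_insert, Finset.mem_singleton] at hu
      rcases hu with rfl | rfl
      · exact Or.inl hue
      · exact Or.inr hue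
    have hx : vertexSum G f x = a := (hAmem x).mp (by rw [hAeq]; exact Finset.mem_insert_self x {y})
    have hy : vertexSum G f y = a := (hAmem y).mp (by rw [hAeq]; simp)
    have hz : vertexSum G f z = b := (hBmem z).mp (by rw [hBeq]; exact Finset.mem_insert_self z {w})
    have hw : vertexSum G f w = b := (hBmem w).mp (by rw [hBeq]; simp)
    have tA := pair_total hadj x y hxy a hx hy hcovA
    have tB := pair_total hadj z w hzw b hz hw hcovB
    exact hab (by omega)
end

section
/- Let G be a connected graph of size q admitting a local antimagic labeling f with exactly two distinct induced vertex sums x < y, attained by X and Y vertices respectively. Then G is bipartite with parts of sizes X and Y, X > Y, and xX = yY = q(q+1)/2. -/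
open scoped BigOperators

theorem two_color_local_antimagic {V : Type*} [Fintype V] (G : SimpleGraph V)
    (hG : G.Connected) (q : ℕ) (hq : G.edgeSet.ncard = q)
    (f : Sym2 V → ℕ) (hf : IsLocalAntimagic G f) (x y : ℕ) (hxy : x < y)
    (hall : ∀ v : V, vertexSum G f v = x ∨ vertexSum G f v = y)
    (hx : ∃ v, vertexSum G f v = x) (hy : ∃ v, vertexSum G f v = y)
    (X Y : ℕ) (hX : {v : V | vertexSum G f v = x}.ncard = X)
    (hY : {v : V | vertexSum G f v = y}.ncard = Y) :
    G.Colorable 2 ∧ Y < X ∧ x * X = q * (q + 1) / 2 ∧ y * Y = q * (q + 1) / 2 := by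
  classical
  obtain ⟨hbij, hadj⟩ := hf
  -- rule out the edgeless case
  have hq0 : q ≠ 0 := by
    intro h0
    have hemp : G.edgeSet = ∅ :=
      (Set.ncard_eq_zero (Set.toFinite _)).mp (by omega)
    have hbot : G = ⊥ := SimpleGraph.edgeSet_eq_empty.mp hemp
    obtain ⟨v, hv⟩ := hx
    obtain ⟨w, hw⟩ := hy
    have hr : G.Reachable v w := hG.preconnected v w
    rw [hbot, SimpleGraph.reachable_bot] at hr
    rw [hr, hw] at hv
    omega
  have hqE : G.edgeFinset.card = q := by
    rw [← hq, ← SimpleGraph.coe_edgeFinset, Set.ncard_coe_finset]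
  -- vertexSum as a Finset sum
  have hVS : ∀ v : V, vertexSum G f v = ∑ e ∈ G.edgeFinset, if v ∈ e then f e else 0 := by
    intro v
    rw [vertexSum, ← Finset.sum_filter, ← finsum_mem_coe_finset]
    congr 1
    ext e
    simp [SimpleGraph.incidenceSet, and_comm]
  -- the 2-coloring
  have hcol : G.Colorable 2 := by
    refine ⟨SimpleGraph.Coloring.mk (fun v => if vertexSum G f v = x then 0 else 1) ?_⟩
    intro u v huv h
    have hne := hadj u v huv
    rcases hall u with hu | hu <;> rcases hall v with hv | hv <;>
      simp [hu, hv, hxy.ne, hxy.ne'] at h hne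
  set A := Finset.univ.filter (fun v => vertexSum G f v = x) with hAdef
  set B := Finset.univ.filter (fun v => vertexSum G f v = y) with hBdef
  have hXA : A.card = X := by
    rw [← hX, ← Set.ncard_coe_finset]
    congr 1
    ext v
    simp [hAdef]
  have hYB : B.card = Y := by
    rw [← hY, ← Set.ncard_coe_finset]
    congr 1
    ext v
    simp [hBdef]
  -- each edge has exactly one endpoint in A and one in B
  have key : ∀ e ∈ G.edgeFinset, (A.filter (fun v => v ∈ e)).card = 1 ∧
      (B.filter (fun v => v ∈ e)).card = 1 := by
    intro e he
    induction e with
    | _ u w =>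
      rw [SimpleGraph.mem_edgeFinset, SimpleGraph.mem_edgeSet] at he
      have hne := hadj u w he
      have hxny : x ≠ y := Nat.ne_of_lt hxy
      rcases hall u with hu | hu <;> rcases hall w with hw | hw
      · exact absurd (hu.trans hw.symm) hne
      · constructor
        · have : A.filter (fun v => v ∈ (s(u, w) : Sym2 V)) = {u} := by
            ext v
            simp only [hAdef, Finset.mem_filter, Finset.mem_univ, true_and, Sym2.mem_iff,
              Finset.mem_singleton]
            constructor
            · rintro ⟨hv, rfl | rfl⟩
              · rfl
              · exact absurd hv (by rw [hw]; omega)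
            · rintro rfl; exact ⟨hu, Or.inl rfl⟩
          rw [this, Finset.card_singleton]
        · have : B.filter (fun v => v ∈ (s(u, w) : Sym2 V)) = {w} := by
            ext v
            simp only [hBdef, Finset.mem_filter, Finset.mem_univ, true_and, Sym2.mem_iff,
              Finset.mem_singleton]
            constructor
            · rintro ⟨hv, rfl | rfl⟩
              · exact absurd hv (by rw [hu]; omega)
              · rfl
            · rintro rfl; exact ⟨hw, Or.inr rfl⟩
          rw [this, Finset.card_singleton]
      · constructor
        · have : A.filter (fun v => v ∈ (s(u, w) : Sym2 V)) = {w} := by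
            ext v
            simp only [hAdef, Finset.mem_filter, Finset.mem_univ, true_and, Sym2.mem_iff,
              Finset.mem_singleton]
            constructor
            · rintro ⟨hv, rfl | rfl⟩
              · exact absurd hv (by rw [hu]; omega)
              · rfl
            · rintro rfl; exact ⟨hw, Or.inr rfl⟩
          rw [this, Finset.card_singleton]
        · have : B.filter (fun v => v ∈ (s(u, w) : Sym2 V)) = {u} := by
            ext v
            simp only [hBdef, Finset.mem_filter, Finset.mem_univ, true_and, Sym2.mem_iff,
              Finset.mem_singleton]
            constructor
            · rintro ⟨hv, rfl | rfl⟩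
              · rfl
              · exact absurd hv (by rw [hw]; omega)
            · rintro rfl; exact ⟨hu, Or.inl rfl⟩
          rw [this, Finset.card_singleton]
      · exact absurd (hu.trans hw.symm) hne
  -- the value of the total label sum
  have hsum : ∑ e ∈ G.edgeFinset, f e = ∑ k ∈ Finset.Icc 1 q, k := by
    apply Finset.sum_bij (fun e _ => f e)
    · intro e he
      have := hbij.mapsTo (SimpleGraph.mem_edgeFinset.mp he)
      rw [hq] at this
      simpa [Finset.mem_Icc] using this
    · intro a ha b hb h
      exact hbij.injOn (SimpleGraph.mem_edgeFinset.mp ha) (SimpleGraph.mem_edgeFinset.mp hb) h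
    · intro k hk
      have hk' : k ∈ Set.Icc 1 G.edgeSet.ncard := by
        rw [hq]; simpa [Finset.mem_Icc] using hk
      obtain ⟨e, he, hfe⟩ := hbij.surjOn hk'
      exact ⟨e, SimpleGraph.mem_edgeFinset.mpr he, hfe⟩
    · intro e he; rfl
  have hgauss : ∑ k ∈ Finset.Icc 1 q, k = q * (q + 1) / 2 := by
    have h1 : Finset.range (q + 1) = insert 0 (Finset.Icc 1 q) := by
      ext k
      simp only [Finset.mem_range, Finset.mem_insert, Finset.mem_Icc]
      omega
    have h2 : ∑ k ∈ Finset.range (q + 1), k = (q + 1) * q / 2 := by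
      simpa using Finset.sum_range_id (q + 1)
    rw [h1, Finset.sum_insert (by simp), Nat.zero_add] at h2
    rw [h2, Nat.mul_comm]
  -- the one-sided double counting
  have hpart : ∀ (C : Finset V) (c : ℕ), (∀ v ∈ C, vertexSum G f v = c) →
      (∀ e ∈ G.edgeFinset, (C.filter (fun v => v ∈ e)).card = 1) →
      c * C.card = ∑ e ∈ G.edgeFinset, f e := by
    intro C c hc h1
    have : ∑ v ∈ C, vertexSum G f v = ∑ e ∈ G.edgeFinset, f e := by
      calc ∑ v ∈ C, vertexSum G f v
          = ∑ v ∈ C, ∑ e ∈ G.edgeFinset, if v ∈ e then f e else 0 := by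
            exact Finset.sum_congr rfl fun v _ => hVS v
        _ = ∑ e ∈ G.edgeFinset, ∑ v ∈ C, if v ∈ e then f e else 0 := Finset.sum_comm
        _ = ∑ e ∈ G.edgeFinset, (C.filter (fun v => v ∈ e)).card * f e := by
            refine Finset.sum_congr rfl fun e _ => ?_
            rw [← Finset.sum_filter, Finset.sum_const, smul_eq_mul]
        _ = ∑ e ∈ G.edgeFinset, f e := by
            refine Finset.sum_congr rfl fun e he => ?_
            rw [h1 e he, one_mul]
    rw [← this]
    rw [Finset.sum_congr rfl hc, Finset.sum_const, smul_eq_mul, Nat.mul_comm]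
  have hxX : x * X = ∑ e ∈ G.edgeFinset, f e := by
    rw [← hXA]
    exact hpart A x (fun v hv => (Finset.mem_filter.mp hv).2) (fun e he => (key e he).1)
  have hyY : y * Y = ∑ e ∈ G.edgeFinset, f e := by
    rw [← hYB]
    exact hpart B y (fun v hv => (Finset.mem_filter.mp hv).2) (fun e he => (key e he).2)
  -- positivity of the total sum
  have hpos : 0 < ∑ e ∈ G.edgeFinset, f e := by
    rw [hsum]
    have : (1 : ℕ) ∈ Finset.Icc 1 q := by
      rw [Finset.mem_Icc]; omega
    exact lt_of_lt_of_le Nat.one_pos (Finset.single_le_sum (fun k _ => Nat.zero_le k) this)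
  have hXpos : 0 < X := by
    rcases Nat.eq_zero_or_pos X with h | h
    · rw [h, Nat.mul_zero] at hxX; omega
    · exact h
  have hYX : Y < X := by
    by_contra h
    push_neg at h
    have : x * X < y * Y := by
      calc x * X < y * X := Nat.mul_lt_mul_of_lt_of_le hxy le_rfl hXpos
        _ ≤ y * Y := Nat.mul_le_mul_left y h
    omega
  exact ⟨hcol, hYX, by rw [hxX, hsum, hgauss], by rw [hyY, hsum, hgauss]⟩
end

section
/- For every integer p ≥ 3, χ_la(K_{p,p}) = 3. -/
open scoped BigOperators

section Aux
open Finset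

abbrev Vp (p : ℕ) := Sum (Fin p) (Fin p)
abbrev Gp (p : ℕ) := completeBipartiteGraph (Fin p) (Fin p)

lemma incidence_inl (p : ℕ) (i : Fin p) :
    (Gp p).incidenceSet (Sum.inl i) =
      ↑(Finset.image (fun j : Fin p => s(Sum.inl i, Sum.inr j)) Finset.univ) := by
  ext e
  induction e with
  | _ x y =>
    simp only [SimpleGraph.incidenceSet, Set.mem_setOf_eq, Finset.coe_image, Set.mem_image,
      Finset.mem_coe, Finset.mem_univ, SimpleGraph.mem_edgeSet, true_and]
    constructor
    · rintro ⟨hadj, hmem⟩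
      rcases x with a | a <;> rcases y with b | b <;>
        simp_all [Sym2.mem_iff, Sym2.eq_iff] <;> tauto
    · rintro ⟨j, hj⟩
      rcases Sym2.eq_iff.mp hj with ⟨h1, h2⟩ | ⟨h1, h2⟩ <;> subst h1 <;> subst h2 <;>
        exact ⟨by simp, by simp [Sym2.mem_iff]⟩

lemma incidence_inr (p : ℕ) (j : Fin p) :
    (Gp p).incidenceSet (Sum.inr j) =
      ↑(Finset.image (fun i : Fin p => s(Sum.inl i, Sum.inr j)) Finset.univ) := by
  ext e
  induction e with
  | _ x y =>
    simp only [SimpleGraph.incidenceSet, Set.mem_setOf_eq, Finset.coe_image, Set.mem_image,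
      Finset.mem_coe, Finset.mem_univ, SimpleGraph.mem_edgeSet, true_and]
    constructor
    · rintro ⟨hadj, hmem⟩
      rcases x with a | a <;> rcases y with b | b <;>
        simp_all [Sym2.mem_iff, Sym2.eq_iff] <;> tauto
    · rintro ⟨i, hi⟩
      rcases Sym2.eq_iff.mp hi with ⟨h1, h2⟩ | ⟨h1, h2⟩ <;> subst h1 <;> subst h2 <;>
        exact ⟨by simp, by simp [Sym2.mem_iff]⟩

lemma vertexSum_inl (p : ℕ) (f : Sym2 (Vp p) → ℕ) (i : Fin p) :
    vertexSum (Gp p) f (Sum.inl i) = ∑ j : Fin p, f s(Sum.inl i, Sum.inr j) := by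
  rw [vertexSum, incidence_inl, finsum_mem_coe_finset, Finset.sum_image]
  intro a _ b _ h
  simpa [Sym2.eq_iff] using h

lemma vertexSum_inr (p : ℕ) (f : Sym2 (Vp p) → ℕ) (j : Fin p) :
    vertexSum (Gp p) f (Sum.inr j) = ∑ i : Fin p, f s(Sum.inl i, Sum.inr j) := by
  rw [vertexSum, incidence_inr, finsum_mem_coe_finset, Finset.sum_image]
  intro a _ b _ h
  simpa [Sym2.eq_iff] using h

def edgeFinset' (p : ℕ) : Finset (Sym2 (Vp p)) :=
  Finset.image (fun x : Fin p × Fin p => s(Sum.inl x.1, Sum.inr x.2)) Finset.univ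

lemma edgeSet_eq_s13 (p : ℕ) : (Gp p).edgeSet = ↑(edgeFinset' p) := by
  ext e
  induction e with
  | _ x y =>
    simp only [SimpleGraph.mem_edgeSet, edgeFinset', Finset.coe_image, Set.mem_image,
      Finset.mem_coe, Finset.mem_univ, true_and]
    constructor
    · intro hadj
      rcases x with a | a <;> rcases y with b | b <;> simp_all [Sym2.eq_iff] <;>
        first
        | exact ⟨a, b, Or.inl ⟨rfl, rfl⟩⟩
        | exact ⟨b, a, Or.inr ⟨rfl, rfl⟩⟩
    · rintro ⟨z, hz⟩
      rcases Sym2.eq_iff.mp hz with ⟨h1, h2⟩ | ⟨h1, h2⟩ <;> subst h1 <;> subst h2 <;> simp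

lemma edgeFinset'_card (p : ℕ) : (edgeFinset' p).card = p * p := by
  rw [edgeFinset', Finset.card_image_of_injective _ (fun a b h => by
    simpa [Prod.ext_iff, Sym2.eq_iff] using h)]
  simp

lemma edgeSet_ncard (p : ℕ) : (Gp p).edgeSet.ncard = p * p := by
  rw [edgeSet_eq_s13, Set.ncard_coe_finset, edgeFinset'_card]

-- row total = col total
lemma row_col_total (p : ℕ) (f : Sym2 (Vp p) → ℕ) :
    ∑ i : Fin p, vertexSum (Gp p) f (Sum.inl i) = ∑ j : Fin p, vertexSum (Gp p) f (Sum.inr j) := by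
  simp only [vertexSum_inl, vertexSum_inr]
  exact Finset.sum_comm

lemma three_le_ncard {s : Set ℕ} (hs : s.Finite) {a b c : ℕ}
    (ha : a ∈ s) (hb : b ∈ s) (hc : c ∈ s)
    (hab : a ≠ b) (hac : a ≠ c) (hbc : b ≠ c) : 3 ≤ s.ncard := by
  have hsub : ({a, b, c} : Set ℕ) ⊆ s := by
    intro x hx
    rcases hx with rfl | rfl | rfl <;> assumption
  have h3 : ({a, b, c} : Set ℕ).ncard = 3 :=
    Set.ncard_eq_three.mpr ⟨a, b, c, hab, hac, hbc, rfl⟩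
  calc 3 = ({a, b, c} : Set ℕ).ncard := h3.symm
    _ ≤ s.ncard := Set.ncard_le_ncard hsub hs

lemma lower_bound (p : ℕ) (hp : 3 ≤ p) (f : Sym2 (Vp p) → ℕ)
    (hf : IsLocalAntimagic (Gp p) f) : 3 ≤ colorCount (Gp p) f := by
  have hp0 : 0 < p := by omega
  set u : Fin p → ℕ := fun i => vertexSum (Gp p) f (Sum.inl i) with hu
  set v : Fin p → ℕ := fun j => vertexSum (Gp p) f (Sum.inr j) with hv
  have hadj : ∀ i j : Fin p, u i ≠ v j := by
    intro i j
    exact hf.2 (Sum.inl i) (Sum.inr j) (by simp)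
  have hfin : (Set.range (vertexSum (Gp p) f)).Finite := Set.finite_range _
  have hmemu : ∀ i, u i ∈ Set.range (vertexSum (Gp p) f) := fun i => ⟨Sum.inl i, rfl⟩
  have hmemv : ∀ j, v j ∈ Set.range (vertexSum (Gp p) f) := fun j => ⟨Sum.inr j, rfl⟩
  by_cases h1 : ∃ i i' : Fin p, u i ≠ u i'
  · obtain ⟨i, i', hii⟩ := h1
    exact three_le_ncard hfin (hmemu i) (hmemu i') (hmemv ⟨0, hp0⟩) hii
      (hadj i _) (hadj i' _)
  by_cases h2 : ∃ j j' : Fin p, v j ≠ v j'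
  · obtain ⟨j, j', hjj⟩ := h2
    exact three_le_ncard hfin (hmemv j) (hmemv j') (hmemu ⟨0, hp0⟩) hjj
      (fun h => hadj _ j h.symm) (fun h => hadj _ j' h.symm)
  push_neg at h1 h2
  exfalso
  have htot : ∑ i : Fin p, u i = ∑ j : Fin p, v j := by
    simp only [hu, hv, vertexSum_inl, vertexSum_inr]
    exact Finset.sum_comm
  have hU : ∑ i : Fin p, u i = p * u ⟨0, hp0⟩ := by
    rw [Finset.sum_congr rfl (fun i _ => h1 i ⟨0, hp0⟩)]
    simp [mul_comm]
  have hV : ∑ j : Fin p, v j = p * v ⟨0, hp0⟩ := by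
    rw [Finset.sum_congr rfl (fun j _ => h2 j ⟨0, hp0⟩)]
    simp [mul_comm]
  have : u ⟨0, hp0⟩ = v ⟨0, hp0⟩ := by
    have := htot
    rw [hU, hV] at this
    exact Nat.eq_of_mul_eq_mul_left hp0 this
  exact hadj _ _ this

def gfun (p : ℕ) (M : ℕ → ℕ → ℕ) : Vp p → Vp p → ℕ
  | Sum.inl i, Sum.inr j => M i j
  | Sum.inr j, Sum.inl i => M i j
  | _, _ => 0

lemma gfun_symm (p : ℕ) (M : ℕ → ℕ → ℕ) (x y : Vp p) : gfun p M x y = gfun p M y x := by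
  rcases x with a | a <;> rcases y with b | b <;> rfl

def lab (p : ℕ) (M : ℕ → ℕ → ℕ) : Sym2 (Vp p) → ℕ :=
  Sym2.lift ⟨gfun p M, gfun_symm p M⟩

lemma lab_apply (p : ℕ) (M : ℕ → ℕ → ℕ) (i j : Fin p) :
    lab p M s(Sum.inl i, Sum.inr j) = M i j := rfl

lemma upper_bound (p : ℕ) (hp : 3 ≤ p) (M : ℕ → ℕ → ℕ) (R C1 C2 : ℕ)
    (hbound : ∀ i < p, ∀ j < p, 1 ≤ M i j ∧ M i j ≤ p * p)
    (hinj : ∀ i < p, ∀ j < p, ∀ i' < p, ∀ j' < p, M i j = M i' j' → i = i' ∧ j = j')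
    (hsurj : ∀ n, 1 ≤ n → n ≤ p * p → ∃ i j, i < p ∧ j < p ∧ M i j = n)
    (hrow : ∀ i < p, ∑ j ∈ range p, M i j = R)
    (hcol : ∀ j < p, ∑ i ∈ range p, M i j = C1 ∨ ∑ i ∈ range p, M i j = C2)
    (hc1 : ∃ j < p, ∑ i ∈ range p, M i j = C1)
    (hc2 : ∃ j < p, ∑ i ∈ range p, M i j = C2)
    (hRC1 : R ≠ C1) (hRC2 : R ≠ C2) (hC12 : C1 ≠ C2) :
    ∃ f, IsLocalAntimagic (Gp p) f ∧ colorCount (Gp p) f = 3 := by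
  have hp0 : 0 < p := by omega
  refine ⟨lab p M, ⟨?_, ?_⟩, ?_⟩
  · -- BijOn
    rw [edgeSet_ncard, edgeSet_eq_s13]
    refine ⟨?_, ?_, ?_⟩
    · -- MapsTo
      intro e he
      simp only [edgeFinset', Finset.coe_image, Set.mem_image, Finset.mem_coe,
        Finset.mem_univ, true_and, Finset.coe_univ, Set.image_univ, Set.mem_range] at he
      obtain ⟨⟨i, j⟩, rfl⟩ := he
      rw [lab_apply]
      exact Set.mem_Icc.mpr ⟨(hbound i i.2 j j.2).1, (hbound i i.2 j j.2).2⟩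
    · -- InjOn
      intro e he e' he' heq
      simp only [edgeFinset', Finset.coe_image, Finset.coe_univ, Set.image_univ,
        Set.mem_range] at he he'
      obtain ⟨⟨i, j⟩, rfl⟩ := he
      obtain ⟨⟨i', j'⟩, rfl⟩ := he'
      rw [lab_apply, lab_apply] at heq
      obtain ⟨h1, h2⟩ := hinj i i.2 j j.2 i' i'.2 j' j'.2 heq
      have : i = i' := Fin.ext h1
      have : j = j' := Fin.ext h2
      simp_all
    · -- SurjOn
      intro n hn
      obtain ⟨hn1, hn2⟩ := Set.mem_Icc.mp hn
      obtain ⟨i, j, hi, hj, hM⟩ := hsurj n hn1 hn2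
      refine ⟨s(Sum.inl ⟨i, hi⟩, Sum.inr ⟨j, hj⟩), ?_, hM⟩
      simp only [edgeFinset', Finset.coe_image, Finset.coe_univ, Set.image_univ, Set.mem_range]
      exact ⟨(⟨i, hi⟩, ⟨j, hj⟩), rfl⟩
  · -- adjacency sums distinct
    intro x y hadj
    have key : ∀ i j : Fin p,
        vertexSum (Gp p) (lab p M) (Sum.inl i) ≠ vertexSum (Gp p) (lab p M) (Sum.inr j) := by
      intro i j
      rw [vertexSum_inl, vertexSum_inr]
      simp only [lab_apply]
      rw [Fin.sum_univ_eq_sum_range (fun k => M i k) p,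
        Fin.sum_univ_eq_sum_range (fun k => M k j) p]
      rw [hrow i i.2]
      rcases hcol j j.2 with h | h <;> rw [h]
      · exact hRC1
      · exact hRC2
    rcases x with a | a <;> rcases y with b | b
    · simp at hadj
    · exact key a b
    · exact fun h => key b a h.symm
    · simp at hadj
  · -- colorCount = 3
    have hrange : Set.range (vertexSum (Gp p) (lab p M)) = {R, C1, C2} := by
      ext x
      constructor
      · rintro ⟨w, rfl⟩
        rcases w with i | j
        · left
          rw [vertexSum_inl]
          simp only [lab_apply]
          rw [Fin.sum_univ_eq_sum_range (fun k => M i k) p]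
          exact hrow i i.2
        · rw [vertexSum_inr]
          simp only [lab_apply]
          rw [Fin.sum_univ_eq_sum_range (fun k => M k j) p]
          rcases hcol j j.2 with h | h
          · right; left; exact h
          · right; right; exact h
      · intro hx
        rcases hx with rfl | rfl | rfl
        · refine ⟨Sum.inl ⟨0, hp0⟩, ?_⟩
          rw [vertexSum_inl]
          simp only [lab_apply]
          rw [Fin.sum_univ_eq_sum_range (fun k => M 0 k) p]
          exact hrow 0 hp0
        · obtain ⟨j, hj, h⟩ := hc1
          refine ⟨Sum.inr ⟨j, hj⟩, ?_⟩
          rw [vertexSum_inr]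
          simp only [lab_apply]
          rw [Fin.sum_univ_eq_sum_range (fun k => M k j) p]
          exact h
        · obtain ⟨j, hj, h⟩ := hc2
          refine ⟨Sum.inr ⟨j, hj⟩, ?_⟩
          rw [vertexSum_inr]
          simp only [lab_apply]
          rw [Fin.sum_univ_eq_sum_range (fun k => M k j) p]
          exact h
    rw [colorCount, hrange]
    exact Set.ncard_eq_three.mpr ⟨R, C1, C2, hRC1, hRC2, hC12, rfl⟩

/-- Left half matrix for even p = 2q: columns j < q, entries 1..2q². -/
def Lf (q i j : ℕ) : ℕ :=
  if i < q then i + j * q + 1 else 2 * q * q + 1 - ((i - q) + j * q + 1)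

/-- Full matrix for even p = 2q. -/
def Me (q i j : ℕ) : ℕ :=
  if j < q then Lf q i j else 4 * q * q + 1 - Lf q i (2 * q - 1 - j)

lemma tl_bound {q i j : ℕ} (hi : i < q) (hj : j < q) : i + j * q + 1 ≤ q * q := by
  nlinarith [Nat.mul_le_mul_right q (show j + 1 ≤ q by omega)]

lemma Lf_bound_top {q i j : ℕ} (hi : i < q) (hj : j < q) :
    1 ≤ Lf q i j ∧ Lf q i j ≤ q * q := by
  rw [Lf, if_pos hi]
  exact ⟨by omega, tl_bound hi hj⟩

lemma Lf_bound_bot {q i j : ℕ} (hi : q ≤ i) (hi2 : i < 2 * q) (hj : j < q) :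
    q * q + 1 ≤ Lf q i j ∧ Lf q i j ≤ 2 * q * q := by
  rw [Lf, if_neg (by omega)]
  have h1 : (i - q) + j * q + 1 ≤ q * q := tl_bound (by omega) hj
  have h2 : q * q + q * q = 2 * q * q := by ring
  omega

lemma Lf_bound {q i j : ℕ} (hi : i < 2 * q) (hj : j < q) :
    1 ≤ Lf q i j ∧ Lf q i j ≤ 2 * q * q := by
  rcases lt_or_ge i q with h | h
  · have := Lf_bound_top h hj
    have h2 : q * q ≤ 2 * q * q := by nlinarith
    omega
  · have := Lf_bound_bot h hi hj
    omega

lemma Lf_pair {q i j : ℕ} (hi : i < q) (hj : j < q) :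
    Lf q (q + i) j + Lf q i j = 2 * q * q + 1 := by
  have hb := tl_bound hi hj
  rw [Lf, if_neg (by omega : ¬ q + i < q), Lf, if_pos hi]
  have he : q + i - q = i := by omega
  rw [he]
  have h2 : q * q + q * q = 2 * q * q := by ring
  omega

lemma tl_inj {q : ℕ} (hq : 0 < q) {a b a' b' : ℕ} (ha : a < q) (hb : b < q)
    (ha' : a' < q) (hb' : b' < q)
    (he : a + b * q + 1 = a' + b' * q + 1) : a = a' ∧ b = b' := by
  have h1 : (a + b * q) % q = a := by
    rw [Nat.add_mul_mod_self_right, Nat.mod_eq_of_lt ha]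
  have h2 : (a + b * q) / q = b := by
    rw [Nat.add_mul_div_right _ _ hq, Nat.div_eq_of_lt ha, Nat.zero_add]
  have h1' : (a' + b' * q) % q = a' := by
    rw [Nat.add_mul_mod_self_right, Nat.mod_eq_of_lt ha']
  have h2' : (a' + b' * q) / q = b' := by
    rw [Nat.add_mul_div_right _ _ hq, Nat.div_eq_of_lt ha', Nat.zero_add]
  have h3 : a + b * q = a' + b' * q := by omega
  rw [h3] at h1 h2
  omega

lemma Lf_inj {q : ℕ} (hq : 0 < q) {i j i' j' : ℕ} (hi : i < 2 * q) (hj : j < q)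
    (hi' : i' < 2 * q) (hj' : j' < q) (h : Lf q i j = Lf q i' j') : i = i' ∧ j = j' := by
  rcases lt_or_ge i q with h1 | h1 <;> rcases lt_or_ge i' q with h2 | h2
  · rw [Lf, if_pos h1, Lf, if_pos h2] at h
    exact tl_inj hq h1 hj h2 hj' h
  · have b1 := Lf_bound_top h1 hj
    have b2 := Lf_bound_bot h2 hi' hj'
    omega
  · have b1 := Lf_bound_bot h1 hi hj
    have b2 := Lf_bound_top h2 hj'
    omega
  · rw [Lf, if_neg (by omega), Lf, if_neg (by omega)] at h
    have c1 : (i - q) + j * q + 1 ≤ q * q := tl_bound (by omega) hj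
    have c2 : (i' - q) + j' * q + 1 ≤ q * q := tl_bound (by omega) hj'
    have h2 : q * q + q * q = 2 * q * q := by ring
    have h3 : (i - q) + j * q + 1 = (i' - q) + j' * q + 1 := by omega
    have := tl_inj hq (show i - q < q by omega) hj (show i' - q < q by omega) hj' h3
    omega

lemma Lf_surj {q : ℕ} (hq : 0 < q) {n : ℕ} (hn1 : 1 ≤ n) (hn2 : n ≤ 2 * q * q) :
    ∃ i j, i < 2 * q ∧ j < q ∧ Lf q i j = n := by
  have key : ∀ m : ℕ, 1 ≤ m → m ≤ q * q → ∃ a b, a < q ∧ b < q ∧ a + b * q + 1 = m := by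
    intro m hm1 hm2
    refine ⟨(m - 1) % q, (m - 1) / q, Nat.mod_lt _ hq, ?_, ?_⟩
    · rw [Nat.div_lt_iff_lt_mul hq]
      omega
    · have h7 := Nat.mod_add_div (m - 1) q
      have h8 : (m - 1) / q * q = q * ((m - 1) / q) := Nat.mul_comm _ _
      omega
  rcases le_or_gt n (q * q) with h | h
  · obtain ⟨a, b, ha, hb, he⟩ := key n hn1 h
    exact ⟨a, b, by omega, hb, by rw [Lf, if_pos ha]; omega⟩
  · have h2 : q * q + q * q = 2 * q * q := by ring
    obtain ⟨a, b, ha, hb, he⟩ := key (2 * q * q + 1 - n) (by omega) (by omega)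
    refine ⟨q + a, b, by omega, hb, ?_⟩
    rw [Lf, if_neg (by omega)]
    have h5 : q + a - q = a := by omega
    rw [h5]
    omega

lemma Me_left {q i j : ℕ} (hj : j < q) : Me q i j = Lf q i j := by rw [Me, if_pos hj]

lemma Me_right {q i j : ℕ} (hj1 : q ≤ j) :
    Me q i j = 4 * q * q + 1 - Lf q i (2 * q - 1 - j) := by rw [Me, if_neg (by omega)]

lemma Me_bound {q i j : ℕ} (hq : 0 < q) (hi : i < 2 * q) (hj : j < 2 * q) :
    1 ≤ Me q i j ∧ Me q i j ≤ 2 * q * (2 * q) := by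
  have h4 : 2 * q * q + 2 * q * q = 4 * q * q := by ring
  have h5 : 4 * q * q = 2 * q * (2 * q) := by ring
  rcases lt_or_ge j q with h | h
  · rw [Me_left h]
    have := Lf_bound hi h
    omega
  · rw [Me_right h]
    have := Lf_bound hi (show 2 * q - 1 - j < q by omega)
    omega

lemma Me_inj {q : ℕ} (hq : 0 < q) {i j i' j' : ℕ} (hi : i < 2 * q) (hj : j < 2 * q)
    (hi' : i' < 2 * q) (hj' : j' < 2 * q) (h : Me q i j = Me q i' j') : i = i' ∧ j = j' := by
  have h4 : 2 * q * q + 2 * q * q = 4 * q * q := by ring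
  rcases lt_or_ge j q with h1 | h1 <;> rcases lt_or_ge j' q with h2 | h2
  · rw [Me_left h1, Me_left h2] at h
    exact Lf_inj hq hi h1 hi' h2 h
  · rw [Me_left h1, Me_right h2] at h
    have b1 := Lf_bound hi h1
    have b2 := Lf_bound hi' (show 2 * q - 1 - j' < q by omega)
    omega
  · rw [Me_right h1, Me_left h2] at h
    have b1 := Lf_bound hi (show 2 * q - 1 - j < q by omega)
    have b2 := Lf_bound hi' h2
    omega
  · rw [Me_right h1, Me_right h2] at h
    have b1 := Lf_bound hi (show 2 * q - 1 - j < q by omega)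
    have b2 := Lf_bound hi' (show 2 * q - 1 - j' < q by omega)
    have h3 : Lf q i (2 * q - 1 - j) = Lf q i' (2 * q - 1 - j') := by omega
    have := Lf_inj hq hi (show 2 * q - 1 - j < q by omega) hi'
      (show 2 * q - 1 - j' < q by omega) h3
    omega

lemma Me_surj {q : ℕ} (hq : 0 < q) {n : ℕ} (hn1 : 1 ≤ n) (hn2 : n ≤ 2 * q * (2 * q)) :
    ∃ i j, i < 2 * q ∧ j < 2 * q ∧ Me q i j = n := by
  have h4 : 2 * q * q + 2 * q * q = 4 * q * q := by ring
  have h5 : 4 * q * q = 2 * q * (2 * q) := by ring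
  rcases le_or_gt n (2 * q * q) with h | h
  · obtain ⟨i, j, hi, hj, he⟩ := Lf_surj hq hn1 h
    exact ⟨i, j, hi, by omega, by rw [Me_left hj]; exact he⟩
  · obtain ⟨i, j, hi, hj, he⟩ := Lf_surj hq (show 1 ≤ 4 * q * q + 1 - n by omega)
      (by omega)
    have hb := Lf_bound hi hj
    refine ⟨i, 2 * q - 1 - j, hi, by omega, ?_⟩
    rw [Me_right (by omega)]
    have h6 : 2 * q - 1 - (2 * q - 1 - j) = j := by omega
    rw [h6]
    omega

lemma sum_range_two_mul (q : ℕ) (F : ℕ → ℕ) :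
    ∑ j ∈ range (2 * q), F j = ∑ j ∈ range q, F j + ∑ j ∈ range q, F (q + j) := by
  rw [two_mul, Finset.sum_range_add]

lemma Me_row_sum {q i : ℕ} (hq : 0 < q) (hi : i < 2 * q) :
    ∑ j ∈ range (2 * q), Me q i j = q * (4 * q * q + 1) := by
  rw [sum_range_two_mul, ← Finset.sum_range_reflect (fun j => Me q i j) q,
    ← Finset.sum_add_distrib]
  have key : ∀ j ∈ range q, Me q i (q - 1 - j) + Me q i (q + j) = 4 * q * q + 1 := by
    intro j hj
    rw [mem_range] at hj
    rw [Me_left (show q - 1 - j < q by omega), Me_right (show q ≤ q + j by omega)]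
    have h1 : 2 * q - 1 - (q + j) = q - 1 - j := by omega
    rw [h1]
    have hb := Lf_bound hi (show q - 1 - j < q by omega)
    have h4 : 2 * q * q + 2 * q * q = 4 * q * q := by ring
    omega
  rw [Finset.sum_congr rfl key, Finset.sum_const, card_range, smul_eq_mul]

lemma Lf_col_sum {q j : ℕ} (hq : 0 < q) (hj : j < q) :
    ∑ i ∈ range (2 * q), Lf q i j = q * (2 * q * q + 1) := by
  rw [sum_range_two_mul, ← Finset.sum_add_distrib]
  have key : ∀ i ∈ range q, Lf q i j + Lf q (q + i) j = 2 * q * q + 1 := by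
    intro i hi
    rw [mem_range] at hi
    rw [Nat.add_comm]
    exact Lf_pair hi hj
  rw [Finset.sum_congr rfl key, Finset.sum_const, card_range, smul_eq_mul]

lemma Me_col_sum_left {q j : ℕ} (hq : 0 < q) (hj : j < q) :
    ∑ i ∈ range (2 * q), Me q i j = q * (2 * q * q + 1) := by
  rw [Finset.sum_congr rfl (fun i _ => Me_left hj)]
  exact Lf_col_sum hq hj

lemma Me_col_sum_right {q j : ℕ} (hq : 0 < q) (hj1 : q ≤ j) (hj2 : j < 2 * q) :
    ∑ i ∈ range (2 * q), Me q i j = q * (6 * q * q + 1) := by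
  have hj' : 2 * q - 1 - j < q := by omega
  have key : ∀ i ∈ range (2 * q), Me q i j + Lf q i (2 * q - 1 - j) = 4 * q * q + 1 := by
    intro i hi
    rw [mem_range] at hi
    rw [Me_right hj1]
    have hb := Lf_bound hi hj'
    have h4 : 2 * q * q + 2 * q * q = 4 * q * q := by ring
    omega
  have hsum : ∑ i ∈ range (2 * q), Me q i j + ∑ i ∈ range (2 * q), Lf q i (2 * q - 1 - j)
      = 2 * q * (4 * q * q + 1) := by
    rw [← Finset.sum_add_distrib, Finset.sum_congr rfl key, Finset.sum_const, card_range,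
      smul_eq_mul]
  rw [Lf_col_sum hq hj'] at hsum
  have hring : q * (6 * q * q + 1) + q * (2 * q * q + 1) = 2 * q * (4 * q * q + 1) := by ring
  omega

def baseO (p i j : ℕ) : ℕ := p * ((i + j) % p) + ((2 * i + j) % p) + 1

def Mo (p i j : ℕ) : ℕ := if i = 0 then baseO p 0 ((j + 1) % p) else baseO p i j

-- cast helpers
lemma mod_eq_of_cast_eq {p a b : ℕ} (hb : b < p) (h : (a : ZMod p) = (b : ZMod p)) :
    a % p = b := by
  have h2 : a ≡ b [MOD p] := (ZMod.natCast_eq_natCast_iff a b p).mp h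
  rw [Nat.ModEq] at h2
  rw [h2, Nat.mod_eq_of_lt hb]

lemma nat_eq_of_cast_eq {p a b : ℕ} (ha : a < p) (hb : b < p)
    (h : (a : ZMod p) = (b : ZMod p)) : a = b := by
  have := mod_eq_of_cast_eq hb h
  rwa [Nat.mod_eq_of_lt ha] at this

-- permutation sum helper
lemma image_eq_range {p : ℕ} (g : ℕ → ℕ) (hg : ∀ j < p, g j < p)
    (hinj : ∀ j < p, ∀ j' < p, g j = g j' → j = j') :
    Finset.image g (range p) = range p := by
  apply Finset.eq_of_subset_of_card_le
  · intro x hx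
    rw [Finset.mem_image] at hx
    obtain ⟨j, hj, rfl⟩ := hx
    rw [mem_range] at hj ⊢
    exact hg j hj
  · rw [Finset.card_image_of_injOn]
    intro a ha b hb h
    rw [Finset.coe_range, Set.mem_Iio] at ha hb
    exact hinj a ha b hb h

lemma sum_perm {p : ℕ} (g : ℕ → ℕ) (hg : ∀ j < p, g j < p)
    (hinj : ∀ j < p, ∀ j' < p, g j = g j' → j = j') (F : ℕ → ℕ) :
    ∑ j ∈ range p, F (g j) = ∑ j ∈ range p, F j := by
  conv_rhs => rw [← image_eq_range g hg hinj]
  rw [Finset.sum_image]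
  intro a ha b hb h
  rw [Finset.mem_coe, mem_range] at ha hb
  exact hinj a ha b hb h

section odd
variable {p : ℕ} (hp : 3 ≤ p) (hodd : p % 2 = 1)

lemma shift_inj (x : ℕ) : ∀ j < p, ∀ j' < p, (x + j) % p = (x + j') % p → j = j' := by
  intro j hj j' hj' h
  have h2 : x + j ≡ x + j' [MOD p] := h
  have h3 : j ≡ j' [MOD p] := Nat.ModEq.add_left_cancel' x h2
  rw [Nat.ModEq, Nat.mod_eq_of_lt hj, Nat.mod_eq_of_lt hj'] at h3
  exact h3

include hodd in
lemma shift2_inj (x : ℕ) : ∀ i < p, ∀ i' < p, (2 * i + x) % p = (2 * i' + x) % p → i = i' := by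
  intro i hi i' hi' h
  have h2 : 2 * i + x ≡ 2 * i' + x [MOD p] := h
  have h3 : 2 * i ≡ 2 * i' [MOD p] := Nat.ModEq.add_right_cancel' x h2
  have hco : Nat.gcd p 2 = 1 :=
    Nat.Coprime.symm (Nat.coprime_two_left.mpr (Nat.odd_iff.mpr hodd))
  have h4 : i ≡ i' [MOD p] := Nat.ModEq.cancel_left_of_coprime hco h3
  rw [Nat.ModEq, Nat.mod_eq_of_lt hi, Nat.mod_eq_of_lt hi'] at h4
  exact h4

include hp in
lemma baseO_bound {i j : ℕ} : 1 ≤ baseO p i j ∧ baseO p i j ≤ p * p := by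
  have hp0 : 0 < p := by omega
  have h1 : (i + j) % p < p := Nat.mod_lt _ hp0
  have h2 : (2 * i + j) % p < p := Nat.mod_lt _ hp0
  constructor
  · rw [baseO]; omega
  · rw [baseO]
    have : p * ((i + j) % p) + p ≤ p * p := by
      calc p * ((i + j) % p) + p = p * ((i + j) % p + 1) := by ring
      _ ≤ p * p := Nat.mul_le_mul_left p (by omega)
    omega

include hp in
lemma baseO_inj {i j i' j' : ℕ} (hi : i < p) (hj : j < p) (hi' : i' < p) (hj' : j' < p)
    (h : baseO p i j = baseO p i' j') :
    (i + j) % p = (i' + j') % p ∧ (2 * i + j) % p = (2 * i' + j') % p := by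
  have hp0 : 0 < p := by omega
  have h1 : (i + j) % p < p := Nat.mod_lt _ hp0
  have h2 : (2 * i + j) % p < p := Nat.mod_lt _ hp0
  have h1' : (i' + j') % p < p := Nat.mod_lt _ hp0
  have h2' : (2 * i' + j') % p < p := Nat.mod_lt _ hp0
  rw [baseO, baseO] at h
  constructor
  · -- divide
    have := Nat.div_eq_of_lt h2
    have e1 : (p * ((i + j) % p) + ((2 * i + j) % p)) / p = (i + j) % p := by
      rw [Nat.mul_add_div hp0, Nat.div_eq_of_lt h2]
      omega
    have e2 : (p * ((i' + j') % p) + ((2 * i' + j') % p)) / p = (i' + j') % p := by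
      rw [Nat.mul_add_div hp0, Nat.div_eq_of_lt h2']
      omega
    have h3 : p * ((i + j) % p) + ((2 * i + j) % p)
        = p * ((i' + j') % p) + ((2 * i' + j') % p) := by omega
    rw [h3] at e1
    omega
  · have e1 : (p * ((i + j) % p) + ((2 * i + j) % p)) % p = (2 * i + j) % p := by
      rw [Nat.mul_add_mod, Nat.mod_eq_of_lt h2]
    have e2 : (p * ((i' + j') % p) + ((2 * i' + j') % p)) % p = (2 * i' + j') % p := by
      rw [Nat.mul_add_mod, Nat.mod_eq_of_lt h2']
    have h3 : p * ((i + j) % p) + ((2 * i + j) % p)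
        = p * ((i' + j') % p) + ((2 * i' + j') % p) := by omega
    rw [h3] at e1
    omega

include hp hodd in
lemma baseO_inj' {i j i' j' : ℕ} (hi : i < p) (hj : j < p) (hi' : i' < p) (hj' : j' < p)
    (h : baseO p i j = baseO p i' j') : i = i' ∧ j = j' := by
  obtain ⟨ha, hb⟩ := baseO_inj hp hi hj hi' hj' h
  have hc1 : ((i : ZMod p) + j) = ((i' : ZMod p) + j') := by
    have := (ZMod.natCast_eq_natCast_iff (i + j) (i' + j') p).mpr ha
    push_cast at this
    exact this
  have hc2 : (2 * (i : ZMod p) + j) = (2 * (i' : ZMod p) + j') := by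
    have := (ZMod.natCast_eq_natCast_iff (2 * i + j) (2 * i' + j') p).mpr hb
    push_cast at this
    exact this
  have hci : (i : ZMod p) = (i' : ZMod p) := by linear_combination hc2 - hc1
  have hie : i = i' := nat_eq_of_cast_eq hi hi' hci
  subst hie
  have hcj : (j : ZMod p) = (j' : ZMod p) := by
    have := hc1
    rwa [add_right_inj] at this
  exact ⟨rfl, nat_eq_of_cast_eq hj hj' hcj⟩

include hp in
lemma baseO_surj {n : ℕ} (hn1 : 1 ≤ n) (hn2 : n ≤ p * p) :
    ∃ i j, i < p ∧ j < p ∧ baseO p i j = n := by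
  have hp0 : 0 < p := by omega
  set s := (n - 1) / p with hs
  set t := (n - 1) % p with ht
  have hsp : s < p := by
    rw [hs, Nat.div_lt_iff_lt_mul hp0]
    omega
  have htp : t < p := Nat.mod_lt _ hp0
  have hst : p * s + t = n - 1 := by
    have h := Nat.mod_add_div (n - 1) p
    rw [hs, ht]
    omega
  set i := (t + p - s) % p with hi
  set j := (s + p - i) % p with hj
  have hip : i < p := Nat.mod_lt _ hp0
  have hjp : j < p := Nat.mod_lt _ hp0
  have hci : (i : ZMod p) = (t : ZMod p) - s := by
    rw [hi, ZMod.natCast_mod]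
    push_cast [Nat.cast_sub (le_trans hsp.le (Nat.le_add_left p t))]
    rw [show ((p : ZMod p)) = 0 from ZMod.natCast_self p]
    ring
  have hcj : (j : ZMod p) = (s : ZMod p) - i := by
    rw [hj, ZMod.natCast_mod]
    push_cast [Nat.cast_sub (le_trans hip.le (Nat.le_add_left p s))]
    rw [show ((p : ZMod p)) = 0 from ZMod.natCast_self p]
    ring
  have e1 : (i + j) % p = s := by
    apply mod_eq_of_cast_eq hsp
    push_cast
    rw [hci, hcj, hci]
    ring
  have e2 : (2 * i + j) % p = t := by
    apply mod_eq_of_cast_eq htp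
    push_cast
    rw [hci, hcj, hci]
    ring
  refine ⟨i, j, hip, hjp, ?_⟩
  rw [baseO, e1, e2]
  omega

lemma shift_inj' (x : ℕ) : ∀ i < p, ∀ i' < p, (i + x) % p = (i' + x) % p → i = i' := by
  intro i hi i' hi' h
  have h2 : i + x ≡ i' + x [MOD p] := h
  have h3 : i ≡ i' [MOD p] := Nat.ModEq.add_right_cancel' x h2
  rw [Nat.ModEq, Nat.mod_eq_of_lt hi, Nat.mod_eq_of_lt hi'] at h3
  exact h3

include hp in
lemma baseO_zero {x : ℕ} (hx : x < p) : baseO p 0 x = p * x + x + 1 := by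
  have h1 : (0 + x) % p = x := by rw [Nat.zero_add, Nat.mod_eq_of_lt hx]
  have h2 : (2 * 0 + x) % p = x := by
    rw [Nat.mul_zero, Nat.zero_add, Nat.mod_eq_of_lt hx]
  simp only [baseO, h1, h2]

include hp in
lemma Mo_bound {i j : ℕ} : 1 ≤ Mo p i j ∧ Mo p i j ≤ p * p := by
  rw [Mo]
  split <;> exact baseO_bound hp

include hp hodd in
lemma Mo_inj {i j i' j' : ℕ} (hi : i < p) (hj : j < p) (hi' : i' < p) (hj' : j' < p)
    (h : Mo p i j = Mo p i' j') : i = i' ∧ j = j' := by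
  have hp0 : 0 < p := by omega
  rw [Mo, Mo] at h
  by_cases h0 : i = 0 <;> by_cases h0' : i' = 0
  · rw [if_pos h0, if_pos h0'] at h
    have := baseO_inj' hp hodd hp0 (Nat.mod_lt _ hp0) hp0 (Nat.mod_lt _ hp0) h
    have hjj : (j + 1) % p = (j' + 1) % p := this.2
    exact ⟨by omega, shift_inj' 1 j hj j' hj' hjj⟩
  · rw [if_pos h0, if_neg h0'] at h
    have := baseO_inj' hp hodd hp0 (Nat.mod_lt _ hp0) hi' hj' h
    omega
  · rw [if_neg h0, if_pos h0'] at h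
    have := baseO_inj' hp hodd hi hj hp0 (Nat.mod_lt _ hp0) h
    omega
  · rw [if_neg h0, if_neg h0'] at h
    exact baseO_inj' hp hodd hi hj hi' hj' h

include hp in
lemma Mo_surj {n : ℕ} (hn1 : 1 ≤ n) (hn2 : n ≤ p * p) :
    ∃ i j, i < p ∧ j < p ∧ Mo p i j = n := by
  have hp0 : 0 < p := by omega
  obtain ⟨i, j, hi, hj, he⟩ := baseO_surj hp hn1 hn2
  by_cases h0 : i = 0
  · subst h0
    refine ⟨0, (j + p - 1) % p, hp0, Nat.mod_lt _ hp0, ?_⟩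
    rw [Mo, if_pos rfl]
    have hkey : ((j + p - 1) % p + 1) % p = j := by
      apply mod_eq_of_cast_eq hj
      push_cast [ZMod.natCast_mod]
      push_cast [Nat.cast_sub (show 1 ≤ j + p by omega)]
      rw [show ((p : ZMod p)) = 0 from ZMod.natCast_self p]
      ring
    rw [hkey]
    exact he
  · exact ⟨i, j, hi, hj, by rw [Mo, if_neg h0]; exact he⟩

-- sums
lemma sum_shift_mod (x : ℕ) :
    ∑ j ∈ range p, (x + j) % p = ∑ j ∈ range p, j := by
  rcases Nat.eq_zero_or_pos p with h | hp0
  · subst h; simp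
  exact sum_perm (fun j => (x + j) % p) (fun j _ => Nat.mod_lt _ hp0) (shift_inj x) id

lemma sum_shift_mod' (x : ℕ) :
    ∑ i ∈ range p, (i + x) % p = ∑ i ∈ range p, i := by
  rcases Nat.eq_zero_or_pos p with h | hp0
  · subst h; simp
  exact sum_perm (fun i => (i + x) % p) (fun i _ => Nat.mod_lt _ hp0) (shift_inj' x) id

include hodd in
lemma sum_shift2_mod (x : ℕ) (hp0 : 0 < p) :
    ∑ i ∈ range p, (2 * i + x) % p = ∑ i ∈ range p, i :=
  sum_perm (fun i => (2 * i + x) % p) (fun i _ => Nat.mod_lt _ hp0) (shift2_inj hodd x) id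

def SS (p : ℕ) : ℕ := ∑ j ∈ Finset.range p, j
def RO (p : ℕ) : ℕ := p * SS p + SS p + p

lemma baseO_row_sum (i : ℕ) : ∑ j ∈ range p, baseO p i j = RO p := by
  unfold baseO RO SS
  rw [Finset.sum_add_distrib, Finset.sum_add_distrib, ← Finset.mul_sum, Finset.sum_const,
    card_range, smul_eq_mul, mul_one]
  have e1 : ∑ j ∈ range p, (i + j) % p = ∑ j ∈ range p, j := sum_shift_mod i
  have e2 : ∑ j ∈ range p, (2 * i + j) % p = ∑ j ∈ range p, j := sum_shift_mod (2 * i)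
  rw [e1, e2]

include hodd in
lemma baseO_col_sum (j : ℕ) (hp0 : 0 < p) : ∑ i ∈ range p, baseO p i j = RO p := by
  unfold baseO RO SS
  rw [Finset.sum_add_distrib, Finset.sum_add_distrib, ← Finset.mul_sum, Finset.sum_const,
    card_range, smul_eq_mul, mul_one]
  have e1 : ∑ i ∈ range p, (i + j) % p = ∑ i ∈ range p, i := sum_shift_mod' j
  have e2 : ∑ i ∈ range p, (2 * i + j) % p = ∑ i ∈ range p, i := sum_shift2_mod hodd j hp0
  rw [e1, e2]

include hp in
lemma Mo_row_sum {i : ℕ} (hi : i < p) : ∑ j ∈ range p, Mo p i j = RO p := by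
  by_cases h0 : i = 0
  · subst h0
    have hp0 : 0 < p := by omega
    have e : ∀ j ∈ range p, Mo p 0 j = baseO p 0 ((j + 1) % p) := by
      intro j _
      rw [Mo, if_pos rfl]
    rw [Finset.sum_congr rfl e]
    have := sum_perm (fun j => (j + 1) % p) (fun j _ => Nat.mod_lt _ hp0) (shift_inj' 1)
      (baseO p 0)
    rw [this]
    exact baseO_row_sum 0
  · have e : ∀ j ∈ range p, Mo p i j = baseO p i j := by
      intro j _
      rw [Mo, if_neg h0]
    rw [Finset.sum_congr rfl e]
    exact baseO_row_sum i

include hp hodd in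
lemma Mo_col_sum {j : ℕ} (hj : j < p) :
    ∑ i ∈ range p, Mo p i j + baseO p 0 j = RO p + Mo p 0 j := by
  have hp0 : 0 < p := by omega
  have hsplit : ∀ F : ℕ → ℕ, ∑ i ∈ range p, F i = ∑ i ∈ range (p - 1), F (i + 1) + F 0 := by
    intro F
    have hsp : p = p - 1 + 1 := by omega
    conv_lhs => rw [hsp]
    rw [Finset.sum_range_succ']
  have h1 := hsplit (fun i => baseO p i j)
  have h2 := hsplit (fun i => Mo p i j)
  have h3 : ∀ i ∈ range (p - 1), Mo p (i + 1) j = baseO p (i + 1) j := by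
    intro i _
    rw [Mo, if_neg (by omega)]
  rw [Finset.sum_congr rfl h3] at h2
  have h4 := baseO_col_sum hodd j hp0
  omega

include hp in
lemma RO_ge : p * p ≤ RO p := by
  obtain ⟨k, rfl⟩ : ∃ k, p = k + 3 := ⟨p - 3, by omega⟩
  have h2S : SS (k + 3) * 2 = (k + 3) * (k + 3 - 1) := Finset.sum_range_id_mul_two (k + 3)
  rw [RO]
  have h3 : k + 3 - 1 = k + 2 := by omega
  rw [h3] at h2S
  nlinarith [h2S]

include hp hodd in
lemma Mo_col_sum_main {j : ℕ} (hj : j < p - 1) :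
    ∑ i ∈ range p, Mo p i j = RO p + p + 1 := by
  have hp0 : 0 < p := by omega
  have h := Mo_col_sum hp hodd (show j < p by omega)
  have hz1 : baseO p 0 j = p * j + j + 1 := baseO_zero hp (by omega)
  have hz2 : Mo p 0 j = p * (j + 1) + (j + 1) + 1 := by
    rw [Mo, if_pos rfl, Nat.mod_eq_of_lt (show j + 1 < p by omega)]
    exact baseO_zero hp (by omega)
  have hr : p * (j + 1) = p * j + p := by ring
  omega

include hp hodd in
lemma Mo_col_sum_last : ∑ i ∈ range p, Mo p i (p - 1) = RO p + 1 - p * p := by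
  have hp0 : 0 < p := by omega
  have h := Mo_col_sum hp hodd (show p - 1 < p by omega)
  have hz1 : baseO p 0 (p - 1) = p * (p - 1) + (p - 1) + 1 := baseO_zero hp (by omega)
  have hz2 : Mo p 0 (p - 1) = 1 := by
    rw [Mo, if_pos rfl, show p - 1 + 1 = p by omega, Nat.mod_self]
    have := baseO_zero hp hp0
    rw [baseO_zero hp (show 0 < p by omega)]
    ring
  have hr : p * (p - 1) + p = p * p := by
    obtain ⟨k, rfl⟩ : ∃ k, p = k + 3 := ⟨p - 3, by omega⟩
    have : k + 3 - 1 = k + 2 := by omega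
    rw [this]
    ring
  have hge := RO_ge hp
  omega

end odd

end Aux

theorem chiLA_Kpp (p : ℕ) (hp : 3 ≤ p) :
    chiLA (completeBipartiteGraph (Fin p) (Fin p)) = 3 := by
  have hmem : ∃ f, IsLocalAntimagic (Gp p) f ∧ colorCount (Gp p) f = 3 := by
    rcases Nat.even_or_odd p with he | ho
    · -- even case
      obtain ⟨q, rfl⟩ : ∃ q, p = 2 * q := by
        obtain ⟨q, hq⟩ := he
        exact ⟨q, by omega⟩
      have hq2 : 2 ≤ q := by omega
      have hq0 : 0 < q := by omega
      apply upper_bound (2 * q) hp (Me q) (q * (4 * q * q + 1)) (q * (2 * q * q + 1))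
        (q * (6 * q * q + 1))
      · intro i hi j hj
        exact Me_bound hq0 hi hj
      · intro i hi j hj i' hi' j' hj' h
        exact Me_inj hq0 hi hj hi' hj' h
      · intro n hn1 hn2
        exact Me_surj hq0 hn1 hn2
      · intro i hi
        exact Me_row_sum hq0 hi
      · intro j hj
        rcases lt_or_ge j q with h | h
        · exact Or.inl (Me_col_sum_left hq0 h)
        · exact Or.inr (Me_col_sum_right hq0 h hj)
      · exact ⟨0, by omega, Me_col_sum_left hq0 hq0⟩
      · exact ⟨q, by omega, Me_col_sum_right hq0 (le_refl q) (by omega)⟩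
      · have hq3 : 1 ≤ q * q * q := Nat.one_le_iff_ne_zero.mpr (by positivity)
        have h1 : q * (2 * q * q + 1) < q * (4 * q * q + 1) := by nlinarith [hq3]
        exact Ne.symm (ne_of_lt h1)
      · have hq3 : 1 ≤ q * q * q := Nat.one_le_iff_ne_zero.mpr (by positivity)
        have h1 : q * (4 * q * q + 1) < q * (6 * q * q + 1) := by nlinarith [hq3]
        exact ne_of_lt h1
      · have hq3 : 1 ≤ q * q * q := Nat.one_le_iff_ne_zero.mpr (by positivity)
        have h1 : q * (2 * q * q + 1) < q * (6 * q * q + 1) := by nlinarith [hq3]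
        exact ne_of_lt h1
    · -- odd case
      have hodd : p % 2 = 1 := Nat.odd_iff.mp ho
      have hRO := RO_ge hp
      have hpp : p ≤ p * p := Nat.le_mul_of_pos_left p (by omega)
      apply upper_bound p hp (Mo p) (RO p) (RO p + p + 1) (RO p + 1 - p * p)
      · intro i _ j _
        exact Mo_bound hp
      · intro i hi j hj i' hi' j' hj' h
        exact Mo_inj hp hodd hi hj hi' hj' h
      · intro n hn1 hn2
        exact Mo_surj hp hn1 hn2
      · intro i hi
        exact Mo_row_sum hp hi
      · intro j hj
        rcases lt_or_ge j (p - 1) with h | h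
        · exact Or.inl (Mo_col_sum_main hp hodd h)
        · have hj1 : j = p - 1 := by omega
          subst hj1
          exact Or.inr (Mo_col_sum_last hp hodd)
      · exact ⟨0, by omega, Mo_col_sum_main hp hodd (by omega)⟩
      · exact ⟨p - 1, by omega, Mo_col_sum_last hp hodd⟩
      · omega
      · omega
      · omega
  obtain ⟨f, hf, h3⟩ := hmem
  rw [chiLA]
  apply le_antisymm
  · exact Nat.sInf_le (Set.mem_setOf.mpr ⟨f, hf, h3⟩)
  · apply le_csInf ⟨3, Set.mem_setOf.mpr ⟨f, hf, h3⟩⟩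
    rintro n ⟨g, hg, rfl⟩
    exact lower_bound p hp g hg
end

section
/- Let p ≥ 4 be even. Partition 1,...,p² so that A is a p × 2 magic rectangle with entries {1,...,2p} and B is a p × (p−2) magic rectangle with entries {2p+1,...,p²}. Then the p × p matrix M = (A | B) has every row sum equal to p(p²+1)/2, each of the first two column sums equal to p(2p+1)/2, and each remaining column sum equal to p(p+1)²/2; these three values are pairwise distinct, so M yields a local antimagic labeling of K_{p,p} with exactly 3 induced sums. -/
open scoped BigOperators

/-- `A` is a magic rectangle with entries exactly `{lo, …, hi}` (each used once),
constant row sums and constant column sums. -/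
def IsMagicRectangleOn {p q : ℕ} (A : Fin p → Fin q → ℕ) (lo hi : ℕ) : Prop :=
  (Set.range fun ij : Fin p × Fin q => A ij.1 ij.2) = Set.Icc lo hi ∧
  (Function.Injective fun ij : Fin p × Fin q => A ij.1 ij.2) ∧
  (∃ R, ∀ i, ∑ j, A i j = R) ∧ (∃ C, ∀ j, ∑ i, A i j = C)

/-! ### Auxiliary lemmas -/

lemma KppAux.gauss (n : ℕ) : 2 * (∑ x ∈ Finset.Icc 1 n, x) = n * (n+1) := by
  have h0 := Finset.sum_range_id_mul_two (n+1)
  have h : Finset.range (n+1) = insert 0 (Finset.Icc 1 n) := by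
    ext x; simp [Finset.mem_range, Finset.mem_Icc]; omega
  rw [h, Finset.sum_insert (by simp), zero_add] at h0
  have h3 : (n+1)*((n+1)-1) = n*(n+1) := by rw [Nat.add_sub_cancel]; ring
  omega

lemma KppAux.icc_split (a b : ℕ) (h : a ≤ b) :
    (∑ x ∈ Finset.Icc 1 a, x) + ∑ x ∈ Finset.Icc (a+1) b, x = ∑ x ∈ Finset.Icc 1 b, x := by
  have h1 : Finset.Icc 1 a = Finset.Ico 1 (a+1) := by rw [Finset.Ico_add_one_right_eq_Icc]
  have h2 : Finset.Icc (a+1) b = Finset.Ico (a+1) (b+1) := by rw [Finset.Ico_add_one_right_eq_Icc]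
  have h3 : Finset.Icc 1 b = Finset.Ico 1 (b+1) := by rw [Finset.Ico_add_one_right_eq_Icc]
  rw [h1, h2, h3, Finset.sum_Ico_consecutive] <;> omega

lemma KppAux.magic_total {p q lo hi : ℕ} (A : Fin p → Fin q → ℕ)
    (hr : (Set.range fun ij : Fin p × Fin q => A ij.1 ij.2) = Set.Icc lo hi)
    (hinj : Function.Injective fun ij : Fin p × Fin q => A ij.1 ij.2) :
    ∑ ij : Fin p × Fin q, A ij.1 ij.2 = ∑ x ∈ Finset.Icc lo hi, x := by
  have himg : Finset.image (fun ij : Fin p × Fin q => A ij.1 ij.2) Finset.univ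
      = Finset.Icc lo hi := by
    apply Finset.coe_injective
    rw [Finset.coe_image, Finset.coe_univ, Set.image_univ, hr, Finset.coe_Icc]
  calc ∑ ij : Fin p × Fin q, A ij.1 ij.2
      = ∑ x ∈ Finset.image (fun ij : Fin p × Fin q => A ij.1 ij.2) Finset.univ,
          (fun x => x) x := (Finset.sum_image (f := fun x => x) (fun x _ y _ h => hinj h)).symm
    _ = _ := by rw [himg]

def KppAux.gAux {p : ℕ} (M : Fin p → Fin p → ℕ) : (Fin p ⊕ Fin p) → (Fin p ⊕ Fin p) → ℕ
  | Sum.inl i, Sum.inr j => M i j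
  | Sum.inr j, Sum.inl i => M i j
  | _, _ => 0

noncomputable def KppAux.fAux {p : ℕ} (M : Fin p → Fin p → ℕ) : Sym2 (Fin p ⊕ Fin p) → ℕ :=
  Sym2.lift ⟨KppAux.gAux M, by rintro (a|a) (b|b) <;> rfl⟩

lemma KppAux.fAux_mk {p : ℕ} (M : Fin p → Fin p → ℕ) (i j : Fin p) :
    KppAux.fAux M s(Sum.inl i, Sum.inr j) = M i j := rfl

lemma KppAux.edgeSet_eq (p : ℕ) : (completeBipartiteGraph (Fin p) (Fin p)).edgeSet
    = Set.range (fun ij : Fin p × Fin p => s(Sum.inl ij.1, Sum.inr ij.2)) := by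
  ext e
  induction e using Sym2.ind with
  | _ x y =>
    rw [SimpleGraph.mem_edgeSet]
    constructor
    · rintro (⟨hx, hy⟩ | ⟨hx, hy⟩)
      · rcases x with a|a <;> rcases y with b|b <;> simp_all
      · rcases x with a|a <;> rcases y with b|b <;> simp_all
    · rintro ⟨⟨i, j⟩, hij⟩
      rw [Sym2.eq_iff] at hij
      rcases hij with ⟨rfl, rfl⟩ | ⟨rfl, rfl⟩ <;> simp

lemma KppAux.inc_left (p : ℕ) (i : Fin p) :
    (completeBipartiteGraph (Fin p) (Fin p)).incidenceSet (Sum.inl i)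
      = (fun j : Fin p => s(Sum.inl i, Sum.inr j)) '' Set.univ := by
  ext e
  induction e using Sym2.ind with
  | _ x y =>
    simp only [SimpleGraph.incidenceSet, Set.mem_setOf_eq, Set.mem_sep_iff,
      SimpleGraph.mem_edgeSet, Sym2.mem_iff, Set.image_univ, Set.mem_range]
    constructor
    · rintro ⟨hadj, (rfl | rfl)⟩
      · rcases y with b|b
        · simp at hadj
        · exact ⟨b, rfl⟩
      · rcases x with a|a
        · simp at hadj
        · exact ⟨a, Sym2.eq_swap⟩
    · rintro ⟨j, hj⟩
      rw [Sym2.eq_iff] at hj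
      rcases hj with ⟨rfl, rfl⟩ | ⟨rfl, rfl⟩ <;> simp

lemma KppAux.inc_right (p : ℕ) (j : Fin p) :
    (completeBipartiteGraph (Fin p) (Fin p)).incidenceSet (Sum.inr j)
      = (fun i : Fin p => s(Sum.inl i, Sum.inr j)) '' Set.univ := by
  ext e
  induction e using Sym2.ind with
  | _ x y =>
    simp only [SimpleGraph.incidenceSet, Set.mem_setOf_eq, Set.mem_sep_iff,
      SimpleGraph.mem_edgeSet, Sym2.mem_iff, Set.image_univ, Set.mem_range]
    constructor
    · rintro ⟨hadj, (rfl | rfl)⟩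
      · rcases y with b|b
        · exact ⟨b, Sym2.eq_swap⟩
        · simp at hadj
      · rcases x with a|a
        · exact ⟨a, rfl⟩
        · simp at hadj
    · rintro ⟨a, ha⟩
      rw [Sym2.eq_iff] at ha
      rcases ha with ⟨rfl, rfl⟩ | ⟨rfl, rfl⟩ <;> simp

lemma KppAux.vsum_left (p : ℕ) (M : Fin p → Fin p → ℕ) (i : Fin p) :
    vertexSum (completeBipartiteGraph (Fin p) (Fin p)) (KppAux.fAux M) (Sum.inl i)
      = ∑ j, M i j := by
  rw [vertexSum, KppAux.inc_left,
    finsum_mem_image (by intro a _ b _ h; simpa [Sym2.eq_iff] using h),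
    finsum_mem_univ, finsum_eq_sum_of_fintype]
  exact Finset.sum_congr rfl fun j _ => KppAux.fAux_mk M i j

lemma KppAux.vsum_right (p : ℕ) (M : Fin p → Fin p → ℕ) (j : Fin p) :
    vertexSum (completeBipartiteGraph (Fin p) (Fin p)) (KppAux.fAux M) (Sum.inr j)
      = ∑ i, M i j := by
  rw [vertexSum, KppAux.inc_right,
    finsum_mem_image (by intro a _ b _ h; simpa [Sym2.eq_iff] using h),
    finsum_mem_univ, finsum_eq_sum_of_fintype]
  exact Finset.sum_congr rfl fun i _ => KppAux.fAux_mk M i j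

lemma KppAux.emap_inj (p : ℕ) :
    Function.Injective (fun ij : Fin p × Fin p => s(Sum.inl ij.1, Sum.inr ij.2)) := by
  rintro ⟨a, b⟩ ⟨c, d⟩ h
  simpa [Sym2.eq_iff, Prod.ext_iff] using h

lemma KppAux.edge_ncard (p : ℕ) :
    (completeBipartiteGraph (Fin p) (Fin p)).edgeSet.ncard = p ^ 2 := by
  rw [KppAux.edgeSet_eq, ← Set.image_univ, Set.ncard_image_of_injective _ (KppAux.emap_inj p),
    Set.ncard_univ]
  simp [Nat.card_eq_fintype_card, sq]

set_option maxHeartbeats 1000000 in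
theorem Kpp_even_construction (p : ℕ) (hp : 4 ≤ p) (hpe : p % 2 = 0)
    (A : Fin p → Fin 2 → ℕ) (hA : IsMagicRectangleOn A 1 (2 * p))
    (B : Fin p → Fin (p - 2) → ℕ) (hB : IsMagicRectangleOn B (2 * p + 1) (p ^ 2))
    (M : Fin p → Fin p → ℕ)
    (hM : ∀ i j, M i j = if h : (j : ℕ) < 2 then A i ⟨j, h⟩
      else B i ⟨(j : ℕ) - 2, by have := j.isLt; omega⟩) :
    (∀ i, ∑ j, M i j = p * (p ^ 2 + 1) / 2) ∧
    (∀ j : Fin p, (j : ℕ) < 2 → ∑ i, M i j = p * (2 * p + 1) / 2) ∧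
    (∀ j : Fin p, 2 ≤ (j : ℕ) → ∑ i, M i j = p * (p + 1) ^ 2 / 2) ∧
    (p * (p ^ 2 + 1) / 2 ≠ p * (2 * p + 1) / 2) ∧
    (p * (p ^ 2 + 1) / 2 ≠ p * (p + 1) ^ 2 / 2) ∧
    (p * (2 * p + 1) / 2 ≠ p * (p + 1) ^ 2 / 2) ∧
    ∃ f, IsLocalAntimagic (completeBipartiteGraph (Fin p) (Fin p)) f ∧
      colorCount (completeBipartiteGraph (Fin p) (Fin p)) f = 3 := by
  obtain ⟨hAr, hAi, ⟨RA, hRA⟩, ⟨CA, hCA⟩⟩ := hA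
  obtain ⟨hBr, hBi, ⟨RB, hRB⟩, ⟨CB, hCB⟩⟩ := hB
  obtain ⟨n, hn⟩ : ∃ n, p = 2*(n+2) := ⟨p/2 - 2, by omega⟩
  have hp0 : 0 < p := by omega
  have hq : p - 2 = 2*n+2 := by omega
  -- total sums
  have gA : 2 * (∑ x ∈ Finset.Icc 1 (2*p), x) = 2*p*(2*p+1) := KppAux.gauss (2*p)
  have gT : 2 * (∑ x ∈ Finset.Icc 1 (p^2), x) = p^2*(p^2+1) := KppAux.gauss (p^2)
  have h2pp2 : 2*p ≤ p^2 := by nlinarith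
  have gsplit := KppAux.icc_split (2*p) (p^2) h2pp2
  have tA : ∑ ij : Fin p × Fin 2, A ij.1 ij.2 = ∑ x ∈ Finset.Icc 1 (2*p), x :=
    KppAux.magic_total A hAr hAi
  have tB : ∑ ij : Fin p × Fin (p-2), B ij.1 ij.2 = ∑ x ∈ Finset.Icc (2*p+1) (p^2), x :=
    KppAux.magic_total B hBr hBi
  -- row/col sums vs totals
  have hpRA : p * RA = ∑ x ∈ Finset.Icc 1 (2*p), x := by
    rw [← tA, Fintype.sum_prod_type]
    simp [hRA, Finset.sum_const, Finset.card_univ, mul_comm]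
  have h2CA : 2 * CA = ∑ x ∈ Finset.Icc 1 (2*p), x := by
    rw [← tA, Fintype.sum_prod_type, Finset.sum_comm]
    simp [hCA, Finset.sum_const, Finset.card_univ, mul_comm]
  have hpRB : p * RB = ∑ x ∈ Finset.Icc (2*p+1) (p^2), x := by
    rw [← tB, Fintype.sum_prod_type]
    simp [hRB, Finset.sum_const, Finset.card_univ, mul_comm]
  have hqCB : (2*n+2) * CB = ∑ x ∈ Finset.Icc (2*p+1) (p^2), x := by
    rw [← tB, Fintype.sum_prod_type, Finset.sum_comm]
    simp [hCB, Finset.sum_const, Finset.card_univ, hq, mul_comm]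
  -- values
  have vR : RA + RB = (n+2)*(p^2+1) := by
    have h1 : p*(2*(RA+RB)) = p*(2*((n+2)*(p^2+1))) := by
      calc p*(2*(RA+RB)) = 2*(p*RA) + 2*(p*RB) := by ring
        _ = 2*(∑ x ∈ Finset.Icc 1 (2*p), x) + 2*(∑ x ∈ Finset.Icc (2*p+1) (p^2), x) := by
            rw [hpRA, hpRB]
        _ = 2*(∑ x ∈ Finset.Icc 1 (p^2), x) := by omega
        _ = p^2*(p^2+1) := gT
        _ = p*(2*((n+2)*(p^2+1))) := by rw [hn]; ring
    have := Nat.eq_of_mul_eq_mul_left hp0 h1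
    omega
  have vCA : CA = (n+2)*(2*p+1) := by
    have h1 : 2*(2*CA) = 2*(2*((n+2)*(2*p+1))) := by
      calc 2*(2*CA) = 2*(∑ x ∈ Finset.Icc 1 (2*p), x) := by rw [h2CA]
        _ = 2*p*(2*p+1) := gA
        _ = 2*(2*((n+2)*(2*p+1))) := by rw [hn]; ring
    omega
  have vCB : CB = (n+2)*(p+1)^2 := by
    have key : 2*p*(2*p+1) + 2*((2*n+2)*CB) = p^2*(p^2+1) := by omega
    have hid : p^2*(p^2+1) = 2*p*(2*p+1) + 2*((2*n+2)*((n+2)*(p+1)^2)) := by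
      rw [hn]; ring
    have h1 : (2*n+2)*CB = (2*n+2)*((n+2)*(p+1)^2) := by omega
    exact Nat.eq_of_mul_eq_mul_left (by omega) h1
  -- division identities
  have d1 : p * (p ^ 2 + 1) / 2 = (n+2)*(p^2+1) := by
    rw [show p * (p^2+1) = 2*((n+2)*(p^2+1)) by rw [hn]; ring, Nat.mul_div_cancel_left _ two_pos]
  have d2 : p * (2 * p + 1) / 2 = (n+2)*(2*p+1) := by
    rw [show p * (2*p+1) = 2*((n+2)*(2*p+1)) by rw [hn]; ring, Nat.mul_div_cancel_left _ two_pos]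
  have d3 : p * (p + 1) ^ 2 / 2 = (n+2)*(p+1)^2 := by
    rw [show p * (p+1)^2 = 2*((n+2)*(p+1)^2) by rw [hn]; ring, Nat.mul_div_cancel_left _ two_pos]
  -- combinatorial row/column sums of M
  have hrow : ∀ i, ∑ j, M i j = RA + RB := by
    intro i
    have hpe2 : 2 + (p - 2) = p := by omega
    rw [← Equiv.sum_comp (finSumFinEquiv.trans (finCongr hpe2)) (fun j => M i j),
      Fintype.sum_sum_type]
    have e1 : ∑ a : Fin 2, M i ((finSumFinEquiv.trans (finCongr hpe2)) (Sum.inl a)) = RA := by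
      rw [← hRA i]
      apply Finset.sum_congr rfl; intro a _
      have hv : (((finSumFinEquiv.trans (finCongr hpe2)) (Sum.inl a) : Fin p) : ℕ) = (a : ℕ) := by
        simp
      rw [hM, dif_pos (show _ < 2 by rw [hv]; exact a.isLt)]
      exact congrArg _ (Fin.ext hv)
    have e2 : ∑ b : Fin (p-2), M i ((finSumFinEquiv.trans (finCongr hpe2)) (Sum.inr b)) = RB := by
      rw [← hRB i]
      apply Finset.sum_congr rfl; intro b _
      have hv : (((finSumFinEquiv.trans (finCongr hpe2)) (Sum.inr b) : Fin p) : ℕ)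
          = 2 + (b : ℕ) := by simp
      rw [hM, dif_neg (by omega)]
      refine congrArg _ (Fin.ext ?_)
      simp [hv]
    rw [e1, e2]
  have hcol1 : ∀ j : Fin p, (j : ℕ) < 2 → ∑ i, M i j = CA := by
    intro j h2
    rw [show ∑ i, M i j = ∑ i, A i ⟨(j : ℕ), h2⟩ from
      Finset.sum_congr rfl fun i _ => by rw [hM, dif_pos h2]]
    exact hCA _
  have hcol2 : ∀ j : Fin p, 2 ≤ (j : ℕ) → ∑ i, M i j = CB := by
    intro j h2
    rw [show ∑ i, M i j = ∑ i, B i ⟨(j : ℕ) - 2, by have := j.isLt; omega⟩ from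
      Finset.sum_congr rfl fun i _ => by rw [hM, dif_neg (by omega)]]
    exact hCB _
  -- entry bounds and injectivity of M
  have hAmem : ∀ (i : Fin p) (k : Fin 2), 1 ≤ A i k ∧ A i k ≤ 2*p := by
    intro i k
    have h : A i k ∈ Set.range (fun ij : Fin p × Fin 2 => A ij.1 ij.2) := ⟨(i, k), rfl⟩
    rw [hAr] at h
    exact Set.mem_Icc.mp h
  have hBmem : ∀ (i : Fin p) (k : Fin (p-2)), 2*p+1 ≤ B i k ∧ B i k ≤ p^2 := by
    intro i k
    have h : B i k ∈ Set.range (fun ij : Fin p × Fin (p-2) => B ij.1 ij.2) := ⟨(i, k), rfl⟩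
    rw [hBr] at h
    exact Set.mem_Icc.mp h
  have hMmem : ∀ i j, 1 ≤ M i j ∧ M i j ≤ p^2 := by
    intro i j
    rw [hM]
    by_cases h2 : (j : ℕ) < 2
    · rw [dif_pos h2]
      have := hAmem i ⟨(j : ℕ), h2⟩
      omega
    · rw [dif_neg h2]
      have := hBmem i ⟨(j : ℕ) - 2, by have := j.isLt; omega⟩
      omega
  have Minj : Function.Injective (fun ij : Fin p × Fin p => M ij.1 ij.2) := by
    rintro ⟨i, j⟩ ⟨i', j'⟩ h
    simp only at h
    rw [hM, hM] at h
    by_cases h1 : (j : ℕ) < 2 <;> by_cases h2 : (j' : ℕ) < 2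
    · rw [dif_pos h1, dif_pos h2] at h
      have h' := hAi (a₁ := (i, ⟨(j : ℕ), h1⟩)) (a₂ := (i', ⟨(j' : ℕ), h2⟩)) h
      rw [Prod.ext_iff] at h'
      refine Prod.ext h'.1 (Fin.ext ?_)
      have := congrArg Fin.val h'.2
      simpa using this
    · rw [dif_pos h1, dif_neg h2] at h
      have ha := hAmem i ⟨(j : ℕ), h1⟩
      have hb := hBmem i' ⟨(j' : ℕ) - 2, by have := j'.isLt; omega⟩
      omega
    · rw [dif_neg h1, dif_pos h2] at h
      have ha := hAmem i' ⟨(j' : ℕ), h2⟩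
      have hb := hBmem i ⟨(j : ℕ) - 2, by have := j.isLt; omega⟩
      omega
    · rw [dif_neg h1, dif_neg h2] at h
      have h' := hBi (a₁ := (i, ⟨(j : ℕ) - 2, by have := j.isLt; omega⟩))
        (a₂ := (i', ⟨(j' : ℕ) - 2, by have := j'.isLt; omega⟩)) h
      rw [Prod.ext_iff] at h'
      have hval : (j : ℕ) - 2 = (j' : ℕ) - 2 := congrArg Fin.val h'.2
      refine Prod.ext h'.1 (Fin.ext ?_)
      show (j : ℕ) = (j' : ℕ)
      omega
  -- set up the labeling
  set G := completeBipartiteGraph (Fin p) (Fin p) with hG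
  set f := KppAux.fAux M with hf
  have hedge : G.edgeSet = Set.range (fun ij : Fin p × Fin p => s(Sum.inl ij.1, Sum.inr ij.2)) :=
    KppAux.edgeSet_eq p
  have hcard : G.edgeSet.ncard = p^2 := KppAux.edge_ncard p
  have hvl : ∀ i : Fin p, vertexSum G f (Sum.inl i) = RA + RB := by
    intro i; rw [hf, hG, KppAux.vsum_left, hrow]
  have hvr1 : ∀ j : Fin p, (j : ℕ) < 2 → vertexSum G f (Sum.inr j) = CA := by
    intro j hj; rw [hf, hG, KppAux.vsum_right, hcol1 j hj]
  have hvr2 : ∀ j : Fin p, 2 ≤ (j : ℕ) → vertexSum G f (Sum.inr j) = CB := by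
    intro j hj; rw [hf, hG, KppAux.vsum_right, hcol2 j hj]
  -- the three values are pairwise distinct
  have hsq : p^2 = p*p := sq p
  have h4p : 4*p ≤ p*p := Nat.mul_le_mul_right p (by omega)
  have hsq1 : (p+1)^2 = p^2 + 2*p + 1 := by ring
  have neRC1 : RA + RB ≠ CA := by
    rw [vR, vCA]
    intro h
    have h' := Nat.eq_of_mul_eq_mul_left (show 0 < n+2 by omega) h
    omega
  have neRC2 : RA + RB ≠ CB := by
    rw [vR, vCB]
    intro h
    have h' := Nat.eq_of_mul_eq_mul_left (show 0 < n+2 by omega) h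
    omega
  have neC1C2 : CA ≠ CB := by
    rw [vCA, vCB]
    intro h
    have h' := Nat.eq_of_mul_eq_mul_left (show 0 < n+2 by omega) h
    omega
  refine ⟨fun i => by rw [hrow, vR, d1],
    fun j hj => by rw [hcol1 j hj, vCA, d2],
    fun j hj => by rw [hcol2 j hj, vCB, d3],
    by rw [d1, d2, ← vR, ← vCA]; exact neRC1,
    by rw [d1, d3, ← vR, ← vCB]; exact neRC2,
    by rw [d2, d3, ← vCA, ← vCB]; exact neC1C2,
    f, ⟨?_, ?_⟩, ?_⟩
  · -- BijOn
    rw [hcard]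
    refine ⟨?_, ?_, ?_⟩
    · intro e he
      rw [hedge] at he
      obtain ⟨⟨i, j⟩, rfl⟩ := he
      rw [hf, KppAux.fAux_mk]
      exact Set.mem_Icc.mpr (hMmem i j)
    · intro e he e' he' hfe
      rw [hedge] at he he'
      obtain ⟨⟨i, j⟩, rfl⟩ := he
      obtain ⟨⟨i', j'⟩, rfl⟩ := he'
      rw [hf, KppAux.fAux_mk, KppAux.fAux_mk] at hfe
      have h' := Minj (a₁ := (i, j)) (a₂ := (i', j')) hfe
      rw [Prod.ext_iff] at h'
      exact congrArg (fun ij : Fin p × Fin p => s(Sum.inl ij.1, Sum.inr ij.2)) (Prod.ext h'.1 h'.2)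
    · intro x hx
      rw [Set.mem_Icc] at hx
      by_cases hle : x ≤ 2*p
      · have hx' : x ∈ Set.Icc 1 (2*p) := Set.mem_Icc.mpr ⟨hx.1, hle⟩
        rw [← hAr] at hx'
        obtain ⟨⟨i, k⟩, hk⟩ := hx'
        refine ⟨s(Sum.inl i, Sum.inr ⟨(k : ℕ), by omega⟩), ?_, ?_⟩
        · rw [hedge]; exact ⟨(i, ⟨(k : ℕ), by omega⟩), rfl⟩
        · rw [hf, KppAux.fAux_mk, hM, dif_pos (show ((⟨(k : ℕ), by omega⟩ : Fin p) : ℕ) < 2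
            from k.isLt)]
          rw [show (⟨((⟨(k : ℕ), by omega⟩ : Fin p) : ℕ), k.isLt⟩ : Fin 2) = k from
            Fin.ext rfl]
          exact hk
      · have hx' : x ∈ Set.Icc (2*p+1) (p^2) := Set.mem_Icc.mpr ⟨by omega, hx.2⟩
        rw [← hBr] at hx'
        obtain ⟨⟨i, k⟩, hk⟩ := hx'
        have hkp : (k : ℕ) + 2 < p := by have := k.isLt; omega
        refine ⟨s(Sum.inl i, Sum.inr ⟨(k : ℕ) + 2, hkp⟩), ?_, ?_⟩
        · rw [hedge]; exact ⟨(i, ⟨(k : ℕ) + 2, hkp⟩), rfl⟩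
        · rw [hf, KppAux.fAux_mk, hM, dif_neg (by simp)]
          rw [show (⟨((⟨(k : ℕ) + 2, hkp⟩ : Fin p) : ℕ) - 2, by have := hkp; omega⟩
              : Fin (p-2)) = k from Fin.ext (by simp)]
          exact hk
  · -- adjacent vertices have distinct sums
    intro u v huv
    rcases u with a|a <;> rcases v with b|b
    · simp [hG, completeBipartiteGraph] at huv
    · rw [hvl a]
      by_cases hb : (b : ℕ) < 2
      · rw [hvr1 b hb]; exact neRC1
      · rw [hvr2 b (by omega)]; exact neRC2
    · rw [hvl b]
      by_cases ha : (a : ℕ) < 2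
      · rw [hvr1 a ha]; exact fun h => neRC1 h.symm
      · rw [hvr2 a (by omega)]; exact fun h => neRC2 h.symm
    · simp [hG, completeBipartiteGraph] at huv
  · -- exactly three colors
    have hrange : Set.range (vertexSum G f) = {RA + RB, CA, CB} := by
      ext x
      constructor
      · rintro ⟨v, rfl⟩
        rcases v with a|a
        · left; exact (hvl a).symm ▸ rfl
        · by_cases ha : (a : ℕ) < 2
          · right; left; rw [hvr1 a ha]
          · right; right; rw [hvr2 a (by omega)]; exact rfl
      · rintro (rfl | rfl | rfl)
        · exact ⟨Sum.inl ⟨0, by omega⟩, hvl _⟩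
        · exact ⟨Sum.inr ⟨0, by omega⟩, hvr1 _ (by simp)⟩
        · exact ⟨Sum.inr ⟨2, by omega⟩, hvr2 _ (by simp)⟩
    rw [colorCount, hrange]
    rw [show ({RA + RB, CA, CB} : Set ℕ) = (↑({RA + RB, CA, CB} : Finset ℕ) : Set ℕ) by simp]
    rw [Set.ncard_coe_finset]
    rw [Finset.card_insert_of_notMem (by simp [neRC1, neRC2]),
      Finset.card_insert_of_notMem (by simp [neC1C2]), Finset.card_singleton]
end

section
/- Let p = 2n+1 ≥ 3 be odd and let A be the (2n+1) × (2n+1) magic square produced by the Siamese method, whose (n+1)-st column is the arithmetic sequence 1, p+2, 2p+4, ..., p² with common difference p+1. Let M be obtained from A by cyclically shifting the (n+1)-st column up by one position. Then every column sum of M equals p(p²+1)/2, every row sum except the last equals p(p²+1)/2 + p + 1, and the last row sum equals p(p²+1)/2 − p² + 1; hence M gives a local antimagic labeling of K_{p,p} with exactly 3 induced sums. -/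
open scoped BigOperators

theorem Kpp_odd_construction (n p : ℕ) (hn : 1 ≤ n) (hp : p = 2 * n + 1)
    (A : Fin p → Fin p → ℕ) (hA : IsMagicRectangleOn A 1 (p ^ 2))
    (hArow : ∀ i, ∑ j, A i j = p * (p ^ 2 + 1) / 2)
    (hAcol : ∀ j, ∑ i, A i j = p * (p ^ 2 + 1) / 2)
    (hmid : ∀ i : Fin p, A i ⟨n, by omega⟩ = 1 + (i : ℕ) * (p + 1))
    (M : Fin p → Fin p → ℕ)
    (hM : ∀ i j, M i j = if (j : ℕ) = n then A (i + ⟨1, by omega⟩) j else A i j) :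
    (∀ j, ∑ i, M i j = p * (p ^ 2 + 1) / 2) ∧
    (∀ i : Fin p, (i : ℕ) < p - 1 → ∑ j, M i j = p * (p ^ 2 + 1) / 2 + p + 1) ∧
    (∑ j, M ⟨p - 1, by omega⟩ j = p * (p ^ 2 + 1) / 2 - p ^ 2 + 1) ∧
    ∃ f, IsLocalAntimagic (completeBipartiteGraph (Fin p) (Fin p)) f ∧
      colorCount (completeBipartiteGraph (Fin p) (Fin p)) f = 3 := by
  haveI : NeZero p := ⟨by omega⟩
  have hp3 : 3 ≤ p := by omega
  obtain ⟨q, hq⟩ : ∃ q, q = p ^ 2 := ⟨_, rfl⟩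
  rw [← hq] at hA hArow hAcol ⊢
  obtain ⟨S, hSdef⟩ : ∃ S, S = p * (q + 1) / 2 := ⟨_, rfl⟩
  rw [← hSdef] at hArow hAcol ⊢
  set mid : Fin p := ⟨n, by omega⟩ with hmiddef
  set one : Fin p := ⟨1, by omega⟩ with honedef
  have honev : (one : ℕ) = 1 := rfl
  have hmidv : (mid : ℕ) = n := rfl
  have hqn : q = 4 * (n * n) + 4 * n + 1 := by rw [hq, hp]; ring
  have h2S : 2 * S = p * (q + 1) := by
    rw [hSdef]
    exact Nat.mul_div_cancel' (Dvd.dvd.mul_left ⟨2 * n * n + 2 * n + 1, by rw [hqn]; ring⟩ p)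
  have hS_ge : q + 1 ≤ S := by
    have h3 : 3 * (q + 1) ≤ p * (q + 1) := Nat.mul_le_mul_right (q + 1) hp3
    omega
  -- column sums
  have hcol : ∀ j, ∑ i, M i j = S := by
    intro j
    by_cases hj : (j : ℕ) = n
    · calc ∑ i, M i j = ∑ i, A (i + one) j :=
            Finset.sum_congr rfl (fun i _ => by rw [hM i j, if_pos hj])
        _ = ∑ i, A i j := Fintype.sum_equiv (Equiv.addRight one) _ _ (fun i => rfl)
        _ = S := hAcol j
    · calc ∑ i, M i j = ∑ i, A i j :=
            Finset.sum_congr rfl (fun i _ => by rw [hM i j, if_neg hj])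
        _ = S := hAcol j
  -- row key
  have hrowkey : ∀ i : Fin p, ∑ j, M i j + A i mid = S + A (i + one) mid := by
    intro i
    have h1 : ∑ j ∈ Finset.univ.erase mid, M i j + M i mid = ∑ j, M i j :=
      Finset.sum_erase_add _ _ (Finset.mem_univ mid)
    have h2 : ∑ j ∈ Finset.univ.erase mid, A i j + A i mid = ∑ j, A i j :=
      Finset.sum_erase_add _ _ (Finset.mem_univ mid)
    have h3 : ∑ j ∈ Finset.univ.erase mid, M i j = ∑ j ∈ Finset.univ.erase mid, A i j := by
      refine Finset.sum_congr rfl (fun j hj => ?_)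
      rw [hM i j, if_neg]
      intro h
      exact (Finset.mem_erase.mp hj).1 (Fin.ext h)
    have h4 : M i mid = A (i + one) mid := by
      rw [hM i mid, if_pos rfl]
    have h5 := hArow i
    omega
  have hrow1 : ∀ i : Fin p, (i : ℕ) < p - 1 → ∑ j, M i j = S + p + 1 := by
    intro i hi
    have hk := hrowkey i
    have hiu := i.isLt
    have hv : ((i + one : Fin p) : ℕ) = (i : ℕ) + 1 := by
      rw [Fin.val_add, honev, Nat.mod_eq_of_lt (by omega)]
    rw [hmid, hmid, hv] at hk
    have hexp : ((i : ℕ) + 1) * (p + 1) = (i : ℕ) * (p + 1) + (p + 1) := by ring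
    rw [hexp] at hk
    set t := (i : ℕ) * (p + 1)
    omega
  have hlast : ∀ i : Fin p, (i : ℕ) = p - 1 → ∑ j, M i j = S - q + 1 := by
    intro i hiv
    have hk := hrowkey i
    have hv : ((i + one : Fin p) : ℕ) = 0 := by
      rw [Fin.val_add, honev, hiv]
      have hc : p - 1 + 1 = p := by omega
      rw [hc, Nat.mod_self]
    rw [hmid, hmid, hv, hiv] at hk
    simp only [Nat.zero_mul] at hk
    have hpm : (p - 1) * (p + 1) = q - 1 := by
      have h1 : p - 1 = 2 * n := by omega
      rw [h1, hp, hqn]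
      have : 2 * n * (2 * n + 1 + 1) = 4 * (n * n) + 4 * n := by ring
      omega
    rw [hpm] at hk
    omega
  refine ⟨hcol, hrow1, hlast _ rfl, ?_⟩
  have hq9 : 9 ≤ q := by
    have h := Nat.mul_le_mul hn hn
    omega
  have hS_ge' : q + 1 ≤ S := hS_ge
  obtain ⟨hArange, hAinj, -, -⟩ := hA
  classical
  set G := completeBipartiteGraph (Fin p) (Fin p) with hG
  set g : (Fin p ⊕ Fin p) → (Fin p ⊕ Fin p) → ℕ := fun x y =>
    match x, y with
    | Sum.inl i, Sum.inr j => M i j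
    | Sum.inr j, Sum.inl i => M i j
    | _, _ => 0 with hg
  have hgsymm : ∀ x y, g x y = g y x := by
    intro x y; rcases x with i | i <;> rcases y with j | j <;> rfl
  set f : Sym2 (Fin p ⊕ Fin p) → ℕ := Sym2.lift ⟨g, hgsymm⟩ with hf
  -- the shift permutation
  set φ : Fin p × Fin p → Fin p × Fin p :=
    fun ij => (if (ij.2 : ℕ) = n then ij.1 + one else ij.1, ij.2) with hφ
  have hφinj : Function.Injective φ := by
    rintro ⟨a1, a2⟩ ⟨b1, b2⟩ h
    simp only [hφ, Prod.mk.injEq] at h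
    obtain ⟨h1, h2⟩ := h
    subst h2
    by_cases hc : (a2 : ℕ) = n
    · rw [if_pos hc, if_pos hc] at h1
      exact Prod.ext (add_right_cancel h1) rfl
    · rw [if_neg hc, if_neg hc] at h1
      exact Prod.ext h1 rfl
  have hφsurj : Function.Surjective φ := Finite.injective_iff_surjective.mp hφinj
  have hMA : (fun ij : Fin p × Fin p => M ij.1 ij.2) = (fun ij : Fin p × Fin p => A ij.1 ij.2) ∘ φ := by
    funext ij
    simp only [Function.comp_apply, hφ]
    by_cases hc : (ij.2 : ℕ) = n
    · rw [if_pos hc, hM, if_pos hc]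
    · rw [if_neg hc, hM, if_neg hc]
  have hMinj : Function.Injective fun ij : Fin p × Fin p => M ij.1 ij.2 := by
    rw [hMA]; exact hAinj.comp hφinj
  have hMrange : (Set.range fun ij : Fin p × Fin p => M ij.1 ij.2) = Set.Icc 1 q := by
    rw [hMA, Set.range_comp, hφsurj.range_eq, Set.image_univ, hArange]
  -- edges
  set e : Fin p × Fin p → Sym2 (Fin p ⊕ Fin p) :=
    fun ij => s(Sum.inl ij.1, Sum.inr ij.2) with he
  have hrangee : Set.range e = G.edgeSet := by
    ext x
    induction x using Sym2.ind with
    | _ u v =>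
      constructor
      · rintro ⟨ij, hij⟩
        rw [← hij]
        simp [hG, he]
      · intro hx
        rw [SimpleGraph.mem_edgeSet] at hx
        rcases u with i | i <;> rcases v with j | j
        · simp [hG] at hx
        · exact ⟨(i, j), rfl⟩
        · exact ⟨(j, i), Sym2.eq_swap⟩
        · simp [hG] at hx
  -- incidence sets
  have hincl : ∀ i : Fin p, G.incidenceSet (Sum.inl i)
      = Set.range fun j : Fin p => s(Sum.inl i, Sum.inr j) := by
    intro i
    ext x
    induction x using Sym2.ind with
    | _ u v =>
      rw [SimpleGraph.mk'_mem_incidenceSet_iff]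
      constructor
      · rintro ⟨hadj, rfl | rfl⟩
        · rcases v with j | j
          · simp [hG] at hadj
          · exact ⟨j, rfl⟩
        · rcases u with j | j
          · simp [hG] at hadj
          · exact ⟨j, Sym2.eq_swap⟩
      · rintro ⟨j, hj⟩
        rw [Sym2.eq_iff] at hj
        rcases hj with ⟨h1, h2⟩ | ⟨h1, h2⟩
        · subst h1; subst h2; exact ⟨by simp [hG], Or.inl rfl⟩
        · subst h1; subst h2; exact ⟨by simp [hG], Or.inr rfl⟩
  have hincr : ∀ j : Fin p, G.incidenceSet (Sum.inr j)
      = Set.range fun i : Fin p => s(Sum.inl i, Sum.inr j) := by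
    intro j
    ext x
    induction x using Sym2.ind with
    | _ u v =>
      rw [SimpleGraph.mk'_mem_incidenceSet_iff]
      constructor
      · rintro ⟨hadj, rfl | rfl⟩
        · rcases v with i | i
          · exact ⟨i, Sym2.eq_swap⟩
          · simp [hG] at hadj
        · rcases u with i | i
          · exact ⟨i, rfl⟩
          · simp [hG] at hadj
      · rintro ⟨i, hi⟩
        rw [Sym2.eq_iff] at hi
        rcases hi with ⟨h1, h2⟩ | ⟨h1, h2⟩
        · subst h1; subst h2; exact ⟨by simp [hG], Or.inr rfl⟩
        · subst h1; subst h2; exact ⟨by simp [hG], Or.inl rfl⟩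
  -- vertex sums
  have hil : ∀ i : Fin p, Function.Injective fun j : Fin p => s(Sum.inl i, Sum.inr j) := by
    intro i a b h
    simp only [Sym2.eq_iff] at h
    rcases h with ⟨-, h2⟩ | ⟨h1, -⟩
    · exact Sum.inr.inj h2
    · exact absurd h1 (by simp)
  have hir : ∀ j : Fin p, Function.Injective fun i : Fin p => s(Sum.inl i, Sum.inr j) := by
    intro j a b h
    simp only [Sym2.eq_iff] at h
    rcases h with ⟨h1, -⟩ | ⟨h1, -⟩
    · exact Sum.inl.inj h1
    · exact absurd h1 (by simp)
  have hvl : ∀ i : Fin p, vertexSum G f (Sum.inl i) = ∑ j, M i j := by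
    intro i
    rw [vertexSum, hincl i, finsum_mem_range (hil i), finsum_eq_sum_of_fintype]
    exact Finset.sum_congr rfl fun _ _ => rfl
  have hvr : ∀ j : Fin p, vertexSum G f (Sum.inr j) = ∑ i, M i j := by
    intro j
    rw [vertexSum, hincr j, finsum_mem_range (hir j), finsum_eq_sum_of_fintype]
    exact Finset.sum_congr rfl fun _ _ => rfl
  -- bijectivity
  have hbij : Set.BijOn f G.edgeSet (Set.Icc 1 q) := by
    rw [← hrangee, ← hMrange]
    refine ⟨?_, ?_, ?_⟩
    · rintro x ⟨ij, rfl⟩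
      exact ⟨ij, rfl⟩
    · rintro x ⟨a, rfl⟩ y ⟨b, rfl⟩ hxy
      have hab : a = b := hMinj hxy
      rw [hab]
    · rintro x ⟨ij, rfl⟩
      exact ⟨e ij, ⟨ij, rfl⟩, rfl⟩
  have hncard : G.edgeSet.ncard = q := by
    have h1 := Set.ncard_image_of_injOn hbij.injOn
    rw [hbij.image_eq] at h1
    rw [← h1, ← Finset.coe_Icc, Set.ncard_coe_finset, Nat.card_Icc]
    omega
  refine ⟨f, ⟨?_, ?_⟩, ?_⟩
  · rw [hncard]; exact hbij
  · intro u v huv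
    rcases u with i | i <;> rcases v with j | j
    · simp [hG] at huv
    · rw [hvl, hvr, hcol]
      by_cases hi : (i : ℕ) < p - 1
      · rw [hrow1 i hi]; omega
      · rw [hlast i (by have := i.isLt; omega)]; omega
    · rw [hvl, hvr, hcol]
      by_cases hj : (j : ℕ) < p - 1
      · rw [hrow1 j hj]; omega
      · rw [hlast j (by have := j.isLt; omega)]; omega
    · simp [hG] at huv
  · rw [colorCount]
    have hrv : Set.range (vertexSum G f) = {S + p + 1, S - q + 1, S} := by
      apply Set.eq_of_subset_of_subset
      · rintro x ⟨v, rfl⟩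
        rcases v with i | j
        · rw [hvl]
          by_cases hi : (i : ℕ) < p - 1
          · rw [hrow1 i hi]; exact Set.mem_insert _ _
          · rw [hlast i (by have := i.isLt; omega)]
            exact Set.mem_insert_of_mem _ (Set.mem_insert _ _)
        · rw [hvr, hcol]
          exact Set.mem_insert_of_mem _ (Set.mem_insert_of_mem _ rfl)
      · intro x hx
        simp only [Set.mem_insert_iff, Set.mem_singleton_iff] at hx
        rcases hx with rfl | rfl | rfl
        · exact ⟨Sum.inl ⟨0, by omega⟩, by
            rw [hvl, hrow1 ⟨0, by omega⟩ (by show (0 : ℕ) < p - 1; omega)]⟩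
        · exact ⟨Sum.inl ⟨p - 1, by omega⟩, by rw [hvl, hlast _ rfl]⟩
        · exact ⟨Sum.inr ⟨0, by omega⟩, by rw [hvr, hcol]⟩
    rw [hrv]
    exact Set.ncard_eq_three.mpr ⟨_, _, _, by omega, by omega, by omega, rfl⟩
end
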